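/- arXiv:2205.05394 — 11 statements merged into one kernel-verified Lean document; each statement's English description precedes it below -/
import Mathlib

section
/- Let n ≥ 2k and let F be a k-uniform intersecting family of subsets of [n]. Then |F| ≤ C(n-1, k-1). Moreover, when n > 2k, equality holds if and only if F is a full star, i.e., the family of all k-sets containing some fixed element x. -/
open Finset

namespace EKRaux

variable {n k : ℕ}

lemma ekr_bound {N r : ℕ} (H : Finset (Finset (Fin N))) (hr : 1 ≤ r) (hN : 2*r ≤ N)
    (huni : ∀ A ∈ H, A.card = r) (hint : ∀ A ∈ H, ∀ B ∈ H, (A ∩ B).Nonempty) :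
    H.card ≤ (N-1).choose (r-1) := by
  apply Finset.erdos_ko_rado
  · intro A hA B hB hd
    rw [Finset.disjoint_iff_inter_eq_empty] at hd
    have := hint A hA B hB
    rw [hd] at this
    exact absurd this (by simp)
  · exact huni
  · omega

lemma card_filter_superset (k : ℕ) (S : Finset (Fin n)) (hS : S.card ≤ k) :
    (((univ : Finset (Fin n)).powersetCard k).filter (fun A => S ⊆ A)).card
      = (n - S.card).choose (k - S.card) := by
  have : (((univ : Finset (Fin n)).powersetCard k).filter (fun A => S ⊆ A)).card
      = ((univ \ S).powersetCard (k - S.card)).card := by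
    apply Finset.card_bij' (fun A _ => A \ S) (fun B _ => B ∪ S)
    · intro A hA
      simp only [mem_filter, mem_powersetCard_univ] at hA
      rw [mem_powersetCard]
      exact ⟨sdiff_subset_sdiff (subset_univ _) le_rfl,
        by rw [card_sdiff_of_subset hA.2, hA.1]⟩
    · intro B hB
      rw [mem_powersetCard] at hB
      simp only [mem_filter, mem_powersetCard_univ]
      have hdisj : Disjoint B S := disjoint_of_subset_left hB.1 sdiff_disjoint
      constructor
      · rw [card_union_of_disjoint hdisj, hB.2]
        omega
      · exact subset_union_right
    · intro A hA
      simp only [mem_filter, mem_powersetCard_univ] at hA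
      rw [sdiff_union_self_eq_union, union_eq_left.2 hA.2]
    · intro B hB
      rw [mem_powersetCard] at hB
      have hdisj : Disjoint B S := disjoint_of_subset_left hB.1 sdiff_disjoint
      rw [union_sdiff_right, sdiff_eq_self_of_disjoint hdisj]
  rw [this, card_powersetCard, card_sdiff_of_subset (subset_univ _), card_univ, Fintype.card_fin]

def star (n k : ℕ) (x : Fin n) : Finset (Finset (Fin n)) :=
  (Finset.univ.powersetCard k).filter (fun A => x ∈ A)

lemma card_star (hk : 1 ≤ k) (x : Fin n) :
    (star n k x).card = (n - 1).choose (k - 1) := by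
  have h : star n k x
      = ((univ : Finset (Fin n)).powersetCard k).filter (fun A => {x} ⊆ A) := by
    unfold star; congr 1; ext A; simp [singleton_subset_iff]
  rw [h, card_filter_superset k _ (by simpa using hk), card_singleton]

/-- replace `j` by `i` -/
def mv (i j : Fin n) (A : Finset (Fin n)) : Finset (Fin n) := insert i (A.erase j)

/-- the sets that get moved by the `(i,j)` compression -/
def moveable (i j : Fin n) (F : Finset (Finset (Fin n))) (A : Finset (Fin n)) : Prop :=
  j ∈ A ∧ i ∉ A ∧ mv i j A ∉ F

instance (i j : Fin n) (F : Finset (Finset (Fin n))) : DecidablePred (moveable i j F) :=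
  fun A => by unfold moveable; infer_instance

def comp (i j : Fin n) (F : Finset (Finset (Fin n))) : Finset (Finset (Fin n)) :=
  F.filter (fun A => ¬ moveable i j F A) ∪ (F.filter (moveable i j F)).image (mv i j)

variable {i j : Fin n} {F : Finset (Finset (Fin n))}

lemma mv_mem (hij : i ≠ j) {A : Finset (Fin n)} (hj : j ∈ A) (hi : i ∉ A) :
    j ∉ mv i j A ∧ i ∈ mv i j A := by
  unfold mv
  constructor
  · simp [hij.symm]
  · exact mem_insert_self _ _

lemma card_mv (hj : j ∈ A) (hi : i ∉ A) : (mv i j A).card = A.card := by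
  unfold mv
  rw [card_insert_of_notMem (fun h => hi (mem_of_mem_erase h)), card_erase_of_mem hj]
  have : 1 ≤ A.card := card_pos.2 ⟨j, hj⟩
  omega

lemma mv_inv (hij : i ≠ j) {A : Finset (Fin n)} (hj : j ∈ A) (hi : i ∉ A) :
    insert j ((mv i j A).erase i) = A := by
  unfold mv
  rw [erase_insert (fun h => hi (mem_of_mem_erase h)), insert_erase hj]

lemma mv_injOn (hij : i ≠ j) {A B : Finset (Fin n)}
    (hjA : j ∈ A) (hiA : i ∉ A) (hjB : j ∈ B) (hiB : i ∉ B)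
    (h : mv i j A = mv i j B) : A = B := by
  rw [← mv_inv hij hjA hiA, h, mv_inv hij hjB hiB]

lemma card_comp (hij : i ≠ j) : (comp i j F).card = F.card := by
  unfold comp
  rw [card_union_of_disjoint, card_image_of_injOn, add_comm,
    card_filter_add_card_filter_not]
  · intro A hA B hB h
    simp only [coe_filter, Set.mem_setOf_eq] at hA hB
    exact mv_injOn hij hA.2.1 hA.2.2.1 hB.2.1 hB.2.2.1 h
  · rw [disjoint_right]
    rintro B hB hB'
    simp only [mem_image, mem_filter] at hB hB'
    obtain ⟨A, hA, rfl⟩ := hB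
    exact hA.2.2.2 hB'.1

lemma mem_comp_of_mem {A : Finset (Fin n)} (hA : A ∈ F) (h : ¬ moveable i j F A) :
    A ∈ comp i j F := by
  unfold comp
  exact mem_union_left _ (mem_filter.2 ⟨hA, h⟩)

lemma mem_comp_cases {B : Finset (Fin n)} (hB : B ∈ comp i j F) :
    B ∈ F ∨ (i ∈ B ∧ j ∉ B ∧ insert j (B.erase i) ∈ F ∧ B ∉ F) := by
  unfold comp at hB
  rcases mem_union.1 hB with h | h
  · exact Or.inl (mem_filter.1 h).1
  · right
    obtain ⟨A, hA, rfl⟩ := mem_image.1 h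
    have hA' := (mem_filter.1 hA).2
    have hAF := (mem_filter.1 hA).1
    obtain ⟨hj, hi, hmv⟩ := hA'
    refine ⟨(mv_mem ?_ hj hi).2, (mv_mem ?_ hj hi).1, ?_, hmv⟩
    · rintro rfl; exact hi hj
    · rintro rfl; exact hi hj
    · rw [mv_inv (by rintro rfl; exact hi hj) hj hi]; exact hAF

lemma mem_comp_of_mem_j (hij : i ≠ j) {B : Finset (Fin n)} (hB : B ∈ comp i j F)
    (hj : j ∈ B) : B ∈ F := by
  rcases mem_comp_cases hB with h | h
  · exact h
  · exact absurd hj h.2.1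

lemma comp_uniform (h : ∀ A ∈ F, A.card = k) : ∀ B ∈ comp i j F, B.card = k := by
  intro B hB
  unfold comp at hB
  rcases mem_union.1 hB with hB' | hB'
  · exact h B (mem_filter.1 hB').1
  · obtain ⟨A, hA, rfl⟩ := mem_image.1 hB'
    obtain ⟨hAF, hj, hi, -⟩ := mem_filter.1 hA |>.imp id (fun x => x)
    rw [card_mv hj hi]
    exact h A hAF

lemma comp_intersecting (hij : i ≠ j)
    (hint : ∀ A ∈ F, ∀ B ∈ F, (A ∩ B).Nonempty) :
    ∀ X ∈ comp i j F, ∀ Y ∈ comp i j F, (X ∩ Y).Nonempty := by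
  -- key asymmetric step
  have key : ∀ X ∈ comp i j F, ∀ Y ∈ comp i j F, X ∈ F → Y ∉ F → (X ∩ Y).Nonempty := by
    intro X hX Y hY hXF hYF
    rcases mem_comp_cases hY with h | ⟨hiY, hjY, hBF, -⟩
    · exact absurd h hYF
    -- Y = mv of B := insert j (Y.erase i) ∈ F
    by_contra hempty
    rw [not_nonempty_iff_eq_empty] at hempty
    have hiX : i ∉ X := by
      intro h
      have : i ∈ X ∩ Y := mem_inter.2 ⟨h, hiY⟩
      simp [hempty] at this
    set B := insert j (Y.erase i) with hBdef
    have hXB : (X ∩ B).Nonempty := hint X hXF B hBF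
    obtain ⟨x, hx⟩ := hXB
    rw [mem_inter, hBdef, mem_insert] at hx
    have hjX : j ∈ X := by
      rcases hx.2 with h | h
      · exact h ▸ hx.1
      · exfalso
        have : x ∈ X ∩ Y := mem_inter.2 ⟨hx.1, mem_of_mem_erase h⟩
        simp [hempty] at this
    -- X contains j, not i; X not moveable since X ∈ comp i j F... 
    have hXmv : mv i j X ∈ F := by
      by_contra hmm
      -- then X is moveable, but X ∈ comp i j F means it was kept... contradiction?
      -- X ∈ comp: either X kept (¬moveable) or X is an image; image contains i, but i ∉ X.
      unfold comp at hX
      rcases mem_union.1 hX with hX' | hX'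
      · exact (mem_filter.1 hX').2 ⟨hjX, hiX, hmm⟩
      · obtain ⟨A, hA, rfl⟩ := mem_image.1 hX'
        exact hiX (mem_insert_self _ _)
    -- mv i j X ∈ F and B ∈ F intersect
    have h2 := hint _ hXmv B hBF
    obtain ⟨y, hy⟩ := h2
    rw [mem_inter] at hy
    have hy1 := hy.1
    unfold mv at hy1
    rcases mem_insert.1 hy1 with h' | hy1'
    · have hiB : i ∈ B := h' ▸ hy.2
      rw [hBdef, mem_insert] at hiB
      rcases hiB with h | h
      · exact hij h
      · exact absurd h (notMem_erase _ _)
    · -- y ∈ X.erase j and y ∈ B ⇒ y ∈ X ∩ Y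
      have hyX := mem_of_mem_erase hy1'
      have hyj : y ≠ j := ne_of_mem_erase hy1'
      rw [hBdef, mem_insert] at hy
      rcases hy.2 with h | h
      · exact hyj h
      · have hyY : y ∈ Y := mem_of_mem_erase h
        have : y ∈ X ∩ Y := mem_inter.2 ⟨hyX, hyY⟩
        simp [hempty] at this
  intro X hX Y hY
  by_cases hXF : X ∈ F <;> by_cases hYF : Y ∈ F
  · exact hint X hXF Y hYF
  · exact key X hX Y hY hXF hYF
  · obtain ⟨y, hy⟩ := key Y hY X hX hYF hXF
    exact ⟨y, by rw [mem_inter] at hy ⊢; exact ⟨hy.2, hy.1⟩⟩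
  · -- both images: both contain i
    rcases mem_comp_cases hX with h | ⟨hiX, -⟩
    · exact absurd h hXF
    rcases mem_comp_cases hY with h | ⟨hiY, -⟩
    · exact absurd h hYF
    exact ⟨i, mem_inter.2 ⟨hiX, hiY⟩⟩

def wt (A : Finset (Fin n)) : ℕ := ∑ a ∈ A, a.val

def meas (F : Finset (Finset (Fin n))) : ℕ := ∑ A ∈ F, wt A

lemma wt_mv_lt (hij : i < j) {A : Finset (Fin n)} (hj : j ∈ A) (hi : i ∉ A) :
    wt (mv i j A) < wt A := by
  unfold wt mv
  rw [sum_insert (fun h => hi (mem_of_mem_erase h))]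
  have h2 : (j:ℕ) + ∑ x ∈ A.erase j, (x:ℕ) = ∑ x ∈ A, (x:ℕ) :=
    Finset.add_sum_erase A (fun a : Fin n => (a:ℕ)) hj
  have : (i : ℕ) < j := hij
  omega

lemma meas_comp_lt (hij : i < j) {A₀ : Finset (Fin n)} (hA₀ : A₀ ∈ F)
    (hmv : moveable i j F A₀) : meas (comp i j F) < meas F := by
  have hij' : i ≠ j := ne_of_lt hij
  unfold meas comp
  rw [sum_union, sum_image]
  · have h1 : ∑ A ∈ F.filter (moveable i j F), wt (mv i j A)
        < ∑ A ∈ F.filter (moveable i j F), wt A := by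
      apply sum_lt_sum
      · intro A hA
        obtain ⟨-, hj, hi, -⟩ := mem_filter.1 hA |>.imp id id
        exact le_of_lt (wt_mv_lt hij hj hi)
      · exact ⟨A₀, mem_filter.2 ⟨hA₀, hmv⟩, wt_mv_lt hij hmv.1 hmv.2.1⟩
    calc ∑ A ∈ F.filter (fun A => ¬ moveable i j F A), wt A
          + ∑ A ∈ F.filter (moveable i j F), wt (mv i j A)
        < ∑ A ∈ F.filter (fun A => ¬ moveable i j F A), wt A
          + ∑ A ∈ F.filter (moveable i j F), wt A := by omega
      _ = ∑ A ∈ F, wt A := by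
          rw [add_comm, sum_filter_add_sum_filter_not]
  · intro A hA B hB h
    simp only [mem_coe, mem_filter] at hA hB
    exact mv_injOn hij' hA.2.1 hA.2.2.1 hB.2.1 hB.2.2.1 h
  · rw [disjoint_right]
    rintro B hB hB'
    simp only [mem_image, mem_filter] at hB hB'
    obtain ⟨A, hA, rfl⟩ := hB
    exact hA.2.2.2 hB'.1

-- the decompression lemma
lemma decompression (hk : 2 ≤ k) (hn : 2*k+1 ≤ n) (hij : i ≠ j)
    (huni : ∀ A ∈ F, A.card = k)
    (hint : ∀ A ∈ F, ∀ B ∈ F, (A ∩ B).Nonempty)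
    (hcard : F.card = (n-1).choose (k-1))
    (x : Fin n) (hG : comp i j F = star n k x) : ∃ y, F = star n k y := by
  have hk1 : 1 ≤ k := by omega
  have hmemP : ∀ A ∈ F, A ∈ (univ : Finset (Fin n)).powersetCard k := fun A hA =>
    mem_powersetCard_univ.2 (huni A hA)
  by_cases hxj : x = j
  · -- no set is moveable, so comp = F
    rw [hxj] at hG
    have hnomv : ∀ A ∈ F, ¬ moveable i j F A := by
      intro A hA hmv
      have h1 : mv i j A ∈ comp i j F := by
        unfold comp
        exact mem_union_right _ (mem_image_of_mem _ (mem_filter.2 ⟨hA, hmv⟩))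
      rw [hG] at h1
      have := (mem_filter.1 h1).2
      unfold mv at this
      rcases mem_insert.1 this with h | h
      · exact hij h.symm
      · exact notMem_erase _ _ h
    have hFG : F = comp i j F := by
      unfold comp
      rw [filter_true_of_mem hnomv, filter_false_of_mem (by exact hnomv), image_empty,
        union_empty]
    exact ⟨j, by rw [hFG, hG]⟩
  by_cases hxi : x = i
  swap
  · -- x ∉ {i,j} : F ⊆ star x
    refine ⟨x, ?_⟩
    have hsub : F ⊆ star n k x := by
      intro A hA
      by_cases hmv : moveable i j F A
      · have h1 : mv i j A ∈ comp i j F := by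
          unfold comp
          exact mem_union_right _ (mem_image_of_mem _ (mem_filter.2 ⟨hA, hmv⟩))
        rw [hG] at h1
        have hx : x ∈ mv i j A := (mem_filter.1 h1).2
        unfold mv at hx
        rcases mem_insert.1 hx with h | h
        · exact absurd h hxi
        · exact mem_filter.2 ⟨hmemP A hA, mem_of_mem_erase h⟩
      · have h1 := mem_comp_of_mem hA hmv
        rw [hG] at h1
        exact mem_filter.2 ⟨hmemP A hA, (mem_filter.1 h1).2⟩
    refine (eq_of_subset_of_card_le hsub ?_).symm.symm
    rw [card_star hk1, hcard]
  · rw [hxi] at hG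
    clear hxi hxj
    set P := F.filter (fun A => j ∈ A ∧ i ∉ A) with hPdef
    set Q := F.filter (fun A => i ∈ A ∧ j ∉ A) with hQdef
    set R := F.filter (fun A => i ∈ A ∧ j ∈ A) with hRdef
    set U := ((univ : Finset (Fin n)).powersetCard k).filter (fun A => i ∈ A ∧ j ∉ A)
      with hUdef
    set Pfull := ((univ : Finset (Fin n)).powersetCard k).filter (fun A => j ∈ A ∧ i ∉ A)
      with hPfdef
    set Rfull := ((univ : Finset (Fin n)).powersetCard k).filter (fun A => i ∈ A ∧ j ∈ A)
      with hRfdef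
    have f1 : ∀ A ∈ F, i ∉ A → j ∈ A := by
      intro A hA hiA
      by_contra hjA
      have h1 := mem_comp_of_mem (i := i) (j := j) hA (by unfold moveable; tauto)
      rw [hG] at h1
      exact hiA (mem_filter.1 h1).2
    have f2 : ∀ A ∈ F, j ∈ A → i ∉ A → mv i j A ∉ F := by
      intro A hA hjA hiA hmvF
      have h1 := mem_comp_of_mem (i := i) (j := j) hA (by unfold moveable; tauto)
      rw [hG] at h1
      exact hiA (mem_filter.1 h1).2
    have f3 : R = Rfull := by
      ext B
      simp only [hRdef, hRfdef, mem_filter]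
      constructor
      · rintro ⟨hBF, h⟩
        exact ⟨hmemP B hBF, h⟩
      · rintro ⟨hBpc, hiB, hjB⟩
        have hBstar : B ∈ comp i j F := by
          rw [hG]; exact mem_filter.2 ⟨hBpc, hiB⟩
        exact ⟨mem_comp_of_mem_j hij hBstar hjB, hiB, hjB⟩
    have f4 : Rfull.card + U.card = (star n k i).card := by
      have h1 : (star n k i).filter (fun A => j ∈ A) = Rfull := by
        rw [star, filter_filter]
      have h2 : (star n k i).filter (fun A => ¬ j ∈ A) = U := by
        rw [star, filter_filter]
      rw [← h1, ← h2, card_filter_add_card_filter_not]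
    have hij2 : ({i, j} : Finset (Fin n)).card = 2 := by
      rw [card_insert_of_notMem (by simp [hij]), card_singleton]
    have f5 : Rfull.card = (n-2).choose (k-2) := by
      have h1 : Rfull = ((univ : Finset (Fin n)).powersetCard k).filter
          (fun A => ({i, j} : Finset (Fin n)) ⊆ A) := by
        rw [hRfdef]
        congr 1
        ext A
        simp [insert_subset_iff]
      rw [h1, card_filter_superset k _ (by omega), hij2]
    have f6 : F.card = R.card + P.card + Q.card := by
      have e1 : (F.filter (fun A => i ∈ A)).card + (F.filter (fun A => ¬ i ∈ A)).card
          = F.card := card_filter_add_card_filter_not (p := fun A => i ∈ A)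
      have e2 : F.filter (fun A => ¬ i ∈ A) = P := by
        ext A
        simp only [hPdef, mem_filter]
        exact ⟨fun ⟨h1, h2⟩ => ⟨h1, f1 A h1 h2, h2⟩, fun ⟨h1, _, h3⟩ => ⟨h1, h3⟩⟩
      have e3 : ((F.filter (fun A => i ∈ A)).filter (fun A => j ∈ A)).card
          + ((F.filter (fun A => i ∈ A)).filter (fun A => ¬ j ∈ A)).card
          = (F.filter (fun A => i ∈ A)).card :=
            card_filter_add_card_filter_not (p := fun A => j ∈ A)
      rw [filter_filter, filter_filter] at e3
      rw [e2] at e1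
      rw [hRdef, hQdef]
      omega
    have f7 : P.card + Q.card = U.card := by
      have h1 := card_star (n := n) hk1 i
      have h2 : R.card = Rfull.card := by rw [f3]
      omega
    have f8 : (P.image (mv i j)) ∪ Q = U := by
      have hsub : (P.image (mv i j)) ∪ Q ⊆ U := by
        intro B hB
        rcases mem_union.1 hB with hB | hB
        · obtain ⟨A, hAP, rfl⟩ := mem_image.1 hB
          obtain ⟨hAF, hjA, hiA⟩ := mem_filter.1 hAP
          refine mem_filter.2 ⟨mem_powersetCard_univ.2 ?_, mem_insert_self _ _, ?_⟩
          · rw [card_mv hjA hiA]; exact huni A hAF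
          · unfold mv
            simp [hij.symm]
        · obtain ⟨hBF, h⟩ := mem_filter.1 hB
          exact mem_filter.2 ⟨hmemP B hBF, h⟩
      have hdisj : Disjoint (P.image (mv i j)) Q := by
        rw [disjoint_left]
        rintro B hB hBQ
        obtain ⟨A, hAP, rfl⟩ := mem_image.1 hB
        obtain ⟨hAF, hjA, hiA⟩ := mem_filter.1 hAP
        exact f2 A hAF hjA hiA (mem_filter.1 hBQ).1
      have hcardim : (P.image (mv i j)).card = P.card := by
        apply card_image_of_injOn
        intro A hA B hB h
        simp only [mem_coe, hPdef, mem_filter] at hA hB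
        exact mv_injOn hij hA.2.1 hA.2.2 hB.2.1 hB.2.2 h
      refine eq_of_subset_of_card_le hsub ?_
      rw [card_union_of_disjoint hdisj, hcardim, f7]
    have f9 : ∀ B ∈ U, B ∉ F → insert j (B.erase i) ∈ P := by
      intro B hBU hBF
      rw [← f8] at hBU
      rcases mem_union.1 hBU with hB | hB
      · obtain ⟨A, hAP, rfl⟩ := mem_image.1 hB
        obtain ⟨hAF, hjA, hiA⟩ := mem_filter.1 hAP
        rw [mv_inv hij hjA hiA]
        exact hAP
      · exact absurd (mem_filter.1 hB).1 hBF
    have f10 : ∀ A ∈ P, ∀ B ∈ Pfull, A ∩ B = {j} → B ∈ P := by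
      intro A hAP B hBPf hABj
      obtain ⟨hAF, hjA, hiA⟩ := mem_filter.1 hAP
      obtain ⟨hBpc, hjB, hiB⟩ := mem_filter.1 hBPf
      have hBk : B.card = k := mem_powersetCard_univ.1 hBpc
      set C := mv i j B with hCdef
      have hCU : C ∈ U := by
        refine mem_filter.2 ⟨mem_powersetCard_univ.2 ?_, mem_insert_self _ _, ?_⟩
        · rw [hCdef, card_mv hjB hiB, hBk]
        · rw [hCdef]; unfold mv; simp [hij.symm]
      have hCA : C ∩ A = ∅ := by
        rw [eq_empty_iff_forall_notMem]
        intro y hy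
        rw [mem_inter] at hy
        rw [hCdef] at hy
        have hy1 := hy.1
        unfold mv at hy1
        rcases mem_insert.1 hy1 with h | h
        · exact hiA (h ▸ hy.2)
        · have : y ∈ A ∩ B := mem_inter.2 ⟨hy.2, mem_of_mem_erase h⟩
          rw [hABj, mem_singleton] at this
          exact (notMem_erase _ _) (this ▸ h)
      have hCF : C ∉ F := by
        intro hCF
        obtain ⟨y, hy⟩ := hint C hCF A hAF
        rw [hCA] at hy
        exact absurd hy (notMem_empty y)
      have := f9 C hCU hCF
      rwa [hCdef, mv_inv hij hjB hiB] at this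
    have step : ∀ d, ∀ A ∈ P, ∀ B ∈ Pfull, (B \ A).card = d → B ∈ P := by
      intro d
      induction d with
      | zero =>
        intro A hAP B hBPf h0
        have hBA : B ⊆ A := by
          rw [← sdiff_eq_empty_iff_subset, ← card_eq_zero]; exact h0
        obtain ⟨hAF, -, -⟩ := mem_filter.1 hAP
        obtain ⟨hBpc, -, -⟩ := mem_filter.1 hBPf
        have : B = A := eq_of_subset_of_card_le hBA
          (by rw [huni A hAF, mem_powersetCard_univ.1 hBpc])
        rw [this]; exact hAP
      | succ d ih =>
        intro A hAP B hBPf hd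
        obtain ⟨hAF, hjA, hiA⟩ := mem_filter.1 hAP
        obtain ⟨hBpc, hjB, hiB⟩ := mem_filter.1 hBPf
        have hAk : A.card = k := huni A hAF
        have hBk : B.card = k := mem_powersetCard_univ.1 hBpc
        obtain ⟨b, hb⟩ : (B \ A).Nonempty := card_pos.1 (by omega)
        rw [mem_sdiff] at hb
        have hbj : b ≠ j := fun h => hb.2 (h ▸ hjA)
        have hbi : b ≠ i := fun h => hiB (h ▸ hb.1)
        obtain ⟨a, ha⟩ : (A \ B).Nonempty := by
          apply card_pos.1
          rw [card_sdiff_comm (by rw [hAk, hBk])]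
          omega
        rw [mem_sdiff] at ha
        have haj : a ≠ j := fun h => ha.2 (h ▸ hjB)
        have hai : a ≠ i := fun h => hiA (h ▸ ha.1)
        set A' := insert b (A.erase a) with hA'def
        have hbA' : b ∉ A.erase a := fun h => hb.2 (mem_of_mem_erase h)
        have hA'k : A'.card = k := by
          rw [hA'def, card_insert_of_notMem hbA', card_erase_of_mem ha.1, hAk]
          omega
        have hjA' : j ∈ A' := by
          rw [hA'def]
          exact mem_insert_of_mem (mem_erase.2 ⟨Ne.symm haj, hjA⟩)
        have hiA' : i ∉ A' := by
          rw [hA'def, mem_insert]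
          rintro (h | h)
          · exact hbi h.symm
          · exact hiA (mem_of_mem_erase h)
        have hA'Pf : A' ∈ Pfull := mem_filter.2 ⟨mem_powersetCard_univ.2 hA'k, hjA', hiA'⟩
        -- find M
        set T := insert i (insert b A) with hTdef
        have hTcard : T.card ≤ k + 2 := by
          calc T.card ≤ (insert b A).card + 1 := by rw [hTdef]; exact card_insert_le _ _
            _ ≤ A.card + 1 + 1 := by
                have := card_insert_le b A; omega
            _ = k + 2 := by rw [hAk]
        obtain ⟨M₀, hM₀sub, hM₀card⟩ :
            ∃ M₀ ⊆ (univ : Finset (Fin n)) \ T, M₀.card = k - 1 := by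
          apply exists_subset_card_eq
          rw [card_sdiff_of_subset (subset_univ _), card_univ, Fintype.card_fin]
          omega
        have hM₀ : ∀ y ∈ M₀, y ∉ T := fun y hy => (mem_sdiff.1 (hM₀sub hy)).2
        have hjT : j ∈ T := by
          rw [hTdef]
          exact mem_insert_of_mem (mem_insert_of_mem hjA)
        have hjM₀ : j ∉ M₀ := fun h => hM₀ j h hjT
        set M := insert j M₀ with hMdef
        have hMk : M.card = k := by
          rw [hMdef, card_insert_of_notMem hjM₀, hM₀card]; omega
        have hjM : j ∈ M := mem_insert_self _ _
        have hiM : i ∉ M := by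
          rw [hMdef, mem_insert]
          rintro (h | h)
          · exact hij h
          · exact hM₀ i h (by rw [hTdef]; exact mem_insert_self _ _)
        have hMPf : M ∈ Pfull := mem_filter.2 ⟨mem_powersetCard_univ.2 hMk, hjM, hiM⟩
        have hAM : A ∩ M = {j} := by
          apply subset_antisymm
          · intro y hy
            rw [mem_inter, hMdef, mem_insert] at hy
            rcases hy.2 with h | h
            · rw [mem_singleton]; exact h
            · exact absurd (by rw [hTdef]; exact mem_insert_of_mem (mem_insert_of_mem hy.1))
                (hM₀ y h)
          · intro y hy
            rw [mem_singleton] at hy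
            rw [hy]; exact mem_inter.2 ⟨hjA, hjM⟩
        have hMP : M ∈ P := f10 A hAP M hMPf hAM
        have hMA' : M ∩ A' = {j} := by
          apply subset_antisymm
          · intro y hy
            rw [mem_inter, hMdef, mem_insert] at hy
            rcases hy.1 with h | h
            · rw [mem_singleton]; exact h
            · exfalso
              have hyA : y ∈ insert b A := by
                rcases mem_insert.1 hy.2 with h' | h'
                · exact h' ▸ mem_insert_self _ _
                · exact mem_insert_of_mem (mem_of_mem_erase h')
              exact hM₀ y h (by rw [hTdef]; exact mem_insert_of_mem hyA)
          · intro y hy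
            rw [mem_singleton] at hy
            rw [hy]; exact mem_inter.2 ⟨hjM, hjA'⟩
        have hA'P : A' ∈ P := f10 M hMP A' hA'Pf hMA'
        have hBA' : (B \ A').card = d := by
          have : B \ A' = (B \ A).erase b := by
            ext y
            rw [mem_erase, mem_sdiff, mem_sdiff, hA'def, mem_insert]
            constructor
            · rintro ⟨hyB, hy⟩
              push_neg at hy
              refine ⟨hy.1, hyB, fun hyA => hy.2 (mem_erase.2 ⟨fun h => ha.2 (h ▸ hyB), hyA⟩)⟩
            · rintro ⟨hyb, hyB, hyA⟩
              exact ⟨hyB, by push_neg; exact ⟨hyb, fun h => hyA (mem_of_mem_erase h)⟩⟩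
          rw [this, card_erase_of_mem (mem_sdiff.2 hb), hd]
          omega
        exact ih A' hA'P B hBPf hBA'
    by_cases hPne : P.Nonempty
    · -- P = Pfull and F = star j
      obtain ⟨A₀, hA₀⟩ := hPne
      have hPfP : Pfull ⊆ P := fun B hB => step _ A₀ hA₀ B hB rfl
      refine ⟨j, ?_⟩
      have hsub : star n k j ⊆ F := by
        intro B hB
        obtain ⟨hBpc, hjB⟩ := mem_filter.1 hB
        by_cases hiB : i ∈ B
        · have : B ∈ Rfull := mem_filter.2 ⟨hBpc, hiB, hjB⟩
          rw [← f3] at this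
          exact (mem_filter.1 this).1
        · have : B ∈ Pfull := mem_filter.2 ⟨hBpc, hjB, hiB⟩
          exact (mem_filter.1 (hPfP this)).1
      have := eq_of_subset_of_card_le hsub (by rw [card_star hk1, hcard])
      exact this.symm
    · -- P = ∅ and F = star i
      rw [not_nonempty_iff_eq_empty] at hPne
      rw [hPne, image_empty, empty_union] at f8
      refine ⟨i, ?_⟩
      have hsub : star n k i ⊆ F := by
        intro B hB
        obtain ⟨hBpc, hiB⟩ := mem_filter.1 hB
        by_cases hjB : j ∈ B
        · have : B ∈ Rfull := mem_filter.2 ⟨hBpc, hiB, hjB⟩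
          rw [← f3] at this
          exact (mem_filter.1 this).1
        · have : B ∈ U := mem_filter.2 ⟨hBpc, hiB, hjB⟩
          rw [← f8] at this
          exact (mem_filter.1 this).1
      have := eq_of_subset_of_card_le hsub (by rw [card_star hk1, hcard])
      exact this.symm

noncomputable def down (B : Finset (Fin (m+1))) : Finset (Fin m) :=
  B.preimage Fin.castSucc (Fin.castSucc_injective m).injOn

lemma mem_down {B : Finset (Fin (m+1))} {y : Fin m} :
    y ∈ down B ↔ y.castSucc ∈ B := mem_preimage

lemma down_map {B : Finset (Fin (m+1))} (h : Fin.last m ∉ B) :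
    (down B).map ⟨Fin.castSucc, Fin.castSucc_injective m⟩ = B := by
  ext x
  simp only [mem_map, Function.Embedding.coeFn_mk]
  constructor
  · rintro ⟨y, hy, rfl⟩
    exact mem_down.1 hy
  · intro hx
    have hxl : x ≠ Fin.last m := fun hh => h (hh ▸ hx)
    obtain ⟨y, rfl⟩ := Fin.exists_castSucc_eq.2 hxl
    exact ⟨y, mem_down.2 hx, rfl⟩

lemma card_down {B : Finset (Fin (m+1))} (h : Fin.last m ∉ B) :
    (down B).card = B.card := by
  conv_rhs => rw [← down_map h]
  rw [card_map]

lemma down_injOn {B C : Finset (Fin (m+1))} (hB : Fin.last m ∉ B) (hC : Fin.last m ∉ C)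
    (h : down B = down C) : B = C := by
  rw [← down_map hB, ← down_map hC, h]

lemma down_inter {B C : Finset (Fin (m+1))} : down (B ∩ C) = down B ∩ down C := by
  ext y; simp [mem_down]

def Shifted {n : ℕ} (F : Finset (Finset (Fin n))) : Prop :=
  ∀ A ∈ F, ∀ i j : Fin n, i < j → j ∈ A → i ∉ A → insert i (A.erase j) ∈ F

lemma shifted_uniq (s : ℕ) : ∀ (n : ℕ) (h0 : 0 < n) (F : Finset (Finset (Fin n))),
    2*(s+1)+1 ≤ n → Shifted F → (∀ A ∈ F, A.card = s+1) →
    (∀ A ∈ F, ∀ B ∈ F, (A ∩ B).Nonempty) →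
    F.card = (n-1).choose s → F = star n (s+1) ⟨0, h0⟩ := by
  induction s with
  | zero =>
    intro n h0 F hn hsh huni hint hcard
    rw [Nat.choose_zero_right] at hcard
    obtain ⟨A, hA⟩ := card_eq_one.1 hcard
    obtain ⟨x, hx⟩ := card_eq_one.1 (huni A (by rw [hA]; exact mem_singleton_self A))
    have hx0 : x = ⟨0, h0⟩ := by
      by_contra hne
      have hlt : (⟨0, h0⟩ : Fin n) < x := by
        rcases Nat.eq_zero_or_pos x.val with h | h
        · exact absurd (Fin.ext h) hne
        · exact h
      have := hsh A (by rw [hA]; exact mem_singleton_self A) ⟨0, h0⟩ x hlt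
        (by rw [hx]; exact mem_singleton_self x)
        (by rw [hx]; simp [Ne.symm hne])
      rw [hA, mem_singleton, hx, erase_singleton, insert_empty] at this
      exact hne (singleton_injective this).symm
    rw [hA, hx, hx0]
    ext B
    simp only [star, mem_singleton, mem_filter, mem_powersetCard_univ]
    constructor
    · rintro rfl
      exact ⟨card_singleton _, mem_singleton_self _⟩
    · rintro ⟨hB1, hB2⟩
      obtain ⟨y, rfl⟩ := card_eq_one.1 hB1
      rw [mem_singleton] at hB2
      rw [hB2]
  | succ s ih =>
    intro n h0 F hn hsh huni hint hcard
    obtain ⟨m, rfl⟩ : ∃ m, n = m + 1 := ⟨n - 1, by omega⟩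
    have hm : 2 * (s + 2) ≤ m := by omega
    set lst := Fin.last m with hlst
    set Ftop := F.filter (fun A => lst ∈ A) with hFtop
    set Fbar := F.filter (fun A => lst ∉ A) with hFbar
    set G := Ftop.image (fun A => down (A.erase lst)) with hG
    set Gbar := Fbar.image (fun A => down A) with hGbar
    -- basic membership facts
    have hFtopF : ∀ A ∈ Ftop, A ∈ F ∧ lst ∈ A := fun A hA => mem_filter.1 hA
    have hcardG : G.card = Ftop.card := by
      apply card_image_of_injOn
      intro A hA B hB h
      have hA' := mem_filter.1 hA
      have hB' := mem_filter.1 hB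
      have := down_injOn (notMem_erase _ _) (notMem_erase _ _) h
      rw [← insert_erase hA'.2, ← insert_erase hB'.2, this]
    have hcardGbar : Gbar.card = Fbar.card := by
      apply card_image_of_injOn
      intro A hA B hB h
      exact down_injOn (mem_filter.1 hA).2 (mem_filter.1 hB).2 h
    have hGuni : ∀ B ∈ G, B.card = s + 1 := by
      intro B hB
      obtain ⟨A, hA, rfl⟩ := mem_image.1 hB
      obtain ⟨hAF, hlstA⟩ := mem_filter.1 hA
      rw [card_down (notMem_erase _ _), card_erase_of_mem hlstA, huni A hAF]
      omega
    have hGbaruni : ∀ B ∈ Gbar, B.card = s + 2 := by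
      intro B hB
      obtain ⟨A, hA, rfl⟩ := mem_image.1 hB
      obtain ⟨hAF, hlstA⟩ := mem_filter.1 hA
      rw [card_down hlstA, huni A hAF]
    have hGbarint : ∀ A ∈ Gbar, ∀ B ∈ Gbar, (A ∩ B).Nonempty := by
      intro A hA B hB
      obtain ⟨A', hA', rfl⟩ := mem_image.1 hA
      obtain ⟨B', hB', rfl⟩ := mem_image.1 hB
      obtain ⟨y, hy⟩ := hint A' (mem_filter.1 hA').1 B' (mem_filter.1 hB').1
      rw [mem_inter] at hy
      have hyl : y ≠ lst := fun h => (mem_filter.1 hA').2 (h ▸ hy.1)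
      obtain ⟨z, rfl⟩ := Fin.exists_castSucc_eq.2 hyl
      exact ⟨z, mem_inter.2 ⟨mem_down.2 hy.1, mem_down.2 hy.2⟩⟩
    have hGint : ∀ A ∈ G, ∀ B ∈ G, (A ∩ B).Nonempty := by
      intro A hA B hB
      obtain ⟨A', hA', rfl⟩ := mem_image.1 hA
      obtain ⟨B', hB', rfl⟩ := mem_image.1 hB
      obtain ⟨hA'F, hlA'⟩ := mem_filter.1 hA'
      obtain ⟨hB'F, hlB'⟩ := mem_filter.1 hB'
      by_contra hempty
      rw [not_nonempty_iff_eq_empty] at hempty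
      -- A' ∩ B' ⊆ {lst}
      have hinter : ∀ x, x ∈ A' → x ∈ B' → x = lst := by
        intro x hx1 hx2
        by_contra hxl
        obtain ⟨z, rfl⟩ := Fin.exists_castSucc_eq.2 hxl
        have hz : z ∈ down (A'.erase lst) ∩ down (B'.erase lst) :=
          mem_inter.2 ⟨mem_down.2 (mem_erase.2 ⟨hxl, hx1⟩),
            mem_down.2 (mem_erase.2 ⟨hxl, hx2⟩)⟩
        rw [hempty] at hz
        exact absurd hz (notMem_empty z)
      -- pick c outside A' ∪ B'
      have hcex : ((univ : Finset (Fin (m+1))) \ (A' ∪ B')).Nonempty := by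
        apply card_pos.1
        rw [card_sdiff_of_subset (subset_univ _), card_univ, Fintype.card_fin]
        have h1 : (A' ∪ B').card ≤ (s+2) + (s+2) := by
          calc (A' ∪ B').card ≤ A'.card + B'.card := card_union_le _ _
            _ = (s+2) + (s+2) := by rw [huni A' hA'F, huni B' hB'F]
        omega
      obtain ⟨c, hc⟩ := hcex
      rw [mem_sdiff, mem_union] at hc
      push_neg at hc
      have hcl : c ≠ lst := fun h => hc.2.1 (h ▸ hlA')
      have hclt : c < lst := Fin.lt_last_iff_ne_last.2 hcl
      have hB'' := hsh B' hB'F c lst hclt hlB' hc.2.2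
      obtain ⟨y, hy⟩ := hint A' hA'F _ hB''
      rw [mem_inter, mem_insert] at hy
      rcases hy.2 with h | h
      · exact hc.2.1 (h ▸ hy.1)
      · have hyB' := mem_of_mem_erase h
        have hyl := ne_of_mem_erase h
        exact hyl (hinter y hy.1 hyB')
    have hGsh : Shifted G := by
      intro A hA i j hij hj hi
      obtain ⟨A', hA', rfl⟩ := mem_image.1 hA
      obtain ⟨hA'F, hlA'⟩ := mem_filter.1 hA'
      have hjA' : j.castSucc ∈ A' := mem_of_mem_erase (mem_down.1 hj)
      have hiA' : i.castSucc ∉ A' := by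
        intro h
        exact hi (mem_down.2 (mem_erase.2 ⟨ne_of_lt (Fin.castSucc_lt_last i), h⟩))
      have hij' : i.castSucc < j.castSucc := by rwa [Fin.castSucc_lt_castSucc_iff]
      have hA'' := hsh A' hA'F _ _ hij' hjA' hiA'
      have hlA'' : lst ∈ insert i.castSucc (A'.erase j.castSucc) :=
        mem_insert_of_mem (mem_erase.2 ⟨(ne_of_lt (Fin.castSucc_lt_last j)).symm, hlA'⟩)
      refine mem_image.2 ⟨_, mem_filter.2 ⟨hA'', hlA''⟩, ?_⟩
      ext y
      constructor
      · intro hy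
        have h1 := mem_down.1 hy
        obtain ⟨hyl, hy2⟩ := mem_erase.1 h1
        rcases mem_insert.1 hy2 with h | h
        · exact mem_insert.2 (Or.inl (Fin.castSucc_injective m h))
        · obtain ⟨hyj, hyA'⟩ := mem_erase.1 h
          exact mem_insert.2 (Or.inr (mem_erase.2 ⟨fun hh => hyj (by rw [hh]),
            mem_down.2 (mem_erase.2 ⟨hyl, hyA'⟩)⟩))
      · intro hy
        rcases mem_insert.1 hy with rfl | h
        · exact mem_down.2 (mem_erase.2 ⟨ne_of_lt (Fin.castSucc_lt_last y),
            mem_insert_self _ _⟩)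
        · obtain ⟨hyj, hy2⟩ := mem_erase.1 h
          obtain ⟨hyl, hyA'⟩ := mem_erase.1 (mem_down.1 hy2)
          exact mem_down.2 (mem_erase.2 ⟨hyl, mem_insert_of_mem
            (mem_erase.2 ⟨fun hh => hyj (Fin.castSucc_injective m hh), hyA'⟩)⟩)
    -- cardinalities
    have hsplit : Ftop.card + Fbar.card = F.card := by
      rw [hFbar, hFtop]
      exact card_filter_add_card_filter_not (p := fun A => lst ∈ A)
    have hGbarbd : Gbar.card ≤ (m-1).choose (s+1) := by
      have := ekr_bound Gbar (by omega) (by omega) hGbaruni hGbarint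
      simpa using this
    have hGbd : G.card ≤ (m-1).choose s := by
      have := ekr_bound G (by omega) (by omega) hGuni hGint
      simpa using this
    have hpascal : m.choose (s+1) = (m-1).choose (s+1) + (m-1).choose s := by
      obtain ⟨m', rfl⟩ : ∃ m', m = m' + 1 := ⟨m - 1, by omega⟩
      simp only [Nat.add_sub_cancel]
      rw [Nat.choose_succ_succ']
      omega
    have hGcard : G.card = (m-1).choose s := by
      have h1 : (m + 1 - 1).choose (s + 1) = m.choose (s+1) := by norm_num
      rw [h1] at hcard
      omega
    -- apply IH
    have hmpos : 0 < m := by omega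
    have hGstar := ih m hmpos G (by omega) hGsh hGuni hGint
      (by rw [hGcard])
    -- every (s+2)-set containing 0 and lst is in F
    have claim1 : ∀ C : Finset (Fin (m+1)), C.card = s + 2 → (⟨0, h0⟩ : Fin (m+1)) ∈ C →
        lst ∈ C → C ∈ F := by
      intro C hCcard h0C hlC
      have hBmem : down (C.erase lst) ∈ star m (s+1) ⟨0, hmpos⟩ := by
        refine mem_filter.2 ⟨mem_powersetCard_univ.2 ?_, ?_⟩
        · rw [card_down (notMem_erase _ _), card_erase_of_mem hlC, hCcard]
          omega
        · rw [mem_down]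
          refine mem_erase.2 ⟨?_, ?_⟩
          · intro hh
            have h' := congrArg Fin.val hh
            simp only [Fin.coe_castSucc, Fin.val_last] at h'
            simp only [hlst, Fin.val_last] at h'
            omega
          · have : (⟨0, hmpos⟩ : Fin m).castSucc = (⟨0, h0⟩ : Fin (m+1)) := rfl
            rw [this]
            exact h0C
      rw [← hGstar] at hBmem
      obtain ⟨A, hA, hAB⟩ := mem_image.1 hBmem
      obtain ⟨hAF, hlA⟩ := mem_filter.1 hA
      have := down_injOn (notMem_erase _ _) (notMem_erase _ _) hAB
      have hAC : A = C := by
        rw [← insert_erase hlA, ← insert_erase hlC, this]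
      rw [← hAC]
      exact hAF
    -- star ⊆ F
    have claim2 : star (m+1) (s+2) ⟨0, h0⟩ ⊆ F := by
      intro C hC
      obtain ⟨hCpc, h0C⟩ := mem_filter.1 hC
      have hCcard : C.card = s + 2 := mem_powersetCard_univ.1 hCpc
      by_cases hlC : lst ∈ C
      · exact claim1 C hCcard h0C hlC
      · obtain ⟨c, hc⟩ : (C.erase ⟨0, h0⟩).Nonempty := by
          apply card_pos.1
          rw [card_erase_of_mem h0C, hCcard]
          omega
        have hcC := mem_of_mem_erase hc
        have hc0 := ne_of_mem_erase hc
        have hcl : c ≠ lst := fun h => hlC (h ▸ hcC)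
        set D := insert lst (C.erase c) with hD
        have hlCc : lst ∉ C.erase c := fun h => hlC (mem_of_mem_erase h)
        have hDcard : D.card = s + 2 := by
          rw [hD, card_insert_of_notMem hlCc, card_erase_of_mem hcC, hCcard]
          omega
        have h0D : (⟨0, h0⟩ : Fin (m+1)) ∈ D := by
          rw [hD]
          exact mem_insert_of_mem (mem_erase.2 ⟨Ne.symm hc0, h0C⟩)
        have hDF : D ∈ F := claim1 D hDcard h0D (by rw [hD]; exact mem_insert_self _ _)
        have hclt : c < lst := Fin.lt_last_iff_ne_last.2 hcl
        have hcD : c ∉ D := by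
          rw [hD, mem_insert]
          rintro (h | h)
          · exact hcl h
          · exact (notMem_erase _ _) h
        have := hsh D hDF c lst hclt (by rw [hD]; exact mem_insert_self _ _) hcD
        have hDel : D.erase lst = C.erase c := by
          rw [hD, erase_insert hlCc]
        rw [hDel, insert_erase hcC] at this
        exact this
    have := eq_of_subset_of_card_le claim2 (by rw [card_star (by omega)]; rw [hcard]; norm_num)
    exact this.symm


lemma uniq {n k : ℕ} (hk : 1 ≤ k) (hn : 2*k+1 ≤ n) (F : Finset (Finset (Fin n)))
    (huni : ∀ A ∈ F, A.card = k)
    (hint : ∀ A ∈ F, ∀ B ∈ F, (A ∩ B).Nonempty)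
    (hcard : F.card = (n-1).choose (k-1)) :
    ∃ x, F = star n k x := by
  rcases eq_or_lt_of_le hk with hk1 | hk2
  · -- k = 1
    rw [← hk1, Nat.sub_self, Nat.choose_zero_right] at hcard
    obtain ⟨A, hA⟩ := card_eq_one.1 hcard
    obtain ⟨x, hx⟩ := card_eq_one.1 (by
      rw [huni A (by rw [hA]; exact mem_singleton_self A), ← hk1])
    refine ⟨x, ?_⟩
    rw [hA, hx]
    ext B
    simp only [star, mem_singleton, mem_filter, mem_powersetCard_univ]
    constructor
    · rintro rfl
      exact ⟨by rw [card_singleton, hk1], mem_singleton_self _⟩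
    · rintro ⟨hB1, hB2⟩
      obtain ⟨y, rfl⟩ := card_eq_one.1 (by rw [hB1, ← hk1])
      rw [mem_singleton] at hB2
      rw [hB2]
  · -- 2 ≤ k : strong induction on the measure
    have main : ∀ N : ℕ, ∀ F : Finset (Finset (Fin n)), meas F = N →
        (∀ A ∈ F, A.card = k) → (∀ A ∈ F, ∀ B ∈ F, (A ∩ B).Nonempty) →
        F.card = (n-1).choose (k-1) → ∃ x, F = star n k x := by
      intro N
      induction N using Nat.strong_induction_on with
      | _ N ih =>
        intro F hmN huni hint hcard
        by_cases hsh : Shifted F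
        · obtain ⟨s, rfl⟩ : ∃ s, k = s + 1 := ⟨k - 1, by omega⟩
          have h0 : 0 < n := by omega
          refine ⟨⟨0, h0⟩, ?_⟩
          exact shifted_uniq s n h0 F (by omega) hsh huni hint
            (by rw [hcard]; norm_num)
        · unfold Shifted at hsh
          push_neg at hsh
          obtain ⟨A, hA, i, j, hij, hjA, hiA, hmv⟩ := hsh
          have hij' : i ≠ j := ne_of_lt hij
          have hmeas := meas_comp_lt hij hA (by unfold moveable mv; exact ⟨hjA, hiA, hmv⟩)
          rw [hmN] at hmeas
          obtain ⟨x, hx⟩ := ih _ hmeas (comp i j F) rfl (comp_uniform huni)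
            (comp_intersecting hij' hint) (by rw [card_comp hij', hcard])
          exact decompression (by omega) hn hij' huni hint hcard x hx
    exact main (meas F) F rfl huni hint hcard

end EKRaux

/-- Erdős–Ko–Rado theorem: an intersecting `k`-uniform family on `[n]` with `n ≥ 2k`
has size at most `C(n-1, k-1)`, and for `n > 2k` equality holds iff the family is a
full star. -/
theorem stmt_0 (n k : ℕ) (hk : 1 ≤ k) (hn : 2 * k ≤ n)
    (F : Finset (Finset (Fin n)))
    (huniform : ∀ A ∈ F, A.card = k)
    (hint : ∀ A ∈ F, ∀ B ∈ F, (A ∩ B).Nonempty) :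
    F.card ≤ (n - 1).choose (k - 1) ∧
      (2 * k < n →
        (F.card = (n - 1).choose (k - 1) ↔
          ∃ x : Fin n,
            F = (Finset.univ.powersetCard k).filter (fun A => x ∈ A))) := by
  constructor
  · exact EKRaux.ekr_bound F hk hn huniform hint
  · intro hlt
    constructor
    · intro hcard
      exact EKRaux.uniq hk (by omega) F huniform hint hcard
    · rintro ⟨x, rfl⟩
      exact EKRaux.card_star hk x
end

section
/- Let k ≥ 2 and n ≥ 2k, and let F be a k-uniform intersecting family on [n] that is not contained in any full star. Then |F| ≤ C(n-1, k-1) - C(n-k-1, k-1) + 1. -/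
open Finset


namespace HM

def Gd (c t r : ℕ) (F : Finset (Finset ℕ)) : Prop := ∀ S ∈ F, S ⊆ Icc c t ∧ S.card = r
def Sh (c : ℕ) (F : Finset (Finset ℕ)) : Prop :=
  ∀ A ∈ F, ∀ i j : ℕ, c ≤ i → i < j → j ∈ A → i ∉ A → insert i (A.erase j) ∈ F
def Cr (A B : Finset (Finset ℕ)) : Prop := ∀ S ∈ A, ∀ T ∈ B, (S ∩ T).Nonempty

variable {c t r s m ρ : ℕ} {A B : Finset (Finset ℕ)}

/-- the part of `A` avoiding `t` -/
def bar (t : ℕ) (A : Finset (Finset ℕ)) : Finset (Finset ℕ) := A.filter (t ∉ ·)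
/-- the link of `A` at `t` -/
def lnk (t : ℕ) (A : Finset (Finset ℕ)) : Finset (Finset ℕ) :=
  (A.filter (t ∈ ·)).image (·.erase t)

lemma mem_lnk {S : Finset ℕ} : S ∈ lnk t A ↔ ∃ M ∈ A, t ∈ M ∧ M.erase t = S := by
  simp only [lnk, mem_image, mem_filter]
  constructor
  · rintro ⟨M, ⟨h1, h2⟩, h3⟩; exact ⟨M, h1, h2, h3⟩
  · rintro ⟨M, h1, h2, h3⟩; exact ⟨M, ⟨h1, h2⟩, h3⟩

lemma insert_mem_of_mem_lnk {S : Finset ℕ} (h : S ∈ lnk t A) : insert t S ∈ A ∧ t ∉ S := by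
  obtain ⟨M, hM, ht, rfl⟩ := mem_lnk.1 h
  rw [insert_erase ht]
  exact ⟨hM, notMem_erase _ _⟩

lemma card_split (t : ℕ) (A : Finset (Finset ℕ)) : A.card = (bar t A).card + (lnk t A).card := by
  classical
  rw [bar, lnk, card_image_of_injOn, ← Finset.card_filter_add_card_filter_not
    (p := (t ∈ ·)) (s := A)]
  · rw [Nat.add_comm]
  · intro M hM N hN h
    rw [mem_coe, mem_filter] at hM hN
    rw [← insert_erase hM.2, ← insert_erase hN.2]
    simp only at h
    rw [h]

lemma Gd_bar (hG : Gd c t r A) : Gd c (t - 1) r (bar t A) := by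
  intro S hS
  rw [bar, mem_filter] at hS
  refine ⟨fun x hx => ?_, (hG S hS.1).2⟩
  have h1 := (hG S hS.1).1 hx
  rw [mem_Icc] at h1 ⊢
  have : x ≠ t := fun h => hS.2 (h ▸ hx)
  omega

lemma Gd_lnk (hG : Gd c t r A) : Gd c (t - 1) (r - 1) (lnk t A) := by
  intro S hS
  obtain ⟨M, hM, ht, rfl⟩ := mem_lnk.1 hS
  refine ⟨fun x hx => ?_, by rw [card_erase_of_mem ht, (hG M hM).2]⟩
  have h1 := (hG M hM).1 (mem_of_mem_erase hx)
  have h2 := ne_of_mem_erase hx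
  rw [mem_Icc] at h1 ⊢
  omega

lemma Sh_bar (hG : Gd c t r A) (hsh : Sh c A) : Sh c (bar t A) := by
  intro S hS i j hci hij hj hi
  rw [bar, mem_filter] at hS ⊢
  refine ⟨hsh S hS.1 i j hci hij hj hi, ?_⟩
  have hjt := (hG S hS.1).1 hj
  rw [mem_Icc] at hjt
  simp only [mem_insert, mem_erase]
  push_neg
  exact ⟨by omega, fun _ => hS.2⟩

lemma Sh_lnk (hG : Gd c t r A) (hsh : Sh c A) : Sh c (lnk t A) := by
  intro S hS i j hci hij hj hi
  obtain ⟨M, hM, ht, rfl⟩ := mem_lnk.1 hS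
  have hjM : j ∈ M := mem_of_mem_erase hj
  have hjt : j ≠ t := ne_of_mem_erase hj
  have hjle := (hG M hM).1 hjM
  rw [mem_Icc] at hjle
  have hit : i ≠ t := by omega
  have hiM : i ∉ M := by
    intro h
    exact hi (mem_erase.2 ⟨hit, h⟩)
  have hM' := hsh M hM i j hci hij hjM hiM
  rw [mem_lnk]
  refine ⟨insert i (M.erase j), hM', mem_insert_of_mem (mem_erase.2 ⟨fun h => hjt h.symm, ht⟩), ?_⟩
  rw [erase_insert_of_ne hit, erase_right_comm]

/-- links are cross-intersecting, provided there is room and `A` is shifted -/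
lemma Cr_lnk (hGA : Gd c t r A) (hGB : Gd c t s B) (hshA : Sh c A) (hcr : Cr A B)
    (hroom : r - 1 + (s - 1) < t - c) : Cr (lnk t A) (lnk t B) := by
  intro S hS T hT
  obtain ⟨M, hM, htM, rfl⟩ := mem_lnk.1 hS
  obtain ⟨N, hN, htN, rfl⟩ := mem_lnk.1 hT
  by_contra hdisj
  rw [not_nonempty_iff_eq_empty] at hdisj
  have hsub : M.erase t ∪ N.erase t ⊆ Icc c (t - 1) := by
    intro x hx
    rcases mem_union.1 hx with h | h
    · exact (Gd_lnk hGA (M.erase t) (mem_lnk.2 ⟨M, hM, htM, rfl⟩)).1 h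
    · exact (Gd_lnk hGB (N.erase t) (mem_lnk.2 ⟨N, hN, htN, rfl⟩)).1 h
  have hcardU : (M.erase t ∪ N.erase t).card < (Icc c (t - 1)).card := by
    have h1 : (M.erase t ∪ N.erase t).card ≤ (M.erase t).card + (N.erase t).card :=
      card_union_le _ _
    rw [card_erase_of_mem htM, card_erase_of_mem htN, (hGA M hM).2, (hGB N hN).2] at h1
    rw [Nat.card_Icc]
    have hct : c < t := by omega
    omega
  obtain ⟨x, hx1, hx2⟩ := exists_of_ssubset (ssubset_of_subset_of_ne hsub
    (fun h => absurd (h ▸ hcardU) (lt_irrefl _)))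
  rw [mem_Icc] at hx1
  have hxt : x < t := by
    have : 1 ≤ t := by omega
    omega
  have hxM : x ∉ M := by
    intro h
    exact hx2 (mem_union_left _ (mem_erase.2 ⟨by omega, h⟩))
  have hM' := hshA M hM x t (by omega) hxt htM hxM
  obtain ⟨y, hy⟩ := hcr _ hM' _ hN
  rw [mem_inter, mem_insert] at hy
  obtain ⟨hy1, hy2⟩ := hy
  rcases hy1 with rfl | hy1
  · rcases mem_erase.1 (show y ∈ N.erase t from mem_erase.2 ⟨by omega, hy2⟩) with ⟨_, _⟩
    exact hx2 (mem_union_right _ (mem_erase.2 ⟨by omega, hy2⟩))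
  · have hyt : y ≠ t := ne_of_mem_erase hy1
    have : y ∈ M.erase t ∩ N.erase t :=
      mem_inter.2 ⟨mem_erase.2 ⟨hyt, mem_of_mem_erase hy1⟩, mem_erase.2 ⟨hyt, hy2⟩⟩
    rw [hdisj] at this
    exact absurd this (notMem_empty _)

/-- members of the link still meet a bottom interval that doesn't contain `t` -/
lemma lnk_meets (hmeet : ∀ M ∈ A, (M ∩ Icc c (c + ρ - 1)).Nonempty) (ht : c + ρ - 1 < t) :
    ∀ S ∈ lnk t A, (S ∩ Icc c (c + ρ - 1)).Nonempty := by
  intro S hS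
  obtain ⟨M, hM, htM, rfl⟩ := mem_lnk.1 hS
  obtain ⟨y, hy⟩ := hmeet M hM
  rw [mem_inter] at hy
  have hyt : y ≠ t := by
    rw [mem_Icc] at hy
    omega
  exact ⟨y, mem_inter.2 ⟨mem_erase.2 ⟨hyt, hy.1⟩, hy.2⟩⟩






lemma card_shiftset {A : Finset ℕ} {i j : ℕ} (hj : j ∈ A) (hi : i ∉ A) :
    (insert i (A.erase j)).card = A.card := by
  rw [card_insert_of_notMem (fun h => hi (mem_of_mem_erase h)), card_erase_of_mem hj]
  have : 0 < A.card := card_pos.2 ⟨j, hj⟩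
  omega

/-- pairing bound: cross-intersecting families of complementary sizes -/
lemma pair {c t r s : ℕ} {A B : Finset (Finset ℕ)} (hA : Gd c t r A) (hB : Gd c t s B)
    (hrs : r + s = (Icc c t).card) (hcr : Cr A B) :
    A.card + B.card ≤ (Icc c t).card.choose r := by
  classical
  have hBinj : Set.InjOn (fun T => Icc c t \ T) B := by
    intro T hT T' hT' h
    have h1 : Icc c t \ (Icc c t \ T) = T := sdiff_sdiff_right_self.trans (inter_eq_right.2 (hB T hT).1)
    have h2 : Icc c t \ (Icc c t \ T') = T' := sdiff_sdiff_right_self.trans (inter_eq_right.2 (hB T' hT').1)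
    rw [← h1, ← h2]; simp only at h; rw [h]
  have hcard : (B.image (fun T => Icc c t \ T)).card = B.card := card_image_of_injOn hBinj
  have hsub : A ∪ B.image (fun T => Icc c t \ T) ⊆ (Icc c t).powersetCard r := by
    intro S hS
    rcases mem_union.1 hS with h | h
    · exact mem_powersetCard.2 ⟨(hA S h).1, (hA S h).2⟩
    · rcases mem_image.1 h with ⟨T, hT, rfl⟩
      refine mem_powersetCard.2 ⟨sdiff_subset, ?_⟩
      rw [card_sdiff_of_subset (hB T hT).1, (hB T hT).2]; omega
  have hdisj : Disjoint A (B.image (fun T => Icc c t \ T)) := by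
    rw [disjoint_left]
    intro S hSA hSB
    rcases mem_image.1 hSB with ⟨T, hT, rfl⟩
    rcases hcr _ hSA _ hT with ⟨x, hx⟩
    rw [mem_inter] at hx
    exact (mem_sdiff.1 hx.1).2 hx.2
  calc A.card + B.card = (A ∪ B.image (fun T => Icc c t \ T)).card := by
        rw [card_union_of_disjoint hdisj, hcard]
    _ ≤ ((Icc c t).powersetCard r).card := card_le_card hsub
    _ = (Icc c t).card.choose r := by rw [card_powersetCard]

/-- counting bound: `r`-sets in `Icc c t` all meeting `Icc c (c+ρ-1)` -/
lemma cnt {c t r ρ : ℕ} {A : Finset (Finset ℕ)} (hA : Gd c t r A) (hρ : 1 ≤ ρ)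
    (hmeet : ∀ S ∈ A, (S ∩ Icc c (c + ρ - 1)).Nonempty) :
    A.card ≤ (Icc c t).card.choose r - (Icc (c + ρ) t).card.choose r := by
  classical
  have hsub : A ⊆ (Icc c t).powersetCard r \ (Icc (c + ρ) t).powersetCard r := by
    intro S hS
    rw [mem_sdiff, mem_powersetCard]
    refine ⟨⟨(hA S hS).1, (hA S hS).2⟩, fun h => ?_⟩
    rcases hmeet S hS with ⟨x, hx⟩
    rw [mem_inter, mem_Icc] at hx
    have := (mem_powersetCard.1 h).1 hx.1
    rw [mem_Icc] at this
    omega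
  calc A.card ≤ _ := card_le_card hsub
    _ = (Icc c t).card.choose r - (Icc (c + ρ) t).card.choose r := by
      rw [card_sdiff_of_subset (powersetCard_mono (Icc_subset_Icc_left (by omega))), card_powersetCard,
        card_powersetCard]

/-- shifted nonempty families contain the bottom interval -/
lemma bottom_mem {c t r : ℕ} {A : Finset (Finset ℕ)} (hA : Gd c t r A) (hsh : Sh c A)
    (hne : A.Nonempty) (hr : 1 ≤ r) : Icc c (c + r - 1) ∈ A := by
  classical
  obtain ⟨B, hB⟩ := hne
  -- strong induction on the sum of B
  suffices h : ∀ n B, B.sum id = n → B ∈ A → Icc c (c + r - 1) ∈ A by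
    exact h _ B rfl hB
  clear hB B
  intro n
  induction n using Nat.strong_induction_on with
  | _ n ih =>
  intro B hn hB
  by_cases hEq : B = Icc c (c + r - 1)
  · rwa [← hEq]
  · have hcard : (Icc c (c + r - 1)).card = r := by rw [Nat.card_Icc]; omega
    have h1 : ∃ i ∈ Icc c (c + r - 1), i ∉ B := by
      by_contra h
      push_neg at h
      exact hEq ((eq_of_subset_of_card_le h (by rw [hcard, (hA B hB).2])).symm)
    have h2 : ∃ j ∈ B, j ∉ Icc c (c + r - 1) := by
      by_contra h
      push_neg at h
      exact hEq (eq_of_subset_of_card_le h (by rw [hcard, (hA B hB).2]))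
    obtain ⟨i, hi1, hi2⟩ := h1
    obtain ⟨j, hj1, hj2⟩ := h2
    rw [mem_Icc] at hi1
    have hjc : j ∈ Icc c t := (hA B hB).1 hj1
    rw [mem_Icc] at hjc hj2
    have hij : i < j := by omega
    have hmem := hsh B hB i j (by omega) hij hj1 hi2
    have hlt : (insert i (B.erase j)).sum id < B.sum id := by
      rw [sum_insert (fun h => hi2 (mem_of_mem_erase h))]
      have he : id j + ∑ x ∈ B.erase j, id x = ∑ x ∈ B, id x :=
        Finset.add_sum_erase B id hj1
      have : B.sum id = ∑ x ∈ B, id x := rfl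
      simp only [id] at *
      omega
    exact ih _ (hn ▸ hlt) _ rfl hmem


lemma pascal (a b : ℕ) : (a+1).choose (b+1) = a.choose b + a.choose (b+1) :=
  Nat.choose_succ_succ a b

/-- Balanced cross-intersecting lemma (Lemma W). -/
lemma lemW : ∀ (m : ℕ), ∀ (c r : ℕ) (A B : Finset (Finset ℕ)),
    1 ≤ r → 2 * r ≤ m →
    Gd c (c + m - 1) r A → Gd c (c + m - 1) r B → Sh c A → Sh c B → Cr A B →
    A.Nonempty → B.Nonempty →
    A.card + B.card ≤ m.choose r - (m - r).choose r + 1 := by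
  intro m
  induction m using Nat.strong_induction_on with
  | _ m ih =>
  intro c r A B hr hm hGA hGB hshA hshB hcr hneA hneB
  have hIcc : (Icc c (c + m - 1)).card = m := by rw [Nat.card_Icc]; omega
  rcases eq_or_lt_of_le hm with heq | hlt
  · -- base case m = 2r
    have hpair := pair hGA hGB (by rw [hIcc]; omega) hcr
    rw [hIcc] at hpair
    have h1 : (m - r).choose r = 1 := by
      rw [show m - r = r from by omega, Nat.choose_self]
    have h2 : 1 ≤ m.choose r := Nat.choose_pos (by omega)
    omega
  · -- inductive step, m ≥ 2r + 1
    set t := c + m - 1 with ht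
    have ht1 : t - 1 = c + (m - 1) - 1 := by omega
    -- restrictions
    have hGAb : Gd c (c + (m - 1) - 1) r (bar t A) := ht1 ▸ Gd_bar hGA
    have hGBb : Gd c (c + (m - 1) - 1) r (bar t B) := ht1 ▸ Gd_bar hGB
    have hGAl : Gd c (c + (m - 1) - 1) (r - 1) (lnk t A) := ht1 ▸ Gd_lnk hGA
    have hGBl : Gd c (c + (m - 1) - 1) (r - 1) (lnk t B) := ht1 ▸ Gd_lnk hGB
    have hshAb : Sh c (bar t A) := Sh_bar hGA hshA
    have hshBb : Sh c (bar t B) := Sh_bar hGB hshB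
    have hshAl : Sh c (lnk t A) := Sh_lnk hGA hshA
    have hshBl : Sh c (lnk t B) := Sh_lnk hGB hshB
    have hcrb : Cr (bar t A) (bar t B) := fun S hS T hT =>
      hcr S (mem_filter.1 hS).1 T (mem_filter.1 hT).1
    have hcrl : Cr (lnk t A) (lnk t B) := Cr_lnk hGA hGB hshA hcr (by omega)
    -- bottom sets
    have hRA : Icc c (c + r - 1) ∈ A := bottom_mem hGA hshA hneA hr
    have hRB : Icc c (c + r - 1) ∈ B := bottom_mem hGB hshB hneB hr
    have htR : t ∉ Icc c (c + r - 1) := by rw [mem_Icc]; omega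
    have hneAb : (bar t A).Nonempty := ⟨_, mem_filter.2 ⟨hRA, htR⟩⟩
    have hneBb : (bar t B).Nonempty := ⟨_, mem_filter.2 ⟨hRB, htR⟩⟩
    -- the bar part via the inductive hypothesis
    have hbar := ih (m - 1) (by omega) c r (bar t A) (bar t B) hr (by omega)
      hGAb hGBb hshAb hshBb hcrb hneAb hneBb
    rw [show m - 1 - r = m - r - 1 from by omega] at hbar
    -- the link part
    have hlnk : (lnk t A).card + (lnk t B).card ≤
        (m - 1).choose (r - 1) - (m - r - 1).choose (r - 1) := by
      have hcntA : (lnk t B) = ∅ → (lnk t A).card ≤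
          (m - 1).choose (r - 1) - (m - r - 1).choose (r - 1) := by
        intro _
        have hmeet : ∀ S ∈ lnk t A, (S ∩ Icc c (c + r - 1)).Nonempty :=
          lnk_meets (ρ := r) (fun M hM => hcr M hM _ hRB) (by omega)
        have hc := cnt hGAl hr hmeet
        rw [Nat.card_Icc, Nat.card_Icc, show c + (m-1) - 1 + 1 - c = m - 1 from by omega,
          show c + (m-1) - 1 + 1 - (c + r) = m - r - 1 from by omega] at hc
        exact hc
      have hcntB : (lnk t A) = ∅ → (lnk t B).card ≤
          (m - 1).choose (r - 1) - (m - r - 1).choose (r - 1) := by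
        intro _
        have hmeet : ∀ S ∈ lnk t B, (S ∩ Icc c (c + r - 1)).Nonempty :=
          lnk_meets (ρ := r) (fun M hM => by
            rw [inter_comm]; exact hcr _ hRA M hM) (by omega)
        have hc := cnt hGBl hr hmeet
        rw [Nat.card_Icc, Nat.card_Icc, show c + (m-1) - 1 + 1 - c = m - 1 from by omega,
          show c + (m-1) - 1 + 1 - (c + r) = m - r - 1 from by omega] at hc
        exact hc
      by_cases hneAl : (lnk t A).Nonempty
      · by_cases hneBl : (lnk t B).Nonempty
        · -- both links nonempty: r must be at least 2
          rcases Nat.lt_or_ge r 2 with hr2 | hr2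
          · -- r = 1 : links consist of empty sets, contradiction
            exfalso
            obtain ⟨S, hS⟩ := hneAl
            obtain ⟨T, hT⟩ := hneBl
            obtain ⟨y, hy⟩ := hcrl S hS T hT
            have hS0 : S.card = 0 := by have := (hGAl S hS).2; omega
            rw [card_eq_zero] at hS0
            rw [hS0] at hy
            simp at hy
          · have h2 := ih (m - 1) (by omega) c (r - 1) (lnk t A) (lnk t B) (by omega) (by omega)
              hGAl hGBl hshAl hshBl hcrl hneAl hneBl
            rw [show m - 1 - (r - 1) = m - r from by omega] at h2
            have hp := pascal (m - r - 1) (r - 2)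
            rw [show m - r - 1 + 1 = m - r from by omega,
              show r - 2 + 1 = r - 1 from by omega] at hp
            have hpos : 1 ≤ (m - r - 1).choose (r - 2) := Nat.choose_pos (by omega)
            have hmono : (m - r).choose (r - 1) ≤ (m - 1).choose (r - 1) :=
              Nat.choose_le_choose _ (by omega)
            omega
        · rw [not_nonempty_iff_eq_empty] at hneBl
          have := hcntA hneBl
          rw [hneBl, card_empty]
          omega
      · rw [not_nonempty_iff_eq_empty] at hneAl
        have := hcntB hneAl
        rw [hneAl, card_empty]
        omega
    -- combine
    have hsA := card_split t A
    have hsB := card_split t B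
    have hP1 := pascal (m - 1) (r - 1)
    rw [show m - 1 + 1 = m from by omega, show r - 1 + 1 = r from by omega] at hP1
    have hP2 := pascal (m - r - 1) (r - 1)
    rw [show m - r - 1 + 1 = m - r from by omega, show r - 1 + 1 = r from by omega] at hP2
    have hM1 : (m - r - 1).choose r ≤ (m - 1).choose r :=
      Nat.choose_le_choose r (by omega)
    have hM2 : (m - r - 1).choose (r - 1) ≤ (m - 1).choose (r - 1) :=
      Nat.choose_le_choose (r - 1) (by omega)
    omega


/-- Unbalanced cross-intersecting lemma with shadow condition (Lemma Z). -/
lemma lemZ : ∀ (m : ℕ), ∀ (c r : ℕ) (A B : Finset (Finset ℕ)),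
    1 ≤ r → 2 * r + 1 ≤ m →
    Gd c (c + m - 1) r A → Gd c (c + m - 1) (r + 1) B → Sh c A → Sh c B → Cr A B →
    A.Nonempty → B.Nonempty → (∀ T ∈ B, ∀ j ∈ T, T.erase j ∈ A) →
    A.card + B.card ≤ m.choose r - (m - r - 1).choose r + 1 := by
  intro m
  induction m using Nat.strong_induction_on with
  | _ m ih =>
  intro c r A B hr hm hGA hGB hshA hshB hcr hneA hneB hshad
  have hIcc : (Icc c (c + m - 1)).card = m := by rw [Nat.card_Icc]; omega
  rcases eq_or_lt_of_le hm with heq | hlt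
  · -- base case m = 2r + 1
    have hpair := pair hGA hGB (by rw [hIcc]; omega) hcr
    rw [hIcc] at hpair
    have h1 : (m - r - 1).choose r = 1 := by
      rw [show m - r - 1 = r from by omega, Nat.choose_self]
    have h2 : 1 ≤ m.choose r := Nat.choose_pos (by omega)
    omega
  · -- inductive step, m ≥ 2r + 2
    set t := c + m - 1 with ht
    have ht1 : t - 1 = c + (m - 1) - 1 := by omega
    have hGAb : Gd c (c + (m - 1) - 1) r (bar t A) := ht1 ▸ Gd_bar hGA
    have hGBb : Gd c (c + (m - 1) - 1) (r + 1) (bar t B) := ht1 ▸ Gd_bar hGB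
    have hGAl : Gd c (c + (m - 1) - 1) (r - 1) (lnk t A) := ht1 ▸ Gd_lnk hGA
    have hGBl : Gd c (c + (m - 1) - 1) r (lnk t B) := by
      have := ht1 ▸ Gd_lnk (r := r + 1) hGB
      rwa [show r + 1 - 1 = r from by omega] at this
    have hshAb : Sh c (bar t A) := Sh_bar hGA hshA
    have hshBb : Sh c (bar t B) := Sh_bar hGB hshB
    have hshAl : Sh c (lnk t A) := Sh_lnk hGA hshA
    have hshBl : Sh c (lnk t B) := Sh_lnk hGB hshB
    have hcrb : Cr (bar t A) (bar t B) := fun S hS T hT =>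
      hcr S (mem_filter.1 hS).1 T (mem_filter.1 hT).1
    have hcrl : Cr (lnk t A) (lnk t B) := Cr_lnk hGA hGB hshA hcr (by omega)
    -- shadow conditions for restrictions
    have hshadb : ∀ T ∈ bar t B, ∀ j ∈ T, T.erase j ∈ bar t A := by
      intro T hT j hj
      rw [bar, mem_filter] at hT ⊢
      exact ⟨hshad T hT.1 j hj, fun h => hT.2 (mem_of_mem_erase h)⟩
    have hshadl : ∀ T ∈ lnk t B, ∀ j ∈ T, T.erase j ∈ lnk t A := by
      intro T hT j hj
      obtain ⟨N, hN, htN, rfl⟩ := mem_lnk.1 hT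
      have hjN : j ∈ N := mem_of_mem_erase hj
      have hjt : j ≠ t := ne_of_mem_erase hj
      refine mem_lnk.2 ⟨N.erase j, hshad N hN j hjN, mem_erase.2 ⟨fun h => hjt h.symm, htN⟩, ?_⟩
      rw [erase_right_comm]
    -- bottom sets
    have hRA : Icc c (c + r - 1) ∈ A := bottom_mem hGA hshA hneA hr
    have hRB : Icc c (c + r) ∈ B := by
      have := bottom_mem hGB hshB hneB (by omega)
      rwa [show c + (r + 1) - 1 = c + r from by omega] at this
    have htRA : t ∉ Icc c (c + r - 1) := by rw [mem_Icc]; omega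
    have htRB : t ∉ Icc c (c + r) := by rw [mem_Icc]; omega
    have hneAb : (bar t A).Nonempty := ⟨_, mem_filter.2 ⟨hRA, htRA⟩⟩
    have hneBb : (bar t B).Nonempty := ⟨_, mem_filter.2 ⟨hRB, htRB⟩⟩
    -- bar part via IH
    have hbar := ih (m - 1) (by omega) c r (bar t A) (bar t B) hr (by omega)
      hGAb hGBb hshAb hshBb hcrb hneAb hneBb hshadb
    rw [show m - 1 - r - 1 = m - r - 2 from by omega] at hbar
    -- link part
    have hlnk : (lnk t A).card + (lnk t B).card ≤
        (m - 1).choose (r - 1) - (m - r - 2).choose (r - 1) := by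
      by_cases hneAl : (lnk t A).Nonempty
      · by_cases hneBl : (lnk t B).Nonempty
        · rcases Nat.lt_or_ge r 2 with hr2 | hr2
          · -- r = 1: members of lnk t A are empty, contradiction with cross
            exfalso
            obtain ⟨S, hS⟩ := hneAl
            obtain ⟨T, hT⟩ := hneBl
            obtain ⟨y, hy⟩ := hcrl S hS T hT
            have hS0 : S.card = 0 := by have := (hGAl S hS).2; omega
            rw [card_eq_zero] at hS0
            rw [hS0] at hy
            simp at hy
          · have hGBl' : Gd c (c + (m - 1) - 1) ((r - 1) + 1) (lnk t B) := by
              rwa [show r - 1 + 1 = r from by omega]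
            have h2 := ih (m - 1) (by omega) c (r - 1) (lnk t A) (lnk t B) (by omega) (by omega)
              hGAl hGBl' hshAl hshBl hcrl hneAl hneBl hshadl
            rw [show m - 1 - (r - 1) - 1 = m - r - 1 from by omega] at h2
            have hp := pascal (m - r - 2) (r - 2)
            rw [show m - r - 2 + 1 = m - r - 1 from by omega,
              show r - 2 + 1 = r - 1 from by omega] at hp
            have hpos : 1 ≤ (m - r - 2).choose (r - 2) := Nat.choose_pos (by omega)
            have hmono : (m - r - 1).choose (r - 1) ≤ (m - 1).choose (r - 1) :=
              Nat.choose_le_choose _ (by omega)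
            omega
        · -- B-link empty, bound A-link by counting
          rw [not_nonempty_iff_eq_empty] at hneBl
          rw [hneBl, card_empty]
          have hmeet : ∀ S ∈ lnk t A, (S ∩ Icc c (c + (r + 1) - 1)).Nonempty :=
            lnk_meets (ρ := r + 1) (fun M hM => by
              rw [show c + (r + 1) - 1 = c + r from by omega]
              exact hcr M hM _ hRB) (by omega)
          have hc := cnt hGAl (by omega) hmeet
          rw [Nat.card_Icc, Nat.card_Icc, show c + (m-1) - 1 + 1 - c = m - 1 from by omega,
            show c + (m-1) - 1 + 1 - (c + (r + 1)) = m - r - 2 from by omega] at hc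
          omega
      · -- A-link empty forces B-link empty via shadow
        rw [not_nonempty_iff_eq_empty] at hneAl
        have hBl : lnk t B = ∅ := by
          rw [eq_empty_iff_forall_notMem]
          intro T hT
          have hTc : T.card = r := (hGBl T hT).2
          have : T.Nonempty := card_pos.1 (by omega)
          obtain ⟨j, hj⟩ := this
          have := hshadl T hT j hj
          rw [hneAl] at this
          exact notMem_empty _ this
        rw [hneAl, hBl, card_empty]
        omega
    -- combine
    have hsA := card_split t A
    have hsB := card_split t B
    have hP1 := pascal (m - 1) (r - 1)
    rw [show m - 1 + 1 = m from by omega, show r - 1 + 1 = r from by omega] at hP1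
    have hP2 := pascal (m - r - 2) (r - 1)
    rw [show m - r - 2 + 1 = m - r - 1 from by omega,
      show r - 1 + 1 = r from by omega] at hP2
    have hM1 : (m - r - 2).choose r ≤ (m - 1).choose r :=
      Nat.choose_le_choose r (by omega)
    have hM2 : (m - r - 2).choose (r - 1) ≤ (m - 1).choose (r - 1) :=
      Nat.choose_le_choose (r - 1) (by omega)
    omega


def NonStar (F : Finset (Finset ℕ)) : Prop := ∀ x : ℕ, ∃ A ∈ F, x ∉ A

/-- the (i,j)-shift of a single set -/
def shSet (i j : ℕ) (A : Finset ℕ) : Finset ℕ :=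
  if j ∈ A ∧ i ∉ A then insert i (A.erase j) else A

/-- the (i,j)-shift map relative to a family -/
def shMap (i j : ℕ) (F : Finset (Finset ℕ)) (A : Finset ℕ) : Finset ℕ :=
  if shSet i j A ∈ F then A else shSet i j A

/-- the (i,j)-shift (compression) of a family -/
def shFam (i j : ℕ) (F : Finset (Finset ℕ)) : Finset (Finset ℕ) :=
  F.image (shMap i j F)

variable {i j : ℕ} {F : Finset (Finset ℕ)}

lemma shMap_cases {A : Finset ℕ} (hA : A ∈ F) :
    shMap i j F A = A ∨
    (j ∈ A ∧ i ∉ A ∧ shMap i j F A = insert i (A.erase j) ∧ insert i (A.erase j) ∉ F) := by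
  unfold shMap shSet
  by_cases h1 : j ∈ A ∧ i ∉ A
  · rw [if_pos h1]
    by_cases h2 : insert i (A.erase j) ∈ F
    · rw [if_pos h2]; left; rfl
    · rw [if_neg h2]; right; exact ⟨h1.1, h1.2, rfl, h2⟩
  · rw [if_neg h1, if_pos hA]; left; rfl

lemma card_shMap {A : Finset ℕ} (hA : A ∈ F) : (shMap i j F A).card = A.card := by
  rcases shMap_cases hA with h | ⟨hj, hi, h, _⟩
  · rw [h]
  · rw [h, card_shiftset hj hi]

lemma mem_shMap {A : Finset ℕ} {z : ℕ} (hA : A ∈ F) (hzi : z ≠ i) (hzj : z ≠ j) :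
    z ∈ shMap i j F A ↔ z ∈ A := by
  rcases shMap_cases hA with h | ⟨hj, hi, h, _⟩
  · rw [h]
  · rw [h, mem_insert, mem_erase]
    constructor
    · rintro (rfl | ⟨_, h⟩)
      · exact absurd rfl hzi
      · exact h
    · intro h; exact Or.inr ⟨hzj, h⟩

lemma shMap_injOn : Set.InjOn (shMap i j F) F := by
  intro A hA B hB hEq
  rw [mem_coe] at hA hB
  rcases shMap_cases (i := i) (j := j) hA with h1 | ⟨hj1, hi1, h1, hn1⟩ <;>
    rcases shMap_cases (i := i) (j := j) hB with h2 | ⟨hj2, hi2, h2, hn2⟩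
  · rw [h1, h2] at hEq; exact hEq
  · rw [h1, h2] at hEq; exact absurd (hEq ▸ hA) hn2
  · rw [h1, h2] at hEq; exact absurd (hEq.symm ▸ hB) hn1
  · rw [h1, h2] at hEq
    have : (insert i (A.erase j)).erase i = (insert i (B.erase j)).erase i := by rw [hEq]
    rw [erase_insert (fun h => hi1 (mem_of_mem_erase h)),
      erase_insert (fun h => hi2 (mem_of_mem_erase h))] at this
    rw [← insert_erase hj1, ← insert_erase hj2, this]

lemma card_shFam : (shFam i j F).card = F.card := card_image_of_injOn shMap_injOn

lemma mem_shFam {B : Finset ℕ} : B ∈ shFam i j F ↔ ∃ A ∈ F, shMap i j F A = B := by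
  simp [shFam, mem_image]

lemma Gd_shFam {c t k : ℕ} (hij : i < j) (hci : c ≤ i) (hG : Gd c t k F) :
    Gd c t k (shFam i j F) := by
  intro B hB
  obtain ⟨A, hA, rfl⟩ := mem_shFam.1 hB
  constructor
  · rcases shMap_cases (i := i) (j := j) hA with h | ⟨hj1, hi1, h, _⟩
    · rw [h]; exact (hG A hA).1
    · rw [h]
      intro x hx
      rcases mem_insert.1 hx with rfl | hx
      · have hjt := (hG A hA).1 hj1
        rw [mem_Icc] at hjt ⊢
        omega
      · exact (hG A hA).1 (mem_of_mem_erase hx)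
  · rw [card_shMap hA]; exact (hG A hA).2

/-- shifting preserves the intersecting property -/
lemma Cr_shFam (hij : i < j) (hcr : Cr F F) : Cr (shFam i j F) (shFam i j F) := by
  -- helper : a moved set still meets an unmoved set
  have key : ∀ A ∈ F, ∀ B ∈ F, j ∈ A → i ∉ A → insert i (A.erase j) ∉ F →
      shMap i j F B = B → (insert i (A.erase j) ∩ B).Nonempty := by
    intro A hA B hB hjA hiA hnA hkB
    obtain ⟨x, hx⟩ := hcr A hA B hB
    rw [mem_inter] at hx
    by_cases hxj : x = j
    · -- A ∩ B could be only {j}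
      have hjB : j ∈ B := hxj ▸ hx.2
      by_cases hiB : i ∈ B
      · exact ⟨i, mem_inter.2 ⟨mem_insert_self _ _, hiB⟩⟩
      · -- B is kept while movable: so its shift is in F
        have hBmov : shSet i j B = insert i (B.erase j) := by
          unfold shSet; rw [if_pos ⟨hjB, hiB⟩]
        have hBF : insert i (B.erase j) ∈ F := by
          unfold shMap at hkB
          by_cases h : shSet i j B ∈ F
          · rwa [hBmov] at h
          · rw [if_neg h, hBmov] at hkB
            exfalso
            have : i ∈ B := hkB ▸ mem_insert_self i _
            exact hiB this
        obtain ⟨y, hy⟩ := hcr A hA _ hBF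
        rw [mem_inter] at hy
        have hyi : y ≠ i := fun h => hiA (h ▸ hy.1)
        have hyB : y ∈ B.erase j := by
          rcases mem_insert.1 hy.2 with h | h
          · exact absurd h hyi
          · exact h
        have hyj : y ≠ j := ne_of_mem_erase hyB
        exact ⟨y, mem_inter.2 ⟨mem_insert_of_mem (mem_erase.2 ⟨hyj, hy.1⟩),
          mem_of_mem_erase hyB⟩⟩
    · exact ⟨x, mem_inter.2 ⟨mem_insert_of_mem (mem_erase.2 ⟨hxj, hx.1⟩), hx.2⟩⟩
  intro A' hA' B' hB'
  obtain ⟨A, hA, rfl⟩ := mem_shFam.1 hA'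
  obtain ⟨B, hB, rfl⟩ := mem_shFam.1 hB'
  rcases shMap_cases (i := i) (j := j) hA with h1 | ⟨hj1, hi1, h1, hn1⟩ <;>
    rcases shMap_cases (i := i) (j := j) hB with h2 | ⟨hj2, hi2, h2, hn2⟩
  · rw [h1, h2]; exact hcr A hA B hB
  · rw [h1, h2, inter_comm]
    exact key B hB A hA hj2 hi2 hn2 h1
  · rw [h1, h2]
    exact key A hA B hB hj1 hi1 hn1 h2
  · rw [h1, h2]
    exact ⟨i, mem_inter.2 ⟨mem_insert_self _ _, mem_insert_self _ _⟩⟩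

/-- measure for termination -/
def mu (F : Finset (Finset ℕ)) : ℕ := ∑ A ∈ F, ∑ x ∈ A, x

lemma mu_shFam_lt (hij : i < j) (hne : shFam i j F ≠ F) : mu (shFam i j F) < mu F := by
  classical
  have hsum : mu (shFam i j F) = ∑ A ∈ F, ∑ x ∈ shMap i j F A, x := by
    unfold mu shFam
    rw [Finset.sum_image fun A hA B hB h => shMap_injOn hA hB h]
  rw [hsum]
  unfold mu
  have hle : ∀ A ∈ F, ∑ x ∈ shMap i j F A, x ≤ ∑ x ∈ A, x := by
    intro A hA
    rcases shMap_cases (i := i) (j := j) hA with h | ⟨hjA, hiA, h, _⟩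
    · rw [h]
    · rw [h, sum_insert (fun hh => hiA (mem_of_mem_erase hh))]
      have he : j + ∑ x ∈ A.erase j, x = ∑ x ∈ A, x := Finset.add_sum_erase A (fun x => x) hjA
      omega
  have hex : ∃ A ∈ F, ∑ x ∈ shMap i j F A, x < ∑ x ∈ A, x := by
    by_contra hc
    push_neg at hc
    apply hne
    unfold shFam
    have : ∀ A ∈ F, shMap i j F A = A := by
      intro A hA
      rcases shMap_cases (i := i) (j := j) hA with h | ⟨hjA, hiA, h, _⟩
      · exact h
      · exfalso
        have h1 := hc A hA
        rw [h, sum_insert (fun hh => hiA (mem_of_mem_erase hh))] at h1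
        have he : j + ∑ x ∈ A.erase j, x = ∑ x ∈ A, x := Finset.add_sum_erase A (fun x => x) hjA
        omega
    rw [Finset.image_congr (g := id) (fun A hA => this A hA), image_id]
  obtain ⟨A0, hA0, hlt⟩ := hex
  exact Finset.sum_lt_sum hle ⟨A0, hA0, hlt⟩




/-- Stabilization with star detection. -/
lemma stab1 (c t k : ℕ) : ∀ (N : ℕ) (F : Finset (Finset ℕ)), mu F = N →
    Gd c t k F → Cr F F → NonStar F →
    (∃ H, H.card = F.card ∧ Gd c t k H ∧ Cr H H ∧ NonStar H ∧ Sh c H) ∨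
    (∃ G i j, G.card = F.card ∧ Gd c t k G ∧ Cr G G ∧ NonStar G ∧
      c ≤ i ∧ i < j ∧ j ≤ t ∧ ∀ A ∈ G, i ∈ A ∨ j ∈ A) := by
  intro N
  induction N using Nat.strong_induction_on with
  | _ N ih =>
  intro F hN hG hcr hns
  by_cases hsh : Sh c F
  · exact Or.inl ⟨F, rfl, hG, hcr, hns, hsh⟩
  · unfold Sh at hsh
    push_neg at hsh
    obtain ⟨A, hA, i, j, hci, hij, hjA, hiA, hnin⟩ := hsh
    have hjt : j ≤ t := by
      have := (hG A hA).1 hjA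
      rw [mem_Icc] at this
      omega
    set F' := shFam i j F with hF'
    have hmoved : insert i (A.erase j) ∈ F' := by
      rw [mem_shFam]
      have hs : shSet i j A = insert i (A.erase j) := by
        unfold shSet; rw [if_pos ⟨hjA, hiA⟩]
      have hm : shMap i j F A = insert i (A.erase j) := by
        unfold shMap; rw [hs, if_neg hnin]
      exact ⟨A, hA, hm⟩
    have hne : F' ≠ F := fun h => hnin (h ▸ hmoved)
    have hmu : mu F' < mu F := mu_shFam_lt hij hne
    have hG' : Gd c t k F' := Gd_shFam hij hci hG
    have hcr' : Cr F' F' := Cr_shFam hij hcr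
    by_cases hns' : NonStar F'
    · rcases ih (mu F') (hN ▸ hmu) F' rfl hG' hcr' hns' with ⟨H, hc1, h2⟩ | ⟨G, i', j', hc1, h2⟩
      · exact Or.inl ⟨H, by rw [hc1, hF', card_shFam], h2⟩
      · exact Or.inr ⟨G, i', j', by rw [hc1, hF', card_shFam], h2⟩
    · unfold NonStar at hns'
      push_neg at hns'
      obtain ⟨x, hx⟩ := hns'
      have hxi : x = i := by
        by_contra hxi
        by_cases hxj : x = j
        · subst hxj
          have hxm := hx _ hmoved
          rcases mem_insert.1 hxm with h | h
          · omega
          · exact (notMem_erase _ _) h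
        · obtain ⟨B, hB, hxB⟩ := hns x
          have hB' : shMap i j F B ∈ F' := mem_shFam.2 ⟨B, hB, rfl⟩
          have := hx _ hB'
          rw [mem_shMap hB hxi hxj] at this
          exact hxB this
      subst hxi
      refine Or.inr ⟨F, x, j, rfl, hG, hcr, hns, hci, hij, hjt, fun B hB => ?_⟩
      have hB' : shMap x j F B ∈ F' := mem_shFam.2 ⟨B, hB, rfl⟩
      have hxB' := hx _ hB'
      rcases shMap_cases (i := x) (j := j) hB with h | ⟨hjB, _, _, _⟩
      · rw [h] at hxB'
        exact Or.inl hxB'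
      · exact Or.inr hjB

/-- Stabilization preserving memberships of two low elements `u, v < c2`. -/
lemma stab2 (c t k u v c2 : ℕ) (hu : u < c2) (hv : v < c2) (hc2 : c ≤ c2) :
    ∀ (N : ℕ) (F : Finset (Finset ℕ)), mu F = N →
    Gd c t k F → Cr F F →
    (∀ A ∈ F, u ∈ A ∨ v ∈ A) → (∃ A ∈ F, u ∈ A ∧ v ∉ A) → (∃ A ∈ F, v ∈ A ∧ u ∉ A) →
    ∃ H, H.card = F.card ∧ Gd c t k H ∧ Cr H H ∧
      (∀ A ∈ H, u ∈ A ∨ v ∈ A) ∧ (∃ A ∈ H, u ∈ A ∧ v ∉ A) ∧ (∃ A ∈ H, v ∈ A ∧ u ∉ A) ∧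
      Sh c2 H := by
  intro N
  induction N using Nat.strong_induction_on with
  | _ N ih =>
  intro F hN hG hcr hmeet hwu hwv
  by_cases hsh : Sh c2 F
  · exact ⟨F, rfl, hG, hcr, hmeet, hwu, hwv, hsh⟩
  · unfold Sh at hsh
    push_neg at hsh
    obtain ⟨A, hA, i, j, hci, hij, hjA, hiA, hnin⟩ := hsh
    set F' := shFam i j F with hF'
    have hmoved : insert i (A.erase j) ∈ F' := by
      rw [mem_shFam]
      have hs : shSet i j A = insert i (A.erase j) := by
        unfold shSet; rw [if_pos ⟨hjA, hiA⟩]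
      have hm : shMap i j F A = insert i (A.erase j) := by
        unfold shMap; rw [hs, if_neg hnin]
      exact ⟨A, hA, hm⟩
    have hne : F' ≠ F := fun h => hnin (h ▸ hmoved)
    have hmu : mu F' < mu F := mu_shFam_lt hij hne
    have hG' : Gd c t k F' := Gd_shFam hij (by omega) hG
    have hcr' : Cr F' F' := Cr_shFam hij hcr
    have hmem : ∀ B ∈ F, ∀ z, z ≠ i → z ≠ j → (z ∈ shMap i j F B ↔ z ∈ B) :=
      fun B hB z hzi hzj => mem_shMap hB hzi hzj
    have hmeet' : ∀ B ∈ F', u ∈ B ∨ v ∈ B := by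
      intro B hB
      obtain ⟨B0, hB0, rfl⟩ := mem_shFam.1 hB
      rcases hmeet B0 hB0 with h | h
      · exact Or.inl ((hmem B0 hB0 u (by omega) (by omega)).2 h)
      · exact Or.inr ((hmem B0 hB0 v (by omega) (by omega)).2 h)
    have hwu' : ∃ B ∈ F', u ∈ B ∧ v ∉ B := by
      obtain ⟨B0, hB0, h1, h2⟩ := hwu
      exact ⟨shMap i j F B0, mem_shFam.2 ⟨B0, hB0, rfl⟩,
        (hmem B0 hB0 u (by omega) (by omega)).2 h1,
        fun h => h2 ((hmem B0 hB0 v (by omega) (by omega)).1 h)⟩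
    have hwv' : ∃ B ∈ F', v ∈ B ∧ u ∉ B := by
      obtain ⟨B0, hB0, h1, h2⟩ := hwv
      exact ⟨shMap i j F B0, mem_shFam.2 ⟨B0, hB0, rfl⟩,
        (hmem B0 hB0 v (by omega) (by omega)).2 h1,
        fun h => h2 ((hmem B0 hB0 u (by omega) (by omega)).1 h)⟩
    obtain ⟨H, hc1, h2⟩ := ih (mu F') (hN ▸ hmu) F' rfl hG' hcr' hmeet' hwu' hwv'
    exact ⟨H, by rw [hc1, hF', card_shFam], h2⟩



lemma mem_image_perm {π : Equiv.Perm ℕ} {A : Finset ℕ} {z : ℕ} :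
    z ∈ A.image (fun w => π w) ↔ π.symm z ∈ A := by
  rw [mem_image]
  constructor
  · rintro ⟨w, hw, rfl⟩; rwa [Equiv.symm_apply_apply]
  · intro h; exact ⟨π.symm z, h, Equiv.apply_symm_apply π z⟩

lemma swap_mem_Icc {a b z c t : ℕ} (ha : a ∈ Icc c t) (hb : b ∈ Icc c t) (hz : z ∈ Icc c t) :
    Equiv.swap a b z ∈ Icc c t := by
  rcases eq_or_ne z a with rfl | hza
  · rwa [Equiv.swap_apply_left]
  rcases eq_or_ne z b with rfl | hzb
  · rwa [Equiv.swap_apply_right]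
  · rwa [Equiv.swap_apply_of_ne_of_ne hza hzb]

lemma erase_injOn_star (u : ℕ) (S : Finset (Finset ℕ)) (h : ∀ A ∈ S, u ∈ A) :
    Set.InjOn (fun A : Finset ℕ => A.erase u) ↑S := by
  intro A hA B hB hEq
  rw [mem_coe] at hA hB
  rw [← insert_erase (h A hA), ← insert_erase (h B hB)]
  simp only at hEq
  rw [hEq]

/-- Case B : every member of a NonStar intersecting uniform family meets a fixed pair. -/
lemma caseB (c n k x y : ℕ) (F : Finset (Finset ℕ)) (hk : 2 ≤ k) (hn : 2 * k ≤ n)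
    (hG : Gd c (c + n - 1) k F) (hcr : Cr F F) (hns : NonStar F)
    (hcx : c ≤ x) (hxy : x < y) (hyt : y ≤ c + n - 1)
    (hmeets : ∀ A ∈ F, x ∈ A ∨ y ∈ A) :
    F.card ≤ (n - 1).choose (k - 1) - (n - k - 1).choose (k - 1) + 1 := by
  classical
  set t := c + n - 1 with htdef
  have hn4 : 4 ≤ n := by omega
  have hct : c + 2 ≤ t := by omega
  -- the permutation sending x ↦ c and y ↦ c+1
  set s1 := Equiv.swap x c with hs1
  set y1 := s1 y with hy1def
  have hyx : y ≠ x := by omega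
  have hy1c : y1 ≠ c := by
    intro h
    apply hyx
    have := congrArg s1 h
    rw [hy1def, Equiv.swap_apply_self, hs1, Equiv.swap_apply_right] at this
    exact this
  set s2 := Equiv.swap y1 (c + 1) with hs2
  set π := s1.trans s2 with hπ
  have hπx : π x = c := by
    rw [hπ, Equiv.trans_apply, hs1, Equiv.swap_apply_left, hs2,
      Equiv.swap_apply_of_ne_of_ne (Ne.symm hy1c) (by omega)]
  have hπy : π y = c + 1 := by
    rw [hπ, Equiv.trans_apply, ← hy1def, hs2, Equiv.swap_apply_left]
  have hπsymmc : π.symm c = x := by rw [← hπx, Equiv.symm_apply_apply]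
  have hπsymmc1 : π.symm (c + 1) = y := by rw [← hπy, Equiv.symm_apply_apply]
  have hπIcc : ∀ z ∈ Icc c t, π z ∈ Icc c t := by
    intro z hz
    rw [hπ, Equiv.trans_apply]
    have hx : x ∈ Icc c t := by rw [mem_Icc]; omega
    have hc : c ∈ Icc c t := by rw [mem_Icc]; omega
    have hy : y ∈ Icc c t := by rw [mem_Icc]; omega
    have h1 : s1 z ∈ Icc c t := swap_mem_Icc hx hc hz
    have hy1m : y1 ∈ Icc c t := swap_mem_Icc hx hc hy
    have hc1 : c + 1 ∈ Icc c t := by rw [mem_Icc]; omega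
    exact swap_mem_Icc hy1m hc1 h1
  -- relabeled family
  set G := F.image (fun A => A.image (fun z => π z)) with hGdef
  have hinj : Function.Injective (fun A : Finset ℕ => A.image (fun z => π z)) :=
    Finset.image_injective (Equiv.injective π)
  have hGcard : G.card = F.card := card_image_of_injective F hinj
  have hGG : Gd c t k G := by
    intro B hB
    obtain ⟨A, hA, rfl⟩ := mem_image.1 hB
    constructor
    · intro z hz
      obtain ⟨w, hw, rfl⟩ := mem_image.1 hz
      exact hπIcc w ((hG A hA).1 hw)
    · rw [card_image_of_injective A (Equiv.injective π), (hG A hA).2]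
  have hGcr : Cr G G := by
    intro B1 hB1 B2 hB2
    obtain ⟨A1, hA1, rfl⟩ := mem_image.1 hB1
    obtain ⟨A2, hA2, rfl⟩ := mem_image.1 hB2
    rw [← Finset.image_inter _ _ (Equiv.injective π)]
    exact (hcr A1 hA1 A2 hA2).image _
  have hGmeets : ∀ B ∈ G, c ∈ B ∨ c + 1 ∈ B := by
    intro B hB
    obtain ⟨A, hA, rfl⟩ := mem_image.1 hB
    rcases hmeets A hA with h | h
    · exact Or.inl (hπx ▸ mem_image_of_mem _ h)
    · exact Or.inr (hπy ▸ mem_image_of_mem _ h)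
  have hGwu : ∃ B ∈ G, c ∈ B ∧ c + 1 ∉ B := by
    obtain ⟨A, hA, hyA⟩ := hns y
    have hxA : x ∈ A := (hmeets A hA).resolve_right (fun h => hyA h)
    refine ⟨A.image (fun z => π z), mem_image_of_mem _ hA, hπx ▸ mem_image_of_mem _ hxA, ?_⟩
    rw [mem_image_perm, hπsymmc1]
    exact hyA
  have hGwv : ∃ B ∈ G, c + 1 ∈ B ∧ c ∉ B := by
    obtain ⟨A, hA, hxA⟩ := hns x
    have hyA : y ∈ A := (hmeets A hA).resolve_left (fun h => hxA h)
    refine ⟨A.image (fun z => π z), mem_image_of_mem _ hA, hπy ▸ mem_image_of_mem _ hyA, ?_⟩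
    rw [mem_image_perm, hπsymmc]
    exact hxA
  -- stabilize shifting above c+2
  obtain ⟨H, hHcard, hHG, hHcr, hHmeets, hHwu, hHwv, hHsh⟩ :=
    stab2 c t k c (c + 1) (c + 2) (by omega) (by omega) (by omega) (mu G) G rfl
      hGG hGcr hGmeets hGwu hGwv
  -- partition H by memberships of c, c+1
  set P1 := H.filter (fun A => c ∈ A) with hP1
  set P0 := H.filter (fun A => c ∉ A) with hP0
  set P11 := P1.filter (fun A => c + 1 ∈ A) with hP11
  set P10 := P1.filter (fun A => c + 1 ∉ A) with hP10
  have hsplit1 : P1.card + P0.card = H.card := by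
    rw [hP1, hP0]
    exact Finset.card_filter_add_card_filter_not _
  have hsplit2 : P11.card + P10.card = P1.card := by
    rw [hP11, hP10]
    exact Finset.card_filter_add_card_filter_not _
  -- members of P0 contain c+1
  have hP0mem : ∀ A ∈ P0, c + 1 ∈ A ∧ c ∉ A := by
    intro A hA
    rw [hP0, mem_filter] at hA
    exact ⟨(hHmeets A hA.1).resolve_left hA.2, hA.2⟩
  have hP10mem : ∀ A ∈ P10, c ∈ A ∧ c + 1 ∉ A := by
    intro A hA
    rw [hP10, mem_filter, hP1, mem_filter] at hA
    exact ⟨hA.1.2, hA.2⟩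
  have hP10H : ∀ A ∈ P10, A ∈ H := by
    intro A hA
    rw [hP10, mem_filter, hP1, mem_filter] at hA
    exact hA.1.1
  have hP0H : ∀ A ∈ P0, A ∈ H := fun A hA => (mem_filter.1 hA).1
  -- reduced families
  set A' := P10.image (fun A => A.erase c) with hA'
  set B' := P0.image (fun A => A.erase (c + 1)) with hB'
  have hA'card : A'.card = P10.card :=
    card_image_of_injOn (erase_injOn_star c P10 (fun A hA => (hP10mem A hA).1))
  have hB'card : B'.card = P0.card :=
    card_image_of_injOn (erase_injOn_star (c+1) P0 (fun A hA => (hP0mem A hA).1))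
  have hA'G : Gd (c + 2) t (k - 1) A' := by
    intro S hS
    obtain ⟨M, hM, rfl⟩ := mem_image.1 hS
    have hMH := hP10H M hM
    constructor
    · intro z hz
      have h1 := (hHG M hMH).1 (mem_of_mem_erase hz)
      have h2 : z ≠ c := ne_of_mem_erase hz
      have h3 : z ≠ c + 1 := fun h => (hP10mem M hM).2 (h ▸ mem_of_mem_erase hz)
      rw [mem_Icc] at h1 ⊢
      omega
    · rw [card_erase_of_mem (hP10mem M hM).1, (hHG M hMH).2]
  have hB'G : Gd (c + 2) t (k - 1) B' := by
    intro S hS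
    obtain ⟨M, hM, rfl⟩ := mem_image.1 hS
    have hMH := hP0H M hM
    constructor
    · intro z hz
      have h1 := (hHG M hMH).1 (mem_of_mem_erase hz)
      have h2 : z ≠ c + 1 := ne_of_mem_erase hz
      have h3 : z ≠ c := fun h => (hP0mem M hM).2 (h ▸ mem_of_mem_erase hz)
      rw [mem_Icc] at h1 ⊢
      omega
    · rw [card_erase_of_mem (hP0mem M hM).1, (hHG M hMH).2]
  have hA'sh : Sh (c + 2) A' := by
    intro S hS i j hci hij hj hi
    obtain ⟨M, hM, rfl⟩ := mem_image.1 hS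
    have hMH := hP10H M hM
    have hjM : j ∈ M := mem_of_mem_erase hj
    have hiM : i ∉ M := by
      intro h
      exact hi (mem_erase.2 ⟨by omega, h⟩)
    have hM' := hHsh M hMH i j hci hij hjM hiM
    have hcM' : c ∈ insert i (M.erase j) := by
      refine mem_insert_of_mem (mem_erase.2 ⟨?_, (hP10mem M hM).1⟩)
      have := ne_of_mem_erase hj
      omega
    have hc1M' : c + 1 ∉ insert i (M.erase j) := by
      rw [mem_insert]
      push_neg
      exact ⟨by omega, fun h => (hP10mem M hM).2 (mem_of_mem_erase h)⟩
    rw [hA', mem_image]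
    refine ⟨insert i (M.erase j), ?_, ?_⟩
    · rw [hP10, mem_filter, hP1, mem_filter]
      exact ⟨⟨hM', hcM'⟩, hc1M'⟩
    · rw [erase_insert_of_ne (by omega), erase_right_comm]
  have hB'sh : Sh (c + 2) B' := by
    intro S hS i j hci hij hj hi
    obtain ⟨M, hM, rfl⟩ := mem_image.1 hS
    have hMH := hP0H M hM
    have hjM : j ∈ M := mem_of_mem_erase hj
    have hiM : i ∉ M := by
      intro h
      exact hi (mem_erase.2 ⟨by omega, h⟩)
    have hM' := hHsh M hMH i j hci hij hjM hiM
    have hcM' : c + 1 ∈ insert i (M.erase j) := by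
      refine mem_insert_of_mem (mem_erase.2 ⟨?_, (hP0mem M hM).1⟩)
      have := ne_of_mem_erase hj
      omega
    have hc1M' : c ∉ insert i (M.erase j) := by
      rw [mem_insert]
      push_neg
      exact ⟨by omega, fun h => (hP0mem M hM).2 (mem_of_mem_erase h)⟩
    rw [hB', mem_image]
    refine ⟨insert i (M.erase j), ?_, ?_⟩
    · rw [hP0, mem_filter]
      exact ⟨hM', hc1M'⟩
    · rw [erase_insert_of_ne (by omega), erase_right_comm]
  have hA'B'cr : Cr A' B' := by
    intro S hS T hT
    obtain ⟨M, hM, rfl⟩ := mem_image.1 hS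
    obtain ⟨N, hN, rfl⟩ := mem_image.1 hT
    obtain ⟨w, hw⟩ := hHcr M (hP10H M hM) N (hP0H N hN)
    rw [mem_inter] at hw
    have hwc : w ≠ c := fun h => (hP0mem N hN).2 (h ▸ hw.2)
    have hwc1 : w ≠ c + 1 := fun h => (hP10mem M hM).2 (h ▸ hw.1)
    exact ⟨w, mem_inter.2 ⟨mem_erase.2 ⟨hwc, hw.1⟩, mem_erase.2 ⟨hwc1, hw.2⟩⟩⟩
  have hA'ne : A'.Nonempty := by
    obtain ⟨M, hM, h1, h2⟩ := hHwu
    exact ⟨M.erase c, mem_image_of_mem _ (by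
      rw [hP10, mem_filter, hP1, mem_filter]; exact ⟨⟨hM, h1⟩, h2⟩)⟩
  have hB'ne : B'.Nonempty := by
    obtain ⟨M, hM, h1, h2⟩ := hHwv
    exact ⟨M.erase (c+1), mem_image_of_mem _ (by
      rw [hP0, mem_filter]; exact ⟨hM, h2⟩)⟩
  -- apply lemma W
  have ht2 : (c + 2) + (n - 2) - 1 = t := by omega
  have hW := lemW (n - 2) (c + 2) (k - 1) A' B' (by omega) (by omega)
    (ht2 ▸ hA'G) (ht2 ▸ hB'G) hA'sh hB'sh hA'B'cr hA'ne hB'ne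
  rw [show n - 2 - (k - 1) = n - k - 1 from by omega] at hW
  -- bound P11
  have hP11card : P11.card ≤ (n - 2).choose (k - 2) := by
    have hP11mem : ∀ A ∈ P11, c ∈ A ∧ c + 1 ∈ A ∧ A ∈ H := by
      intro A hA
      rw [hP11, mem_filter, hP1, mem_filter] at hA
      exact ⟨hA.1.2, hA.2, hA.1.1⟩
    set C' := P11.image (fun A => (A.erase c).erase (c + 1)) with hC'
    have hC'card : C'.card = P11.card := by
      apply card_image_of_injOn
      intro A hA B hB hEq
      rw [mem_coe] at hA hB
      obtain ⟨hcA, hc1A, _⟩ := hP11mem A hA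
      obtain ⟨hcB, hc1B, _⟩ := hP11mem B hB
      simp only at hEq
      have : insert c (insert (c+1) ((A.erase c).erase (c+1)))
          = insert c (insert (c+1) ((B.erase c).erase (c+1))) := by rw [hEq]
      rwa [insert_erase (mem_erase.2 ⟨by omega, hc1A⟩), insert_erase hcA,
        insert_erase (mem_erase.2 ⟨by omega, hc1B⟩), insert_erase hcB] at this
    have hC'sub : C' ⊆ (Icc (c + 2) t).powersetCard (k - 2) := by
      intro S hS
      obtain ⟨M, hM, rfl⟩ := mem_image.1 hS
      obtain ⟨hcM, hc1M, hMH⟩ := hP11mem M hM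
      rw [mem_powersetCard]
      constructor
      · intro z hz
        have h1 := (hHG M hMH).1 (mem_of_mem_erase (mem_of_mem_erase hz))
        have h2 : z ≠ c + 1 := ne_of_mem_erase hz
        have h3 : z ≠ c := ne_of_mem_erase (mem_of_mem_erase hz)
        rw [mem_Icc] at h1 ⊢
        omega
      · rw [card_erase_of_mem (mem_erase.2 ⟨by omega, hc1M⟩), card_erase_of_mem hcM,
          (hHG M hMH).2]
        omega
    calc P11.card = C'.card := hC'card.symm
      _ ≤ ((Icc (c + 2) t).powersetCard (k - 2)).card := card_le_card hC'sub
      _ = (n - 2).choose (k - 2) := by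
          rw [card_powersetCard, Nat.card_Icc, show t + 1 - (c + 2) = n - 2 from by omega]
  -- final arithmetic
  have hp := pascal (n - 2) (k - 2)
  rw [show n - 2 + 1 = n - 1 from by omega, show k - 2 + 1 = k - 1 from by omega] at hp
  have hmono : (n - k - 1).choose (k - 1) ≤ (n - 2).choose (k - 1) :=
    Nat.choose_le_choose _ (by omega)
  have hFH : F.card = H.card := by rw [hHcard, hGcard]
  omega



/-- Main Hilton–Milner theorem over ℕ with ground set `Icc c (c+n-1)`. -/
theorem mainHM (c n k : ℕ) (F : Finset (Finset ℕ)) (hk : 2 ≤ k) (hn : 2 * k ≤ n)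
    (hG : Gd c (c + n - 1) k F) (hcr : Cr F F) (hns : NonStar F) :
    F.card ≤ (n - 1).choose (k - 1) - (n - k - 1).choose (k - 1) + 1 := by
  classical
  set t := c + n - 1 with htdef
  rcases stab1 c t k (mu F) F rfl hG hcr hns with
    ⟨H, hHcard, hHG, hHcr, hHns, hHsh⟩ | ⟨G, i, j, hGcard, hGG, hGcr, hGns, hci, hij, hjt, hmeets⟩
  · -- fully shifted case: apply lemma Z
    -- H is nonempty since it is NonStar
    obtain ⟨A0, hA0, _⟩ := hHns 0
    -- B : members avoiding c ; A : links at c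
    set B := H.filter (fun A => c ∉ A) with hB
    set A := (H.filter (fun A => c ∈ A)).image (fun A => A.erase c) with hA
    have hBne : B.Nonempty := by
      obtain ⟨M, hM, hcM⟩ := hHns c
      exact ⟨M, mem_filter.2 ⟨hM, hcM⟩⟩
    have hBmem : ∀ T ∈ B, T ∈ H ∧ c ∉ T := fun T hT => ⟨(mem_filter.1 hT).1, (mem_filter.1 hT).2⟩
    -- shadow property : erasing any element of T ∈ B lands in A
    have hshad : ∀ T ∈ B, ∀ w ∈ T, T.erase w ∈ A := by
      intro T hT w hw
      obtain ⟨hTH, hcT⟩ := hBmem T hT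
      have hwc : c < w := by
        have h1 := (hHG T hTH).1 hw
        rw [mem_Icc] at h1
        have : w ≠ c := fun h => hcT (h ▸ hw)
        omega
      have hM' := hHsh T hTH c w (le_refl c) hwc hw hcT
      rw [hA, mem_image]
      refine ⟨insert c (T.erase w), mem_filter.2 ⟨hM', mem_insert_self _ _⟩, ?_⟩
      rw [erase_insert]
      intro hcc
      exact hcT (mem_of_mem_erase hcc)
    have hAne : A.Nonempty := by
      obtain ⟨T, hT⟩ := hBne
      obtain ⟨hTH, _⟩ := hBmem T hT
      have : T.Nonempty := by
        rw [← card_pos, (hHG T hTH).2]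
        omega
      obtain ⟨w, hw⟩ := this
      exact ⟨T.erase w, hshad T hT w hw⟩
    have hAG : Gd (c + 1) t (k - 1) A := by
      intro S hS
      obtain ⟨M, hM, rfl⟩ := mem_image.1 (hA ▸ hS)
      rw [mem_filter] at hM
      constructor
      · intro z hz
        have h1 := (hHG M hM.1).1 (mem_of_mem_erase hz)
        have h2 : z ≠ c := ne_of_mem_erase hz
        rw [mem_Icc] at h1 ⊢
        omega
      · rw [card_erase_of_mem hM.2, (hHG M hM.1).2]
    have hBG : Gd (c + 1) t k B := by
      intro T hT
      obtain ⟨hTH, hcT⟩ := hBmem T hT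
      refine ⟨fun z hz => ?_, (hHG T hTH).2⟩
      have h1 := (hHG T hTH).1 hz
      have h2 : z ≠ c := fun h => hcT (h ▸ hz)
      rw [mem_Icc] at h1 ⊢
      omega
    have hAsh : Sh (c + 1) A := by
      intro S hS i j hci hij hj hi
      obtain ⟨M, hM, rfl⟩ := mem_image.1 (hA ▸ hS)
      rw [mem_filter] at hM
      have hjM : j ∈ M := mem_of_mem_erase hj
      have hiM : i ∉ M := fun h => hi (mem_erase.2 ⟨by omega, h⟩)
      have hM' := hHsh M hM.1 i j (by omega) hij hjM hiM
      rw [hA, mem_image]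
      refine ⟨insert i (M.erase j), mem_filter.2 ⟨hM', ?_⟩, ?_⟩
      · refine mem_insert_of_mem (mem_erase.2 ⟨?_, hM.2⟩)
        have := ne_of_mem_erase hj
        omega
      · rw [erase_insert_of_ne (by omega), erase_right_comm]
    have hBsh : Sh (c + 1) B := by
      intro T hT i j hci hij hj hi
      obtain ⟨hTH, hcT⟩ := hBmem T hT
      have hT' := hHsh T hTH i j (by omega) hij hj hi
      rw [hB, mem_filter]
      refine ⟨hT', ?_⟩
      rw [mem_insert]
      push_neg
      exact ⟨by omega, fun h => hcT (mem_of_mem_erase h)⟩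
    have hABcr : Cr A B := by
      intro S hS T hT
      obtain ⟨M, hM, rfl⟩ := mem_image.1 (hA ▸ hS)
      rw [mem_filter] at hM
      obtain ⟨hTH, hcT⟩ := hBmem T hT
      obtain ⟨w, hw⟩ := hHcr M hM.1 T hTH
      rw [mem_inter] at hw
      have hwc : w ≠ c := fun h => hcT (h ▸ hw.2)
      exact ⟨w, mem_inter.2 ⟨mem_erase.2 ⟨hwc, hw.1⟩, hw.2⟩⟩
    -- cardinality split
    have hsplitH : (H.filter (fun A => c ∈ A)).card + B.card = H.card := by
      rw [hB]
      exact Finset.card_filter_add_card_filter_not _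
    have hAcard : A.card = (H.filter (fun A => c ∈ A)).card := by
      rw [hA]
      exact card_image_of_injOn (erase_injOn_star c _ (fun M hM => (mem_filter.1 hM).2))
    -- apply lemma Z
    have ht1 : (c + 1) + (n - 1) - 1 = t := by omega
    have hBG' : Gd (c + 1) ((c + 1) + (n - 1) - 1) ((k - 1) + 1) B := by
      rw [ht1, show k - 1 + 1 = k from by omega]
      exact hBG
    have hZ := lemZ (n - 1) (c + 1) (k - 1) A B (by omega) (by omega)
      (ht1 ▸ hAG) hBG' hAsh hBsh hABcr hAne hBne hshad
    rw [show n - 1 - (k - 1) - 1 = n - k - 1 from by omega] at hZ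
    omega
  · -- case B
    have := caseB c n k i j G hk hn (htdef ▸ hGG) hGcr hGns hci hij hjt
      (fun A hA => hmeets A hA)
    omega

/-- Hilton–Milner bound. -/
theorem stmt_1 (n k : ℕ) (hk : 2 ≤ k) (hn : 2 * k ≤ n)
    (F : Finset (Finset (Fin n)))
    (huniform : ∀ A ∈ F, A.card = k)
    (hint : ∀ A ∈ F, ∀ B ∈ F, (A ∩ B).Nonempty)
    (hnotEKR : ¬ ∃ x : Fin n, ∀ A ∈ F, x ∈ A) :
    F.card ≤ (n - 1).choose (k - 1) - (n - k - 1).choose (k - 1) + 1 := by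
  classical
  rcases F.eq_empty_or_nonempty with rfl | hFne
  · simp
  -- transfer to ℕ
  set Fn : Finset (Finset ℕ) := F.image (fun A => A.image (fun x : Fin n => (x : ℕ))) with hFn
  have hvalinj : Function.Injective (fun x : Fin n => (x : ℕ)) := Fin.val_injective
  have hinj : Function.Injective (fun A : Finset (Fin n) => A.image (fun x : Fin n => (x : ℕ))) :=
    Finset.image_injective hvalinj
  have hcard : Fn.card = F.card := card_image_of_injective F hinj
  have hG : Gd 0 (0 + n - 1) k Fn := by
    intro S hS
    obtain ⟨A, hA, rfl⟩ := mem_image.1 hS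
    constructor
    · intro z hz
      obtain ⟨x, _, rfl⟩ := mem_image.1 hz
      rw [mem_Icc]
      have := x.isLt
      omega
    · rw [card_image_of_injective A hvalinj, huniform A hA]
  have hcr : Cr Fn Fn := by
    intro S hS T hT
    obtain ⟨A, hA, rfl⟩ := mem_image.1 hS
    obtain ⟨B, hB, rfl⟩ := mem_image.1 hT
    rw [← Finset.image_inter _ _ hvalinj]
    exact (hint A hA B hB).image _
  have hns : NonStar Fn := by
    intro z
    push_neg at hnotEKR
    by_cases hz : z < n
    · obtain ⟨A, hA, hx⟩ := hnotEKR ⟨z, hz⟩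
      refine ⟨A.image (fun x : Fin n => (x : ℕ)), mem_image_of_mem _ hA, ?_⟩
      intro hmem
      obtain ⟨w, hw, hwz⟩ := mem_image.1 hmem
      apply hx
      have : w = ⟨z, hz⟩ := Fin.ext hwz
      exact this ▸ hw
    · obtain ⟨A, hA⟩ := hFne
      refine ⟨A.image (fun x : Fin n => (x : ℕ)), mem_image_of_mem _ hA, ?_⟩
      intro hmem
      obtain ⟨w, _, hwz⟩ := mem_image.1 hmem
      have := w.isLt
      omega
  have := mainHM 0 n k Fn hk hn hG hcr hns
  omega


end HM

/-- Hilton–Milner bound: an intersecting `k`-uniform family on `[n]` not contained in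
any full star has size at most `C(n-1,k-1) - C(n-k-1,k-1) + 1`. -/
theorem stmt_1 (n k : ℕ) (hk : 2 ≤ k) (hn : 2 * k ≤ n)
    (F : Finset (Finset (Fin n)))
    (huniform : ∀ A ∈ F, A.card = k)
    (hint : ∀ A ∈ F, ∀ B ∈ F, (A ∩ B).Nonempty)
    (hnotEKR : ¬ ∃ x : Fin n, ∀ A ∈ F, x ∈ A) :
    F.card ≤ (n - 1).choose (k - 1) - (n - k - 1).choose (k - 1) + 1 := by
  exact HM.stmt_1 n k hk hn F huniform hint hnotEKR
end

section
/- For integers k ≥ 3 and n ≥ 2k+1, the Hilton–Milner family HM(n,k) = {G ⊆ [n] : |G| = k, 1 ∈ G, G ∩ [2,k+1] ≠ ∅} ∪ {[2,k+1]} is intersecting, and |HM(n,k)| = C(n-1, k-1) - C(n-k-1, k-1) + 1. -/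
open Finset

/-- The Hilton–Milner family `HM(n,k)` on `[n] = Icc 1 n`. -/
def HMfam (n k : ℕ) : Finset (Finset ℕ) :=
  ((Finset.Icc 1 n).powersetCard k).filter
      (fun G => 1 ∈ G ∧ (G ∩ Finset.Icc 2 (k + 1)).Nonempty)
    ∪ {Finset.Icc 2 (k + 1)}

lemma cardA (n k : ℕ) (hk : 1 ≤ k) (hn : 1 ≤ n) :
    (((Finset.Icc 1 n).powersetCard k).filter (fun G => 1 ∈ G)).card
      = (n - 1).choose (k - 1) := by
  have key : (((Finset.Icc 1 n).powersetCard k).filter (fun G => 1 ∈ G)).card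
      = ((Finset.Icc 2 n).powersetCard (k - 1)).card := by
    apply Finset.card_bij (fun G _ => G.erase 1)
    · intro G hG
      simp only [Finset.mem_filter, Finset.mem_powersetCard] at hG
      obtain ⟨⟨hsub, hcard⟩, h1⟩ := hG
      rw [Finset.mem_powersetCard]
      refine ⟨?_, ?_⟩
      · intro x hx
        have hne := Finset.ne_of_mem_erase hx
        have hx' := hsub (Finset.mem_of_mem_erase hx)
        simp only [Finset.mem_Icc] at hx' ⊢
        omega
      · rw [Finset.card_erase_of_mem h1, hcard]
    · intro G hG G' hG' h
      simp only [Finset.mem_filter] at hG hG'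
      have := congrArg (insert 1) h
      rwa [Finset.insert_erase hG.2, Finset.insert_erase hG'.2] at this
    · intro S hS
      rw [Finset.mem_powersetCard] at hS
      obtain ⟨hsub, hcard⟩ := hS
      have h1S : 1 ∉ S := by
        intro h
        have := hsub h
        simp [Finset.mem_Icc] at this
      refine ⟨insert 1 S, ?_, ?_⟩
      · simp only [Finset.mem_filter, Finset.mem_powersetCard]
        refine ⟨⟨?_, ?_⟩, Finset.mem_insert_self _ _⟩
        · intro x hx
          rcases Finset.mem_insert.mp hx with h | h
          · subst h; simp [Finset.mem_Icc]; omega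
          · have := hsub h
            simp only [Finset.mem_Icc] at this ⊢
            omega
        · rw [Finset.card_insert_of_notMem h1S, hcard]; omega
      · exact Finset.erase_insert h1S
  rw [key, Finset.card_powersetCard, Nat.card_Icc]
  congr 1

lemma cardB (n k : ℕ) (hk : 1 ≤ k) (hn : 1 ≤ n) :
    (((Finset.Icc 1 n).powersetCard k).filter
        (fun G => 1 ∈ G ∧ G ∩ Finset.Icc 2 (k + 1) = ∅)).card
      = (n - k - 1).choose (k - 1) := by
  have key : (((Finset.Icc 1 n).powersetCard k).filter
        (fun G => 1 ∈ G ∧ G ∩ Finset.Icc 2 (k + 1) = ∅)).card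
      = ((Finset.Icc (k + 2) n).powersetCard (k - 1)).card := by
    apply Finset.card_bij (fun G _ => G.erase 1)
    · intro G hG
      simp only [Finset.mem_filter, Finset.mem_powersetCard] at hG
      obtain ⟨⟨hsub, hcard⟩, h1, hempty⟩ := hG
      rw [Finset.mem_powersetCard]
      refine ⟨?_, ?_⟩
      · intro x hx
        have hne := Finset.ne_of_mem_erase hx
        have hxG := Finset.mem_of_mem_erase hx
        have hx' := hsub hxG
        have hnot : x ∉ Finset.Icc 2 (k + 1) := by
          intro h
          have : x ∈ G ∩ Finset.Icc 2 (k + 1) := Finset.mem_inter.mpr ⟨hxG, h⟩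
          rw [hempty] at this
          exact absurd this (Finset.notMem_empty x)
        simp only [Finset.mem_Icc] at hx' hnot ⊢
        omega
      · rw [Finset.card_erase_of_mem h1, hcard]
    · intro G hG G' hG' h
      simp only [Finset.mem_filter] at hG hG'
      have := congrArg (insert 1) h
      rwa [Finset.insert_erase hG.2.1, Finset.insert_erase hG'.2.1] at this
    · intro S hS
      rw [Finset.mem_powersetCard] at hS
      obtain ⟨hsub, hcard⟩ := hS
      have h1S : 1 ∉ S := by
        intro h
        have := hsub h
        simp only [Finset.mem_Icc] at this
        omega
      refine ⟨insert 1 S, ?_, ?_⟩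
      · simp only [Finset.mem_filter, Finset.mem_powersetCard]
        refine ⟨⟨?_, ?_⟩, Finset.mem_insert_self _ _, ?_⟩
        · intro x hx
          rcases Finset.mem_insert.mp hx with h | h
          · subst h; simp [Finset.mem_Icc]; omega
          · have := hsub h
            simp only [Finset.mem_Icc] at this ⊢
            omega
        · rw [Finset.card_insert_of_notMem h1S, hcard]; omega
        · rw [Finset.eq_empty_iff_forall_notMem]
          intro x hx
          rw [Finset.mem_inter, Finset.mem_insert] at hx
          obtain ⟨h | h, hx2⟩ := hx
          · subst h; simp [Finset.mem_Icc] at hx2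
          · have := hsub h
            simp only [Finset.mem_Icc] at this hx2
            omega
      · exact Finset.erase_insert h1S
  rw [key, Finset.card_powersetCard, Nat.card_Icc]
  congr 1
  omega

/-- `HM(n,k)` is intersecting and has size `C(n-1,k-1) - C(n-k-1,k-1) + 1`. -/
theorem stmt_2 (n k : ℕ) (hk : 3 ≤ k) (hn : 2 * k + 1 ≤ n) :
    (∀ A ∈ HMfam n k, ∀ B ∈ HMfam n k, (A ∩ B).Nonempty) ∧
      (HMfam n k).card = (n - 1).choose (k - 1) - (n - k - 1).choose (k - 1) + 1 := by
  constructor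
  · intro A hA B hB
    rw [HMfam, Finset.mem_union, Finset.mem_singleton] at hA hB
    rcases hA with hA | hA <;> rcases hB with hB | hB
    · rw [Finset.mem_filter] at hA hB
      exact ⟨1, Finset.mem_inter.mpr ⟨hA.2.1, hB.2.1⟩⟩
    · rw [Finset.mem_filter] at hA
      rw [hB]
      exact hA.2.2
    · rw [Finset.mem_filter] at hB
      rw [hA, Finset.inter_comm]
      exact hB.2.2
    · rw [hA, hB, Finset.inter_self]
      exact ⟨2, by simp [Finset.mem_Icc]; omega⟩
  · rw [HMfam]
    have hdisj : Finset.Icc 2 (k + 1) ∉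
        ((Finset.Icc 1 n).powersetCard k).filter
          (fun G => 1 ∈ G ∧ (G ∩ Finset.Icc 2 (k + 1)).Nonempty) := by
      rw [Finset.mem_filter]
      rintro ⟨-, h1, -⟩
      simp [Finset.mem_Icc] at h1
    rw [Finset.union_comm, ← Finset.insert_eq,
      Finset.card_insert_of_notMem hdisj]
    congr 1
    have hsplit := Finset.card_filter_add_card_filter_not
      (s := ((Finset.Icc 1 n).powersetCard k).filter (fun G => 1 ∈ G))
      (p := fun G => (G ∩ Finset.Icc 2 (k + 1)).Nonempty)
    rw [Finset.filter_filter, Finset.filter_filter] at hsplit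
    have e1 : (((Finset.Icc 1 n).powersetCard k).filter
        (fun G => 1 ∈ G ∧ (G ∩ Finset.Icc 2 (k + 1)).Nonempty)).card
        + (((Finset.Icc 1 n).powersetCard k).filter
        (fun G => 1 ∈ G ∧ G ∩ Finset.Icc 2 (k + 1) = ∅)).card
        = (((Finset.Icc 1 n).powersetCard k).filter (fun G => 1 ∈ G)).card := by
      rw [← hsplit]
      congr 1
      congr 1
      apply Finset.filter_congr
      intro G _
      simp [Finset.not_nonempty_iff_eq_empty]
    rw [cardA n k (by omega) (by omega), cardB n k (by omega) (by omega)] at e1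
    omega
end

section
/- For integers k ≥ 3 and n ≥ 2k+1, let E ⊆ [n] be a (k-1)-set, x ∈ [n]\E, and J ⊆ [n]\(E ∪ {x}) a 3-set. Then the family J₃ = {G : |G|=k, E ⊆ G, G ∩ J ≠ ∅} ∪ {G : |G|=k, J ∪ {x} ⊆ G} ∪ {G : |G|=k, x ∈ G, G ∩ E ≠ ∅} satisfies |J₃| = C(n-1,k-1) - C(n-k-1,k-1) - C(n-k-2,k-2) - C(n-k-3,k-3) + 3. -/
/-- The family `J₃` with center `x`, kernel `E` and set of pages `J`. -/
def J3fam (n k : ℕ) (x : Fin n) (E J : Finset (Fin n)) : Finset (Finset (Fin n)) :=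
  (Finset.univ.powersetCard k).filter
    (fun G => (E ⊆ G ∧ (G ∩ J).Nonempty) ∨ (J ∪ {x} ⊆ G) ∨ (x ∈ G ∧ (G ∩ E).Nonempty))

open Finset in
lemma J3count_aux {n k : ℕ} (t u : Finset (Fin n)) (hd : Disjoint t u) (htk : t.card ≤ k) :
    ((Finset.univ.powersetCard k).filter (fun G => t ⊆ G ∧ Disjoint G u)).card
      = (n - t.card - u.card).choose (k - t.card) := by
  have hu : u ⊆ Finset.univ \ t := by
    intro y hy
    simp only [mem_sdiff, mem_univ, true_and]
    exact fun hyt => (Finset.disjoint_left.mp hd hyt hy)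
  have hcard : ((Finset.univ \ t) \ u).card = n - t.card - u.card := by
    rw [Finset.card_sdiff_of_subset hu, Finset.card_sdiff_of_subset (Finset.subset_univ t)]
    simp
  rw [← hcard, ← Finset.card_powersetCard]
  apply Finset.card_bij (fun G _ => G \ t)
  · intro G hG
    simp only [mem_filter, Finset.mem_powersetCard_univ] at hG
    obtain ⟨hGk, htG, hGu⟩ := hG
    rw [Finset.mem_powersetCard]
    constructor
    · intro y hy
      simp only [mem_sdiff, mem_univ, true_and] at hy ⊢
      exact ⟨hy.2, Finset.disjoint_left.mp hGu hy.1⟩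
    · rw [Finset.card_sdiff_of_subset htG, hGk]
  · intro G hG G' hG' h
    simp only [mem_filter] at hG hG'
    have : G \ t ∪ t = G' \ t ∪ t := by rw [h]
    rwa [Finset.sdiff_union_of_subset hG.2.1, Finset.sdiff_union_of_subset hG'.2.1] at this
  · intro S hS
    rw [Finset.mem_powersetCard] at hS
    obtain ⟨hSsub, hScard⟩ := hS
    have hSt : Disjoint S t := by
      apply Finset.disjoint_left.mpr
      intro y hy
      have := hSsub hy
      simp only [mem_sdiff] at this
      exact this.1.2
    refine ⟨S ∪ t, ?_, ?_⟩
    · simp only [mem_filter, Finset.mem_powersetCard_univ]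
      refine ⟨?_, Finset.subset_union_right, ?_⟩
      · rw [Finset.card_union_of_disjoint hSt, hScard]
        omega
      · apply Finset.disjoint_left.mpr
        intro y hy
        rcases Finset.mem_union.mp hy with h | h
        · have := hSsub h
          simp only [mem_sdiff] at this
          exact this.2
        · exact fun hyu => Finset.disjoint_left.mp hd h hyu
    · rw [Finset.union_sdiff_right, Finset.sdiff_eq_self_of_disjoint hSt]

open Finset in
/-- The size of `J₃`. -/
theorem stmt_3 (n k : ℕ) (hk : 3 ≤ k) (hn : 2 * k + 1 ≤ n)
    (x : Fin n) (E J : Finset (Fin n))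
    (hE : E.card = k - 1) (hxE : x ∉ E)
    (hJ : J.card = 3) (hJdisj : Disjoint J (insert x E)) :
    (J3fam n k x E J).card =
      (n - 1).choose (k - 1) - (n - k - 1).choose (k - 1)
        - (n - k - 2).choose (k - 2) - (n - k - 3).choose (k - 3) + 3 := by
  have hxJ : x ∉ J := fun h => Finset.disjoint_left.mp hJdisj h (Finset.mem_insert_self x E)
  have hJE : Disjoint J E := Finset.disjoint_of_subset_right (Finset.subset_insert x E) hJdisj
  have hJx4 : (J ∪ {x}).card = 4 := by
    rw [Finset.card_union_of_disjoint (Finset.disjoint_singleton_right.mpr hxJ), hJ,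
      Finset.card_singleton]
  have hJxE : Disjoint (J ∪ {x}) E := by
    rw [Finset.disjoint_union_left]
    exact ⟨hJE, Finset.disjoint_singleton_left.mpr hxE⟩
  have hxuE : (insert x E).card = k := by
    rw [Finset.card_insert_of_notMem hxE, hE]; omega
  -- rewrite the filter as a disjoint 3-fold union
  have hcongr : J3fam n k x E J = (Finset.univ.powersetCard k).filter
      (fun G => (E ⊆ G ∧ (G ∩ J).Nonempty) ∨ ((x ∈ G ∧ (G ∩ E).Nonempty) ∨
        (J ∪ {x} ⊆ G ∧ Disjoint G E))) := by
    rw [J3fam]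
    apply Finset.filter_congr
    intro G _
    constructor
    · rintro (h1 | h2 | h3)
      · exact Or.inl h1
      · by_cases hne : (G ∩ E).Nonempty
        · exact Or.inr (Or.inl ⟨h2 (Finset.mem_union_right _ (Finset.mem_singleton_self x)), hne⟩)
        · refine Or.inr (Or.inr ⟨h2, ?_⟩)
          rw [Finset.not_nonempty_iff_eq_empty] at hne
          exact Finset.disjoint_iff_inter_eq_empty.mpr hne
      · exact Or.inr (Or.inl h3)
    · rintro (h1 | h2 | h3)
      · exact Or.inl h1
      · exact Or.inr (Or.inr h2)
      · exact Or.inr (Or.inl h3.1)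
  rw [hcongr, Finset.filter_or, Finset.filter_or,
    Finset.card_union_of_disjoint, Finset.card_union_of_disjoint]
  · -- main computation
    -- piece 1: exactly 3 sets
    have c1 : ((Finset.univ.powersetCard k).filter
        (fun G => E ⊆ G ∧ (G ∩ J).Nonempty)).card = 3 := by
      rw [← hJ]
      symm
      apply Finset.card_bij (fun j _ => insert j E)
      · intro j hj
        have hjE : j ∉ E := fun h => Finset.disjoint_left.mp hJE hj h
        simp only [mem_filter, Finset.mem_powersetCard_univ]
        refine ⟨?_, Finset.subset_insert j E, ⟨j, ?_⟩⟩
        · rw [Finset.card_insert_of_notMem hjE, hE]; omega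
        · exact Finset.mem_inter.mpr ⟨Finset.mem_insert_self j E, hj⟩
      · intro j hj j' hj' h
        have hjE : j ∉ E := fun hh => Finset.disjoint_left.mp hJE hj hh
        have : j ∈ insert j' E := h ▸ Finset.mem_insert_self j E
        rcases Finset.mem_insert.mp this with h' | h'
        · exact h'
        · exact absurd h' hjE
      · intro G hG
        simp only [mem_filter, Finset.mem_powersetCard_univ] at hG
        obtain ⟨hGk, hEG, y, hy⟩ := hG
        rw [Finset.mem_inter] at hy
        refine ⟨y, hy.2, ?_⟩
        have hsub : insert y E ⊆ G := Finset.insert_subset hy.1 hEG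
        have hyE : y ∉ E := fun hh => Finset.disjoint_left.mp hJE hy.2 hh
        apply Finset.eq_of_subset_of_card_le hsub
        rw [hGk, Finset.card_insert_of_notMem hyE, hE]
        omega
    -- piece 3: x ∈ G and G meets E
    have csplit : ((Finset.univ.powersetCard k).filter (fun G => x ∈ G)).card
        = ((Finset.univ.powersetCard k).filter (fun G => x ∈ G ∧ (G ∩ E).Nonempty)).card
          + ((Finset.univ.powersetCard k).filter (fun G => {x} ⊆ G ∧ Disjoint G E)).card := by
      rw [← Finset.card_union_of_disjoint, ← Finset.filter_or]
      · apply congrArg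
        apply Finset.filter_congr
        intro G _
        simp only [Finset.singleton_subset_iff]
        constructor
        · intro hx
          by_cases hne : (G ∩ E).Nonempty
          · exact Or.inl ⟨hx, hne⟩
          · rw [Finset.not_nonempty_iff_eq_empty] at hne
            exact Or.inr ⟨hx, Finset.disjoint_iff_inter_eq_empty.mpr hne⟩
        · rintro (h | h) <;> exact h.1
      · rw [Finset.disjoint_filter]
        rintro G _ ⟨_, y, hy⟩ ⟨_, hd⟩
        rw [Finset.mem_inter] at hy
        exact Finset.disjoint_left.mp hd hy.1 hy.2
    have call : ((Finset.univ.powersetCard k).filter (fun G => x ∈ G)).card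
        = (n - 1).choose (k - 1) := by
      have := J3count_aux (n := n) (k := k) {x} ∅ (Finset.disjoint_empty_right _)
        (by rw [Finset.card_singleton]; omega)
      simp only [Finset.card_singleton, Finset.card_empty, Nat.sub_zero] at this
      rw [← this]
      apply congrArg
      apply Finset.filter_congr
      intro G _
      simp [Finset.singleton_subset_iff]
    have cxavoid : ((Finset.univ.powersetCard k).filter
        (fun G => {x} ⊆ G ∧ Disjoint G E)).card = (n - k).choose (k - 1) := by
      have := J3count_aux (n := n) (k := k) {x} E (Finset.disjoint_singleton_left.mpr hxE)
        (by rw [Finset.card_singleton]; omega)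
      simp only [Finset.card_singleton] at this
      rw [this, hE]
      congr 1
      omega
    -- piece 2: J ∪ {x} ⊆ G, G disjoint from E
    set bc := ((Finset.univ.powersetCard k).filter
        (fun G => J ∪ {x} ⊆ G ∧ Disjoint G E)).card with hbcdef
    have hle : (n - k).choose (k - 1) ≤ (n - 1).choose (k - 1) :=
      Nat.choose_le_choose (k - 1) (by omega)
    have hpascal : (n - k).choose (k - 1)
        = (n - k - 1).choose (k - 1) + (n - k - 2).choose (k - 2)
          + (n - k - 3).choose (k - 3) + bc := by
      rcases Nat.lt_or_ge k 4 with hk4 | hk4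
      · -- k = 3
        have hk3 : k = 3 := by omega
        have hbc0 : bc = 0 := by
          rw [hbcdef, Finset.card_eq_zero, Finset.filter_eq_empty_iff]
          rintro G hG ⟨hsub, _⟩
          rw [Finset.mem_powersetCard_univ] at hG
          have := Finset.card_le_card hsub
          omega
        subst hk3
        rw [hbc0]
        obtain ⟨a, ha⟩ : ∃ a, n - 5 = a := ⟨_, rfl⟩
        have h1 : n - 3 = a + 2 := by omega
        have h2 : n - 4 = a + 1 := by omega
        norm_num
        have e1 : n - 3 = a + 2 := by omega
        have e2 : n - 3 - 1 = a + 1 := by omega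
        have e3 : n - 3 - 2 = a := by omega
        rw [e2, e3, e1]
        simp [Nat.choose_succ_succ, Nat.choose_one_right]
        omega
      · -- k ≥ 4
        have hbcval : bc = (n - k - 3).choose (k - 4) := by
          rw [hbcdef, J3count_aux _ _ hJxE (by omega), hJx4, hE]
          congr 1
          omega
        rw [hbcval]
        obtain ⟨a, ha⟩ : ∃ a, n - k - 3 = a := ⟨_, rfl⟩
        obtain ⟨r, hr⟩ : ∃ r, k - 4 = r := ⟨_, rfl⟩
        have h1 : n - k = a + 3 := by omega
        have h2 : n - k - 1 = a + 2 := by omega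
        have h3 : n - k - 2 = a + 1 := by omega
        have h4 : k - 1 = r + 3 := by omega
        have h5 : k - 2 = r + 2 := by omega
        have h6 : k - 3 = r + 1 := by omega
        rw [ha, hr, h2, h3, h1, h4, h5, h6]
        simp [Nat.choose_succ_succ]
        omega
    rw [c1]
    omega
  · -- disjointness: piece 3 vs piece 2
    rw [Finset.disjoint_filter]
    rintro G _ ⟨_, y, hy⟩ ⟨_, hd⟩
    rw [Finset.mem_inter] at hy
    exact Finset.disjoint_left.mp hd hy.1 hy.2
  · -- disjointness: piece 1 vs pieces 2 ∪ 3
    rw [Finset.disjoint_union_right]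
    constructor
    · rw [Finset.disjoint_filter]
      rintro G hG ⟨hEG, y, hy⟩ ⟨hxG, _⟩
      rw [Finset.mem_powersetCard_univ] at hG
      rw [Finset.mem_inter] at hy
      -- x ∈ G, E ⊆ G forces G = insert x E, contradicting y ∈ G ∩ J
      have hsub : insert x E ⊆ G := Finset.insert_subset hxG hEG
      have hGeq : insert x E = G := Finset.eq_of_subset_of_card_le hsub (by omega)
      exact Finset.disjoint_left.mp hJdisj hy.2 (hGeq ▸ hy.1)
    · rw [Finset.disjoint_filter]
      rintro G hG ⟨hEG, y, hy⟩ ⟨hsub, _⟩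
      rw [Finset.mem_powersetCard_univ] at hG
      -- E ∪ (J ∪ {x}) ⊆ G is too big
      have hdisj : Disjoint E (J ∪ {x}) := hJxE.symm
      have hsub2 : E ∪ (J ∪ {x}) ⊆ G := Finset.union_subset hEG hsub
      have := Finset.card_le_card hsub2
      rw [Finset.card_union_of_disjoint hdisj, hJx4, hE] at this
      omega
end

section
/- Let n ≥ 2k+1 and let H be a k-uniform intersecting family on [n]. Suppose there is x ∈ [n] such that exactly two sets E₁, E₂ ∈ H miss x, with |E₁ ∩ E₂| = k - i for some i ≥ 2. Then |H| ≤ C(n-1,k-1) - 2·C(n-k-1,k-1) + C(n-k-i-1,k-1) + 2. -/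
open Finset

lemma count_fix {n : ℕ} (x : Fin n) (F : Finset (Fin n)) (hxF : x ∉ F) (k : ℕ) (hk : 1 ≤ k) :
    ((univ.powersetCard k).filter (fun A : Finset (Fin n) => x ∈ A ∧ Disjoint A F)).card
      = (n - 1 - F.card).choose (k - 1) := by
  have hcard : (univ \ insert x F : Finset (Fin n)).card = n - 1 - F.card := by
    rw [card_sdiff_of_subset (subset_univ _), card_insert_of_notMem hxF, card_univ, Fintype.card_fin]
    have h1 : F.card < n := by
      have := card_le_card (subset_univ (insert x F))
      simp only [card_univ, Fintype.card_fin, card_insert_of_notMem hxF] at this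
      omega
    omega
  rw [← hcard, ← card_powersetCard]
  refine card_bij' (fun A _ => A.erase x) (fun B _ => insert x B) ?hi ?hj ?li ?ri
  case hi =>
    intro A hA
    simp only [mem_filter, mem_powersetCard] at hA
    obtain ⟨⟨_, hAk⟩, hxA, hdisj⟩ := hA
    rw [mem_powersetCard]
    constructor
    · intro y hy
      rw [mem_erase] at hy
      simp only [mem_sdiff, mem_univ, true_and, mem_insert, not_or]
      exact ⟨hy.1, fun hyF => (disjoint_left.mp hdisj hy.2) hyF⟩
    · rw [card_erase_of_mem hxA, hAk]
  case hj =>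
    intro B hB
    rw [mem_powersetCard] at hB
    obtain ⟨hBsub, hBk⟩ := hB
    have hxB : x ∉ B := fun h => by simpa using hBsub h
    simp only [mem_filter, mem_powersetCard]
    refine ⟨⟨subset_univ _, ?_⟩, mem_insert_self _ _, ?_⟩
    · rw [card_insert_of_notMem hxB, hBk]; omega
    · rw [disjoint_left]
      intro a ha haF
      rcases mem_insert.mp ha with rfl | haB
      · exact hxF haF
      · have := hBsub haB
        simp only [mem_sdiff, mem_insert, not_or] at this
        exact this.2.2 haF
  case li =>
    intro A hA
    simp only [mem_filter] at hA
    exact insert_erase hA.2.1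
  case ri =>
    intro B hB
    rw [mem_powersetCard] at hB
    have hxB : x ∉ B := fun h => by simpa using hB.1 h
    exact erase_insert hxB



/-- If exactly two members `E₁, E₂` of an intersecting `k`-uniform family miss `x` and
`|E₁ ∩ E₂| = k - i` with `i ≥ 2`, then
`|H| ≤ C(n-1,k-1) - 2·C(n-k-1,k-1) + C(n-k-i-1,k-1) + 2`. -/
theorem stmt_5 (n k i : ℕ) (hn : 2 * k + 1 ≤ n) (hi : 2 ≤ i)
    (H : Finset (Finset (Fin n)))
    (huniform : ∀ A ∈ H, A.card = k)
    (hint : ∀ A ∈ H, ∀ B ∈ H, (A ∩ B).Nonempty)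
    (x : Fin n) (E₁ E₂ : Finset (Fin n)) (hne : E₁ ≠ E₂)
    (hmiss : H.filter (fun A => x ∉ A) = {E₁, E₂})
    (hcap : (E₁ ∩ E₂).card = k - i) :
    H.card ≤ (n - 1).choose (k - 1) - 2 * (n - k - 1).choose (k - 1)
      + (n - k - i - 1).choose (k - 1) + 2 := by
  classical
  have hE₁ : E₁ ∈ H.filter (fun A => x ∉ A) := by rw [hmiss]; simp
  have hE₂ : E₂ ∈ H.filter (fun A => x ∉ A) := by rw [hmiss]; simp
  rw [mem_filter] at hE₁ hE₂
  obtain ⟨hE₁H, hxE₁⟩ := hE₁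
  obtain ⟨hE₂H, hxE₂⟩ := hE₂
  -- k ≥ i + 1
  have hcapne : (E₁ ∩ E₂).Nonempty := hint E₁ hE₁H E₂ hE₂H
  have hik : i + 1 ≤ k := by
    have := card_pos.mpr hcapne
    omega
  have hk1 : 1 ≤ k := by omega
  have hcE₁ : E₁.card = k := huniform E₁ hE₁H
  have hcE₂ : E₂.card = k := huniform E₂ hE₂H
  have hcU : (E₁ ∪ E₂).card = k + i := by
    have := card_union_add_card_inter E₁ E₂
    rw [hcE₁, hcE₂, hcap] at this
    omega
  have hxU : x ∉ E₁ ∪ E₂ := by simp [hxE₁, hxE₂]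
  -- counting sets
  set S := (univ.powersetCard k).filter
      (fun A : Finset (Fin n) => x ∈ A ∧ ¬ Disjoint A E₁ ∧ ¬ Disjoint A E₂) with hS
  set B₁ := (univ.powersetCard k).filter
      (fun A : Finset (Fin n) => x ∈ A ∧ Disjoint A E₁) with hB₁
  set B₂ := (univ.powersetCard k).filter
      (fun A : Finset (Fin n) => x ∈ A ∧ Disjoint A E₂) with hB₂
  set S₀ := (univ.powersetCard k).filter
      (fun A : Finset (Fin n) => x ∈ A ∧ Disjoint A (∅ : Finset (Fin n))) with hS₀
  set B₁₂ := (univ.powersetCard k).filter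
      (fun A : Finset (Fin n) => x ∈ A ∧ Disjoint A (E₁ ∪ E₂)) with hB₁₂
  have hc1 : S₀.card = (n - 1).choose (k - 1) := by
    rw [hS₀, count_fix x ∅ (notMem_empty x) k hk1]
    simp
  have hc2a : B₁.card = (n - k - 1).choose (k - 1) := by
    rw [hB₁, count_fix x E₁ hxE₁ k hk1, hcE₁]
    congr 1; omega
  have hc2b : B₂.card = (n - k - 1).choose (k - 1) := by
    rw [hB₂, count_fix x E₂ hxE₂ k hk1, hcE₂]
    congr 1; omega
  have hc3 : B₁₂.card = (n - k - i - 1).choose (k - 1) := by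
    rw [hB₁₂, count_fix x (E₁ ∪ E₂) hxU k hk1, hcU]
    congr 1; omega
  -- B₁ ∩ B₂ = B₁₂
  have hBint : B₁ ∩ B₂ = B₁₂ := by
    ext A
    simp only [hB₁, hB₂, hB₁₂, mem_inter, mem_filter, disjoint_union_right]
    tauto
  -- S₀ splits as S plus (B₁ ∪ B₂)
  have hcov : S₀ = S ∪ (B₁ ∪ B₂) := by
    ext A
    simp only [hS₀, hS, hB₁, hB₂, mem_union, mem_filter, disjoint_empty_right, and_true]
    tauto
  have hdisj : Disjoint S (B₁ ∪ B₂) := by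
    rw [disjoint_left]
    intro A hA hA'
    simp only [hS, hB₁, hB₂, mem_union, mem_filter] at hA hA'
    tauto
  have hsplit : S₀.card = S.card + (B₁ ∪ B₂).card := by
    rw [hcov, card_union_of_disjoint hdisj]
  have hincl : (B₁ ∪ B₂).card + B₁₂.card = B₁.card + B₂.card := by
    rw [← hBint]; exact card_union_add_card_inter B₁ B₂
  -- H is contained in S together with {E₁, E₂}
  have hsub : H ⊆ S ∪ {E₁, E₂} := by
    intro A hA
    by_cases hx : x ∈ A
    · refine mem_union_left _ ?_
      simp only [hS, mem_filter, mem_powersetCard]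
      refine ⟨⟨subset_univ _, huniform A hA⟩, hx, ?_, ?_⟩
      · rw [not_disjoint_iff_nonempty_inter]; exact hint A hA E₁ hE₁H
      · rw [not_disjoint_iff_nonempty_inter]; exact hint A hA E₂ hE₂H
    · refine mem_union_right _ ?_
      rw [← hmiss, mem_filter]
      exact ⟨hA, hx⟩
  have hHle : H.card ≤ S.card + 2 := by
    calc H.card ≤ (S ∪ {E₁, E₂}).card := card_le_card hsub
    _ ≤ S.card + ({E₁, E₂} : Finset (Finset (Fin n))).card := card_union_le _ _
    _ ≤ S.card + 2 := by
        have h2 : ({E₁, E₂} : Finset (Finset (Fin n))).card ≤ 2 := by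
          apply (card_insert_le _ _).trans
          simp
        omega
  rw [hc1] at hsplit
  rw [hc2a, hc2b] at hincl
  rw [hc3] at hincl
  omega
end

section
/- Let k ≥ 4. For two k-sets E₁, E₂ ⊆ [n] with |E₁ ∩ E₂| = k-2 and x ∈ [n]\(E₁ ∪ E₂), the family K₂ = {G ∈ C([n],k) : x ∈ G, G ∩ E₁ ≠ ∅, G ∩ E₂ ≠ ∅} ∪ {E₁, E₂} is intersecting and |K₂| = C(n-1,k-1) - 2·C(n-k-1,k-1) + C(n-k-3,k-1) + 2. -/
open Finset

lemma aux1 {α : Type*} [DecidableEq α] (U : Finset α) (x : α) (hx : x ∈ U) (k : ℕ) :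
    ((U.powersetCard (k+1)).filter (fun G => x ∈ G)).card
      = (U.card - 1).choose k := by
  rw [← Finset.card_erase_of_mem hx, ← Finset.card_powersetCard]
  apply Finset.card_bij (fun G _ => G.erase x)
  · intro G hG
    simp only [mem_filter, Finset.mem_powersetCard] at hG
    simp only [Finset.mem_powersetCard]
    exact ⟨Finset.erase_subset_erase _ hG.1.1,
      by rw [Finset.card_erase_of_mem hG.2, hG.1.2]; rfl⟩
  · intro G hG H hH h
    simp only [mem_filter] at hG hH
    rw [← Finset.insert_erase hG.2, ← Finset.insert_erase hH.2, h]
  · intro T hT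
    simp only [Finset.mem_powersetCard] at hT
    have hxT : x ∉ T := fun h => (Finset.mem_erase.mp (hT.1 h)).1 rfl
    refine ⟨insert x T, ?_, by simp [hxT]⟩
    simp only [mem_filter, Finset.mem_powersetCard]
    exact ⟨⟨Finset.insert_subset hx (hT.1.trans (Finset.erase_subset _ _)),
      by rw [Finset.card_insert_of_notMem hxT, hT.2]⟩, Finset.mem_insert_self _ _⟩

lemma aux2 {n : ℕ} (S : Finset (Fin n)) (x : Fin n) (hx : x ∉ S) (k : ℕ) :
    ((Finset.univ.powersetCard (k+1)).filter (fun G => x ∈ G ∧ G ∩ S = ∅)).card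
      = (n - S.card - 1).choose k := by
  have heq : ((Finset.univ.powersetCard (k+1)).filter (fun G => x ∈ G ∧ G ∩ S = ∅))
      = ((Finset.univ \ S).powersetCard (k+1)).filter (fun G => x ∈ G) := by
    ext G
    simp only [mem_filter, Finset.mem_powersetCard, Finset.subset_sdiff,
      Finset.subset_univ, true_and, ← Finset.disjoint_iff_inter_eq_empty]
    tauto
  rw [heq, aux1 _ x (by simp [hx]), Finset.card_sdiff_of_subset (Finset.subset_univ S),
    Finset.card_univ, Fintype.card_fin]

/-- The family `K₂` with center `x` built from two `k`-sets `E₁, E₂`. -/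
def K2fam (n k : ℕ) (x : Fin n) (E₁ E₂ : Finset (Fin n)) : Finset (Finset (Fin n)) :=
  ((Finset.univ.powersetCard k).filter
      (fun G => x ∈ G ∧ (G ∩ E₁).Nonempty ∧ (G ∩ E₂).Nonempty))
    ∪ {E₁, E₂}

/-- `K₂` is intersecting, and `|K₂| = C(n-1,k-1) - 2·C(n-k-1,k-1) + C(n-k-3,k-1) + 2`,
stated additively to avoid truncated subtraction. -/
theorem stmt_6 (n k : ℕ) (hk : 4 ≤ k)
    (E₁ E₂ : Finset (Fin n)) (hE₁ : E₁.card = k) (hE₂ : E₂.card = k)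
    (hcap : (E₁ ∩ E₂).card = k - 2)
    (x : Fin n) (hx : x ∉ E₁ ∪ E₂) :
    (∀ A ∈ K2fam n k x E₁ E₂, ∀ B ∈ K2fam n k x E₁ E₂, (A ∩ B).Nonempty) ∧
      (K2fam n k x E₁ E₂).card + 2 * (n - k - 1).choose (k - 1) =
        (n - 1).choose (k - 1) + (n - k - 3).choose (k - 1) + 2 := by
  have hx1 : x ∉ E₁ := fun h => hx (Finset.mem_union_left _ h)
  have hx2 : x ∉ E₂ := fun h => hx (Finset.mem_union_right _ h)
  have hne : E₁ ≠ E₂ := by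
    intro h
    rw [h, Finset.inter_self, hE₂] at hcap
    omega
  have hE12 : (E₁ ∩ E₂).Nonempty := by
    rw [← Finset.card_pos, hcap]; omega
  set F := ((Finset.univ.powersetCard k).filter
      (fun G => x ∈ G ∧ (G ∩ E₁).Nonempty ∧ (G ∩ E₂).Nonempty)) with hF
  constructor
  · -- intersecting
    intro A hA B hB
    have memcase : ∀ G ∈ K2fam n k x E₁ E₂,
        (G ∈ F ∨ G = E₁ ∨ G = E₂) := by
      intro G hG
      rcases Finset.mem_union.mp hG with h | h
      · exact Or.inl h
      · simp only [Finset.mem_insert, Finset.mem_singleton] at h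
        exact Or.inr h
    have hAprop := memcase A hA
    have hBprop := memcase B hB
    have fmem : ∀ G ∈ F, x ∈ G ∧ (G ∩ E₁).Nonempty ∧ (G ∩ E₂).Nonempty := by
      intro G hG; exact (Finset.mem_filter.mp hG).2
    rcases hAprop with hA' | rfl | rfl <;> rcases hBprop with hB' | rfl | rfl
    · exact ⟨x, Finset.mem_inter.mpr ⟨(fmem A hA').1, (fmem B hB').1⟩⟩
    · exact (fmem A hA').2.1
    · exact (fmem A hA').2.2
    · obtain ⟨y, hy⟩ := (fmem B hB').2.1
      exact ⟨y, by rw [Finset.inter_comm]; exact hy⟩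
    · rw [Finset.inter_self, ← Finset.card_pos, hE₁]; omega
    · exact hE12
    · obtain ⟨y, hy⟩ := (fmem B hB').2.2
      exact ⟨y, by rw [Finset.inter_comm]; exact hy⟩
    · rw [Finset.inter_comm]; exact hE12
    · rw [Finset.inter_self, ← Finset.card_pos, hE₂]; omega
  · -- cardinality
    have hEcard : ({E₁, E₂} : Finset (Finset (Fin n))).card = 2 := by
      rw [Finset.card_insert_of_notMem (by simpa using hne), Finset.card_singleton]
    have hdisj : Disjoint F ({E₁, E₂} : Finset (Finset (Fin n))) := by
      rw [Finset.disjoint_right]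
      intro G hG hGF
      have := (Finset.mem_filter.mp hGF).2.1
      simp only [Finset.mem_insert, Finset.mem_singleton] at hG
      rcases hG with rfl | rfl
      · exact hx1 this
      · exact hx2 this
    have hK2card : (K2fam n k x E₁ E₂).card = F.card + 2 := by
      rw [K2fam, ← hF, Finset.card_union_of_disjoint hdisj, hEcard]
    obtain ⟨m, rfl⟩ : ∃ m, k = m + 1 := ⟨k - 1, by omega⟩
    have hm : m + 1 - 1 = m := rfl
    set W := (Finset.univ.powersetCard (m+1) : Finset (Finset (Fin n))) with hW
    set A := W.filter (fun G => x ∈ G) with hA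
    set B₁ := W.filter (fun G => x ∈ G ∧ G ∩ E₁ = ∅) with hB₁
    set B₂ := W.filter (fun G => x ∈ G ∧ G ∩ E₂ = ∅) with hB₂
    set B₀ := W.filter (fun G => x ∈ G ∧ G ∩ (E₁ ∪ E₂) = ∅) with hB₀
    -- inclusion-exclusion equations
    have e1 : F.card + (B₁ ∪ B₂).card = A.card := by
      rw [← Finset.card_union_of_disjoint]
      · congr 1
        ext G
        simp only [hF, hB₁, hB₂, hA, Finset.mem_union, Finset.mem_filter,
          Finset.nonempty_iff_ne_empty]
        tauto
      · rw [Finset.disjoint_left]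
        intro G hG hG'
        simp only [hF, hB₁, hB₂, Finset.mem_union, Finset.mem_filter,
          Finset.nonempty_iff_ne_empty] at hG hG'
        tauto
    have hBint : B₁ ∩ B₂ = B₀ := by
      ext G
      simp only [hB₁, hB₂, hB₀, Finset.mem_inter, Finset.mem_filter,
        Finset.inter_union_distrib_left, Finset.union_eq_empty]
      tauto
    have e2 : (B₁ ∪ B₂).card + B₀.card = B₁.card + B₂.card := by
      rw [← hBint]
      exact Finset.card_union_add_card_inter B₁ B₂
    have cA : A.card = (n - 1).choose m := by
      have := aux2 (∅ : Finset (Fin n)) x (by simp) m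
      simpa using this
    have cB₁ : B₁.card = (n - (m+1) - 1).choose m := by
      have := aux2 E₁ x hx1 m
      rw [hE₁] at this
      exact this
    have cB₂ : B₂.card = (n - (m+1) - 1).choose m := by
      have := aux2 E₂ x hx2 m
      rw [hE₂] at this
      exact this
    have hunion : (E₁ ∪ E₂).card = m + 3 := by
      have := Finset.card_union_add_card_inter E₁ E₂
      rw [hE₁, hE₂, hcap] at this
      omega
    have cB₀ : B₀.card = (n - (m+1) - 3).choose m := by
      have := aux2 (E₁ ∪ E₂) x hx m
      rw [hunion] at this
      rw [show n - (m+1) - 3 = n - (m+3) - 1 by omega]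
      exact this
    rw [hK2card, hm]
    omega
end

section
/- Let k ≥ 4. If 2k+1 ≤ n ≤ 3k-3 then C(n-1,k-1) - 2·C(n-k-1,k-1) + C(n-k-3,k-1) + 2 ≥ C(n-1,k-1) - C(n-k-1,k-1) - C(n-k-2,k-2) - C(n-k-3,k-3) + 3, with equality only when k = 4; and if n ≥ 3k-2 then the first quantity is strictly less than the second. -/
lemma key_id (j c : ℕ) : (j+1+c).choose (j+1) * (j+1) = (j+1+c).choose j * (c+1) := by
  have h := Nat.choose_succ_right_eq (j+1+c) j
  rwa [show j+1+c - j = c+1 by omega] at h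

lemma aux1_s7 (j c : ℕ) (hc : c + 1 ≤ j) :
    (j+1+c).choose (j+1) + 1 ≤ (j+1+c).choose j := by
  have h := key_id j c
  have hpos : 0 < (j+1+c).choose j := Nat.choose_pos (by omega)
  nlinarith

lemma aux2_s7 (j c : ℕ) (hj : 2 ≤ j) (hc : c + 1 ≤ j) :
    (j+1+c).choose (j+1) + 2 ≤ (j+1+c).choose j := by
  have h := key_id j c
  have hD : j + 1 ≤ (j+1+c).choose j := by
    have h' := Nat.choose_le_choose (a := j+1) (b := j+1+c) j (by omega)
    rwa [Nat.choose_succ_self_right] at h'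
  rcases Nat.lt_or_ge (c+1) j with hlt | hge
  · nlinarith
  · -- c + 1 = j, m = 2j
    have hcj : c + 1 = j := le_antisymm hc hge
    have h2 : 2 * (j+2).choose 2 = (j+2) * (j+1) := by
      have t := Nat.add_one_mul_choose_eq (j+1) 1
      simp only [Nat.succ_eq_add_one, Nat.choose_one_right] at t
      rw [show j+2 = j+1+1 by omega]
      linarith
    have hsym : (j+2).choose j = (j+2).choose 2 := by
      have := Nat.choose_symm (n := j+2) (k := 2) (by omega)
      rwa [show j+2-2 = j by omega] at this
    have hD2 : (j+2).choose j ≤ (j+1+c).choose j :=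
      Nat.choose_le_choose j (by omega)
    nlinarith

lemma aux3 (j c : ℕ) : (2*j+1+c).choose j ≤ (2*j+1+c).choose (j+1) := by
  have h := Nat.choose_succ_right_eq (2*j+1+c) j
  rw [show 2*j+1+c - j = j+1+c by omega] at h
  nlinarith [Nat.zero_le ((2*j+1+c).choose j), Nat.zero_le ((2*j+1+c).choose (j+1))]

/-- Comparison of `|K₂|` and `|J₃|`: for `2k+1 ≤ n ≤ 3k-3` we have `|K₂| ≥ |J₃|`, with
equality only for `k = 4`; for `n ≥ 3k-2` we have `|K₂| < |J₃|`. -/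
theorem stmt_7 (n k : ℕ) (hk : 4 ≤ k) :
    (2 * k + 1 ≤ n → n ≤ 3 * k - 3 →
      (((n - 1).choose (k - 1) : ℤ) - 2 * (n - k - 1).choose (k - 1)
          + (n - k - 3).choose (k - 1) + 2 ≥
        ((n - 1).choose (k - 1) : ℤ) - (n - k - 1).choose (k - 1)
          - (n - k - 2).choose (k - 2) - (n - k - 3).choose (k - 3) + 3) ∧
      ((((n - 1).choose (k - 1) : ℤ) - 2 * (n - k - 1).choose (k - 1)
          + (n - k - 3).choose (k - 1) + 2 =
        ((n - 1).choose (k - 1) : ℤ) - (n - k - 1).choose (k - 1)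
          - (n - k - 2).choose (k - 2) - (n - k - 3).choose (k - 3) + 3) → k = 4)) ∧
    (3 * k - 2 ≤ n →
      ((n - 1).choose (k - 1) : ℤ) - 2 * (n - k - 1).choose (k - 1)
          + (n - k - 3).choose (k - 1) + 2 <
        ((n - 1).choose (k - 1) : ℤ) - (n - k - 1).choose (k - 1)
          - (n - k - 2).choose (k - 2) - (n - k - 3).choose (k - 3) + 3) := by
  obtain ⟨a, rfl⟩ : ∃ a, k = a + 4 := ⟨k - 4, by omega⟩
  constructor
  · intro h1 h2
    obtain ⟨c, rfl⟩ : ∃ c, n = 2*a+9+c := ⟨n - (2*a+9), by omega⟩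
    have hca : c ≤ a := by omega
    rw [show 2*a+9+c-(a+4)-1 = a+4+c by omega, show 2*a+9+c-(a+4)-2 = a+3+c by omega,
        show 2*a+9+c-(a+4)-3 = a+2+c by omega, show 2*a+9+c-1 = 2*a+8+c by omega,
        show a+4-1 = a+3 by omega, show a+4-2 = a+2 by omega, show a+4-3 = a+1 by omega]
    have pas1 : (a+4+c).choose (a+3) = (a+3+c).choose (a+2) + (a+3+c).choose (a+3) := by
      rw [show a+4+c = a+3+c+1 by omega, show a+3 = a+2+1 by omega]
      exact Nat.choose_succ_succ _ _
    have pas2 : (a+3+c).choose (a+3) = (a+2+c).choose (a+2) + (a+2+c).choose (a+3) := by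
      rw [show a+3+c = a+2+c+1 by omega, show a+3 = a+2+1 by omega]
      exact Nat.choose_succ_succ _ _
    have k1 := aux1_s7 (a+1) c (by omega)
    simp only [show a+1+1 = a+2 from by omega] at k1
    have pas1' : ((a+4+c).choose (a+3) : ℤ)
        = (a+3+c).choose (a+2) + (a+3+c).choose (a+3) := by exact_mod_cast pas1
    have pas2' : ((a+3+c).choose (a+3) : ℤ)
        = (a+2+c).choose (a+2) + (a+2+c).choose (a+3) := by exact_mod_cast pas2
    have k1' : ((a+2+c).choose (a+2) : ℤ) + 1 ≤ (a+2+c).choose (a+1) := by exact_mod_cast k1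
    refine ⟨by linarith, fun heq => ?_⟩
    by_contra hne
    have ha : 1 ≤ a := by omega
    have k2 := aux2_s7 (a+1) c (by omega) (by omega)
    simp only [show a+1+1 = a+2 from by omega] at k2
    have k2' : ((a+2+c).choose (a+2) : ℤ) + 2 ≤ (a+2+c).choose (a+1) := by exact_mod_cast k2
    linarith
  · intro h3
    obtain ⟨c, rfl⟩ : ∃ c, n = 3*a+10+c := ⟨n - (3*a+10), by omega⟩
    rw [show 3*a+10+c-(a+4)-1 = 2*a+5+c by omega, show 3*a+10+c-(a+4)-2 = 2*a+4+c by omega,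
        show 3*a+10+c-(a+4)-3 = 2*a+3+c by omega, show 3*a+10+c-1 = 3*a+9+c by omega,
        show a+4-1 = a+3 by omega, show a+4-2 = a+2 by omega, show a+4-3 = a+1 by omega]
    have pas1 : (2*a+5+c).choose (a+3) = (2*a+4+c).choose (a+2) + (2*a+4+c).choose (a+3) := by
      rw [show 2*a+5+c = 2*a+4+c+1 by omega, show a+3 = a+2+1 by omega]
      exact Nat.choose_succ_succ _ _
    have pas2 : (2*a+4+c).choose (a+3) = (2*a+3+c).choose (a+2) + (2*a+3+c).choose (a+3) := by
      rw [show 2*a+4+c = 2*a+3+c+1 by omega, show a+3 = a+2+1 by omega]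
      exact Nat.choose_succ_succ _ _
    have k3 := aux3 (a+1) c
    simp only [show 2*(a+1)+1+c = 2*a+3+c from by omega, show a+1+1 = a+2 from by omega] at k3
    have pas1' : ((2*a+5+c).choose (a+3) : ℤ)
        = (2*a+4+c).choose (a+2) + (2*a+4+c).choose (a+3) := by exact_mod_cast pas1
    have pas2' : ((2*a+4+c).choose (a+3) : ℤ)
        = (2*a+3+c).choose (a+2) + (2*a+3+c).choose (a+3) := by exact_mod_cast pas2
    have k3' : ((2*a+3+c).choose (a+1) : ℤ) ≤ (2*a+3+c).choose (a+2) := by exact_mod_cast k3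
    linarith
end

section
/- Let F ⊆ G₂ be a 4-uniform family on [n] (n ≥ 7) with core A (|A| = 3). If the number of sets of F containing two fixed elements x₁, x₂ exceeds 2n - 7, then {x₁, x₂} ⊆ A. -/
/-- The 4-uniform family `G₂` on `[n]` with center `x` and 2-set `E` (core `{x} ∪ E`). -/
def G2fam (n : ℕ) (x : Fin n) (E : Finset (Fin n)) : Finset (Finset (Fin n)) :=
  (Finset.univ.powersetCard 4).filter
    (fun G => E ⊆ G ∨ (x ∈ G ∧ (G ∩ E).Nonempty))

open Finset in
lemma aux_9 (n : ℕ) (hn : 7 ≤ n)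
    (x : Fin n) (E : Finset (Fin n)) (hE : E.card = 2) (hxE : x ∉ E)
    (F : Finset (Finset (Fin n))) (hF : F ⊆ G2fam n x E)
    (x₁ x₂ : Fin n) (hne : x₁ ≠ x₂) (h1 : x₁ ∉ insert x E) :
    (F.filter (fun G => x₁ ∈ G ∧ x₂ ∈ G)).card ≤ 2 * n - 7 := by
  have hx1x : x₁ ≠ x := fun h => h1 (by simp [h])
  have hx1E : x₁ ∉ E := fun h => h1 (by simp [h])
  set U : Finset (Fin n) := Finset.univ \ {x₁, x₂} with hU
  set D : Finset (Fin n) := if x₂ ∈ E then insert x (E.erase x₂) else E with hD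
  have hx1D : x₁ ∉ D := by
    rw [hD]; split <;> simp_all [Finset.mem_insert, Finset.mem_erase]
  have hx2D : x₂ ∉ D := by
    rw [hD]; split
    · rename_i h
      intro hmem
      rcases Finset.mem_insert.mp hmem with h' | h'
      · exact hxE (h' ▸ h)
      · exact (Finset.mem_erase.mp h').1 rfl
    · assumption
  have hDU : D ⊆ U := by
    intro a ha
    simp only [hU, Finset.mem_sdiff, Finset.mem_univ, true_and, Finset.mem_insert,
      Finset.mem_singleton]
    push_neg
    exact ⟨fun h => hx1D (h ▸ ha), fun h => hx2D (h ▸ ha)⟩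
  have hDcard : D.card = 2 := by
    rw [hD]; split
    · rename_i h
      rw [Finset.card_insert_of_notMem (by simp [Finset.mem_erase]; intro _; exact hxE),
        Finset.card_erase_of_mem h, hE]
    · exact hE
  have hUcard : U.card = n - 2 := by
    rw [hU, Finset.card_sdiff_of_subset (by simp)]
    simp [Finset.card_insert_of_notMem, hne, Finset.card_univ]
  have hUDcard : (U \ D).card = n - 4 := by
    rw [Finset.card_sdiff_of_subset hDU, hUcard, hDcard]
    omega
  set T := (U.powersetCard 2).filter (fun P => (P ∩ D).Nonempty) with hT
  -- card of T
  have hcompl : (U.powersetCard 2).filter (fun P => ¬(P ∩ D).Nonempty)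
      = (U \ D).powersetCard 2 := by
    ext P
    simp only [Finset.mem_filter, Finset.mem_powersetCard, Finset.subset_sdiff,
      Finset.not_nonempty_iff_eq_empty, ← Finset.disjoint_iff_inter_eq_empty]
    tauto
  have hsum := Finset.card_filter_add_card_filter_not
    (s := U.powersetCard 2) (p := fun P => (P ∩ D).Nonempty)
  rw [hcompl, ← hT] at hsum
  have hTcard : T.card = (n-2).choose 2 - (n-4).choose 2 := by
    rw [Finset.card_powersetCard, Finset.card_powersetCard, hUcard, hUDcard] at hsum
    omega
  have hTbound : T.card ≤ 2 * n - 7 := by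
    obtain ⟨m, rfl⟩ : ∃ m, n = m + 7 := ⟨n - 7, by omega⟩
    rw [hTcard]
    have : m + 7 - 2 = m + 5 := by omega
    rw [this]
    have : m + 7 - 4 = m + 3 := by omega
    rw [this]
    have h5 : (m+5).choose 2 = (m+4) + ((m+3) + (m+3).choose 2) := by
      rw [Nat.choose_succ_succ (m+4) 1, Nat.choose_succ_succ (m+3) 1]
      simp [Nat.choose_one_right]
    omega
  refine le_trans ?_ hTbound
  apply Finset.card_le_card_of_injOn (fun G => G \ {x₁, x₂})
  · -- maps to T
    intro G hG
    simp only [Finset.mem_coe, Finset.mem_filter] at hG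
    obtain ⟨hGF, hx1G, hx2G⟩ := hG
    have hG2 := hF hGF
    simp only [G2fam, Finset.mem_filter, Finset.mem_powersetCard] at hG2
    obtain ⟨⟨_, hG4⟩, hcond⟩ := hG2
    have hsub : ({x₁, x₂} : Finset (Fin n)) ⊆ G := by
      intro a ha; rcases Finset.mem_insert.mp ha with h | h
      · exact h ▸ hx1G
      · exact (Finset.mem_singleton.mp h) ▸ hx2G
    have hpair : ∀ a : Fin n, a ≠ x₁ → a ≠ x₂ → a ∉ ({x₁, x₂} : Finset (Fin n)) := by
      intro a ha1 ha2
      simp [ha1, ha2]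
    rw [hT, Finset.mem_coe, Finset.mem_filter, Finset.mem_powersetCard]
    refine ⟨⟨?_, ?_⟩, ?_⟩
    · rw [hU]
      exact Finset.sdiff_subset_sdiff (Finset.subset_univ G) le_rfl
    · rw [Finset.card_sdiff_of_subset hsub, hG4]
      rw [Finset.card_insert_of_notMem (by simp [hne]), Finset.card_singleton]
    · -- (G \ {x₁,x₂} ∩ D).Nonempty
      by_cases hx2E : x₂ ∈ E
      · have hDval : D = insert x (E.erase x₂) := by rw [hD, if_pos hx2E]
        rcases hcond with hEG | ⟨hxG, _⟩
        · obtain ⟨e, he⟩ : (E.erase x₂).Nonempty := by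
            rw [← Finset.card_pos, Finset.card_erase_of_mem hx2E, hE]; norm_num
          have heE := (Finset.mem_erase.mp he).2
          have hex2 := (Finset.mem_erase.mp he).1
          refine ⟨e, Finset.mem_inter.mpr ⟨Finset.mem_sdiff.mpr ⟨hEG heE, hpair e (fun h => hx1E (h ▸ heE)) hex2⟩, ?_⟩⟩
          rw [hDval]
          exact Finset.mem_insert_of_mem he
        · refine ⟨x, Finset.mem_inter.mpr ⟨Finset.mem_sdiff.mpr ⟨hxG, hpair x (fun h => hx1x h.symm) (fun h => hxE (h ▸ hx2E))⟩, ?_⟩⟩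
          rw [hDval]
          exact Finset.mem_insert_self _ _
      · have hDval : D = E := by rw [hD, if_neg hx2E]
        have key : ∀ e ∈ G ∩ E, e ∈ G \ {x₁, x₂} ∩ D := by
          intro e he
          obtain ⟨heG, heE⟩ := Finset.mem_inter.mp he
          exact Finset.mem_inter.mpr ⟨Finset.mem_sdiff.mpr ⟨heG,
            hpair e (fun h => hx1E (h ▸ heE)) (fun h => hx2E (h ▸ heE))⟩, hDval ▸ heE⟩
        rcases hcond with hEG | ⟨_, hne'⟩
        · obtain ⟨e, heE⟩ : E.Nonempty := by rw [← Finset.card_pos, hE]; norm_num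
          exact ⟨e, key e (Finset.mem_inter.mpr ⟨hEG heE, heE⟩)⟩
        · obtain ⟨e, he⟩ := hne'
          exact ⟨e, key e he⟩
  · -- injective
    intro G hG G' hG' hEq
    simp only [Finset.coe_filter, Set.mem_setOf_eq] at hG hG'
    have hsub : ({x₁, x₂} : Finset (Fin n)) ⊆ G := by
      intro a ha; rcases Finset.mem_insert.mp ha with h | h
      · exact h ▸ hG.2.1
      · exact (Finset.mem_singleton.mp h) ▸ hG.2.2
    have hsub' : ({x₁, x₂} : Finset (Fin n)) ⊆ G' := by
      intro a ha; rcases Finset.mem_insert.mp ha with h | h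
      · exact h ▸ hG'.2.1
      · exact (Finset.mem_singleton.mp h) ▸ hG'.2.2
    have := congrArg (fun s => s ∪ ({x₁, x₂} : Finset (Fin n))) hEq
    simpa [Finset.sdiff_union_of_subset hsub, Finset.sdiff_union_of_subset hsub'] using this


/-- If `F ⊆ G₂` and more than `2n - 7` members of `F` contain both `x₁` and `x₂`,
then `{x₁, x₂}` lies in the core `A = {x} ∪ E`. -/
theorem stmt_9 (n : ℕ) (hn : 7 ≤ n)
    (x : Fin n) (E : Finset (Fin n)) (hE : E.card = 2) (hxE : x ∉ E)
    (F : Finset (Finset (Fin n))) (hF : F ⊆ G2fam n x E)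
    (x₁ x₂ : Fin n) (hne : x₁ ≠ x₂)
    (hd : 2 * n - 7 < (F.filter (fun G => x₁ ∈ G ∧ x₂ ∈ G)).card) :
    x₁ ∈ insert x E ∧ x₂ ∈ insert x E := by
  constructor
  · by_contra h1
    exact absurd (aux_9 n hn x E hE hxE F hF x₁ x₂ hne h1) (by omega)
  · by_contra h2
    have := aux_9 n hn x E hE hxE F hF x₂ x₁ hne.symm h2
    rw [Finset.filter_congr (fun G _ => by rw [and_comm])] at this
    exact absurd this (by omega)
end

section
/- Let F ⊆ G₃ be a 4-uniform family on [n] with center x and core E (|E| = 3). (i) If the number of sets in F containing both x₁ and x₂ is at least 3n - 12, then x ∈ {x₁, x₂}. (ii) If this number exceeds 3n - 12, then moreover {x₁, x₂} ⊆ {x} ∪ E. -/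
open Finset


/-- The 4-uniform family `G₃` on `[n]` with center `x` and core `E` (a 3-set). -/
def G3fam (n : ℕ) (x : Fin n) (E : Finset (Fin n)) : Finset (Finset (Fin n)) :=
  (Finset.univ.powersetCard 4).filter
    (fun G => E ⊆ G ∨ (x ∈ G ∧ (G ∩ E).Nonempty))

lemma mem_G3fam {n : ℕ} {x : Fin n} {E : Finset (Fin n)} {G : Finset (Fin n)} :
    G ∈ G3fam n x E ↔ G.card = 4 ∧ (E ⊆ G ∨ (x ∈ G ∧ (G ∩ E).Nonempty)) := by
  simp [G3fam, Finset.mem_powersetCard]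

lemma choose2_succ (k : ℕ) : (k+1).choose 2 = k.choose 2 + k := by
  rw [Nat.choose_succ_succ, Nat.choose_one_right]
  exact Nat.add_comm k _

lemma count_pairs {α : Type*} [DecidableEq α] (S U : Finset α) :
    ((S.powersetCard 2).filter (fun P => (P ∩ U).Nonempty)).card
      + ((S \ U).card).choose 2 = (S.card).choose 2 := by
  have h : (S.powersetCard 2).filter (fun P => ¬ (P ∩ U).Nonempty)
      = (S \ U).powersetCard 2 := by
    ext P
    simp only [Finset.mem_filter, Finset.mem_powersetCard, Finset.not_nonempty_iff_eq_empty,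
      ← Finset.disjoint_iff_inter_eq_empty, Finset.subset_sdiff]
    tauto
  have h2 := Finset.card_filter_add_card_filter_not
    (s := S.powersetCard 2) (p := fun P => (P ∩ U).Nonempty)
  rw [h, Finset.card_powersetCard, Finset.card_powersetCard] at h2
  exact h2

lemma card_le_pairs {n : ℕ} (a b : Fin n) (hab : a ≠ b)
    (A B : Finset (Finset (Fin n)))
    (hmem : ∀ G ∈ A, a ∈ G ∧ b ∈ G)
    (hmap : ∀ G ∈ A, G \ {a, b} ∈ B) : A.card ≤ B.card := by
  apply Finset.card_le_card_of_injOn (fun G => G \ {a, b}) (by intro G hG; exact hmap G hG)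
  intro G hG G' hG' h
  have h1 := hmem G hG
  have h2 := hmem G' hG'
  have s1 : ({a, b} : Finset (Fin n)) ⊆ G := by
    intro y hy; simp only [mem_insert, mem_singleton] at hy
    rcases hy with rfl | rfl
    · exact h1.1
    · exact h1.2
  have s2 : ({a, b} : Finset (Fin n)) ⊆ G' := by
    intro y hy; simp only [mem_insert, mem_singleton] at hy
    rcases hy with rfl | rfl
    · exact h2.1
    · exact h2.2
  calc G = G \ {a,b} ∪ {a,b} := (Finset.sdiff_union_of_subset s1).symm
    _ = G' \ {a,b} ∪ {a,b} := by simp only at h; rw [h]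
    _ = G' := Finset.sdiff_union_of_subset s2

lemma bound_b {n : ℕ} (hn : 6 ≤ n) (x : Fin n) (E : Finset (Fin n))
    (hE : E.card = 3) (hxE : x ∉ E) (y : Fin n) (hyx : y ≠ x) (hyE : y ∉ E) :
    ((G3fam n x E).filter (fun G => x ∈ G ∧ y ∈ G)).card ≤ 3 * n - 12 := by
  have hxy : x ≠ y := fun h => hyx h.symm
  set S : Finset (Fin n) := univ \ {x, y} with hSdef
  have hScard : S.card = n - 2 := by
    rw [hSdef, card_sdiff_of_subset (subset_univ _), card_univ, Fintype.card_fin, card_pair hxy]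
  have hES : E ⊆ S := by
    intro e he
    simp only [hSdef, mem_sdiff, mem_univ, true_and, mem_insert, mem_singleton]
    push_neg
    constructor <;> rintro rfl
    · exact hxE he
    · exact hyE he
  have hSE : (S \ E).card = n - 5 := by
    rw [card_sdiff_of_subset hES, hScard, hE]; omega
  set B := (S.powersetCard 2).filter (fun P => (P ∩ E).Nonempty) with hBdef
  have hcount := count_pairs S E
  have hle : ((G3fam n x E).filter (fun G => x ∈ G ∧ y ∈ G)).card ≤ B.card := by
    apply card_le_pairs x y hxy
    · intro G hG
      rw [mem_filter] at hG
      exact hG.2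
    · intro G hG
      rw [mem_filter, mem_G3fam] at hG
      obtain ⟨⟨hG4, hGalt⟩, hxG, hyG⟩ := hG
      have hsub : ({x, y} : Finset (Fin n)) ⊆ G := by
        intro z hz; simp only [mem_insert, mem_singleton] at hz
        rcases hz with rfl | rfl
        · exact hxG
        · exact hyG
      rw [hBdef, mem_filter, mem_powersetCard]
      refine ⟨⟨?_, ?_⟩, ?_⟩
      · intro z hz
        rw [mem_sdiff] at hz
        rw [hSdef, mem_sdiff]
        exact ⟨mem_univ z, hz.2⟩
      · rw [card_sdiff_of_subset hsub, hG4, card_pair hxy]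
      · rcases hGalt with hEG | ⟨-, e, he⟩
        · exfalso
          have hx1 : x ∉ insert y E := by
            simp only [mem_insert]
            push_neg
            exact ⟨hxy, hxE⟩
          have h5 : insert x (insert y E) ⊆ G := by
            intro z hz
            simp only [mem_insert] at hz
            rcases hz with rfl | rfl | hz
            · exact hxG
            · exact hyG
            · exact hEG hz
          have hc5 : (insert x (insert y E)).card = 5 := by
            rw [card_insert_of_notMem hx1, card_insert_of_notMem hyE, hE]
          have := card_le_card h5
          omega
        · rw [mem_inter] at he
          refine ⟨e, ?_⟩
          rw [mem_inter, mem_sdiff]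
          refine ⟨⟨he.1, ?_⟩, he.2⟩
          simp only [mem_insert, mem_singleton]
          push_neg
          constructor <;> rintro rfl
          · exact hxE he.2
          · exact hyE he.2
  obtain ⟨m, rfl⟩ : ∃ m, n = m + 6 := ⟨n - 6, by omega⟩
  rw [hScard, hSE] at hcount
  have e2 : m + 6 - 2 = m + 4 := by omega
  have e5 : m + 6 - 5 = m + 1 := by omega
  rw [e2, e5] at hcount
  have c4 : (m+4).choose 2 = (m+3).choose 2 + (m+3) := choose2_succ (m+3)
  have c3 : (m+3).choose 2 = (m+2).choose 2 + (m+2) := choose2_succ (m+2)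
  have c2 : (m+2).choose 2 = (m+1).choose 2 + (m+1) := choose2_succ (m+1)
  have hBc : B.card = 3*m + 6 := by
    rw [c3, c2] at c4
    rw [c4] at hcount
    rw [← hBdef] at hcount
    omega
  rw [hBc] at hle
  exact hle.trans (by omega)

lemma bound_a_both {n : ℕ} (hn : 6 ≤ n) (x x₁ x₂ : Fin n) (E : Finset (Fin n))
    (hE : E.card = 3) (hxE : x ∉ E) (hne : x₁ ≠ x₂) (h1 : x ≠ x₁) (h2 : x ≠ x₂)
    (hx₁E : x₁ ∈ E) (hx₂E : x₂ ∈ E) :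
    ((G3fam n x E).filter (fun G => x₁ ∈ G ∧ x₂ ∈ G)).card < 3 * n - 12 := by
  set S : Finset (Fin n) := univ \ {x₁, x₂} with hSdef
  have hScard : S.card = n - 2 := by
    rw [hSdef, card_sdiff_of_subset (subset_univ _), card_univ, Fintype.card_fin, card_pair hne]
  set U : Finset (Fin n) := insert x (E \ {x₁, x₂}) with hUdef
  have hpairE : ({x₁, x₂} : Finset (Fin n)) ⊆ E := by
    intro z hz; simp only [mem_insert, mem_singleton] at hz
    rcases hz with rfl | rfl
    · exact hx₁E
    · exact hx₂E
  have hE1 : (E \ {x₁, x₂}).card = 1 := by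
    rw [card_sdiff_of_subset hpairE, hE, card_pair hne]
  have hxnot : x ∉ E \ {x₁, x₂} := fun h => hxE (mem_sdiff.mp h).1
  have hU2 : U.card = 2 := by
    rw [hUdef, card_insert_of_notMem hxnot, hE1]
  have hUS : U ⊆ S := by
    intro z hz
    rw [hUdef, mem_insert] at hz
    rw [hSdef, mem_sdiff]
    refine ⟨mem_univ z, ?_⟩
    simp only [mem_insert, mem_singleton]
    push_neg
    rcases hz with rfl | hz
    · exact ⟨h1, h2⟩
    · have := (mem_sdiff.mp hz).2
      simp only [mem_insert, mem_singleton] at this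
      push_neg at this
      exact this
  have hSU : (S \ U).card = n - 4 := by
    rw [card_sdiff_of_subset hUS, hScard, hU2]; omega
  set B := (S.powersetCard 2).filter (fun P => (P ∩ U).Nonempty) with hBdef
  have hcount := count_pairs S U
  have hle : ((G3fam n x E).filter (fun G => x₁ ∈ G ∧ x₂ ∈ G)).card ≤ B.card := by
    apply card_le_pairs x₁ x₂ hne
    · intro G hG
      rw [mem_filter] at hG
      exact hG.2
    · intro G hG
      rw [mem_filter, mem_G3fam] at hG
      obtain ⟨⟨hG4, hGalt⟩, h₁G, h₂G⟩ := hG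
      have hsub : ({x₁, x₂} : Finset (Fin n)) ⊆ G := by
        intro z hz; simp only [mem_insert, mem_singleton] at hz
        rcases hz with rfl | rfl
        · exact h₁G
        · exact h₂G
      rw [hBdef, mem_filter, mem_powersetCard]
      refine ⟨⟨?_, ?_⟩, ?_⟩
      · intro z hz
        rw [mem_sdiff] at hz
        rw [hSdef, mem_sdiff]
        exact ⟨mem_univ z, hz.2⟩
      · rw [card_sdiff_of_subset hsub, hG4, card_pair hne]
      · rcases hGalt with hEG | ⟨hxG, -⟩
        · obtain ⟨e, he⟩ := card_pos.mp (by rw [hE1]; norm_num : 0 < (E \ {x₁, x₂}).card)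
          refine ⟨e, mem_inter.mpr ⟨mem_sdiff.mpr ⟨hEG (mem_sdiff.mp he).1, (mem_sdiff.mp he).2⟩, ?_⟩⟩
          rw [hUdef]
          exact mem_insert_of_mem he
        · refine ⟨x, mem_inter.mpr ⟨mem_sdiff.mpr ⟨hxG, ?_⟩, by rw [hUdef]; exact mem_insert_self _ _⟩⟩
          simp only [mem_insert, mem_singleton]
          push_neg
          exact ⟨h1, h2⟩
  obtain ⟨m, rfl⟩ : ∃ m, n = m + 6 := ⟨n - 6, by omega⟩
  rw [hScard, hSU] at hcount
  have e2 : m + 6 - 2 = m + 4 := by omega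
  have e4 : m + 6 - 4 = m + 2 := by omega
  rw [e2, e4, ← hBdef] at hcount
  have c4 : (m+4).choose 2 = (m+3).choose 2 + (m+3) := choose2_succ (m+3)
  have c3 : (m+3).choose 2 = (m+2).choose 2 + (m+2) := choose2_succ (m+2)
  rw [c3] at c4
  rw [c4] at hcount
  omega

lemma bound_a_one {n : ℕ} (hn : 6 ≤ n) (x x₁ x₂ : Fin n) (E : Finset (Fin n))
    (hE : E.card = 3) (hxE : x ∉ E) (hne : x₁ ≠ x₂) (h1 : x ≠ x₁) (h2 : x ≠ x₂)
    (hx₁E : x₁ ∈ E) (hx₂E : x₂ ∉ E) :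
    ((G3fam n x E).filter (fun G => x₁ ∈ G ∧ x₂ ∈ G)).card < 3 * n - 12 := by
  set S : Finset (Fin n) := univ \ {x₁, x₂} with hSdef
  have hScard : S.card = n - 2 := by
    rw [hSdef, card_sdiff_of_subset (subset_univ _), card_univ, Fintype.card_fin, card_pair hne]
  have hxS : ({x} : Finset (Fin n)) ⊆ S := by
    intro z hz
    rw [mem_singleton] at hz
    subst hz
    rw [hSdef, mem_sdiff]
    refine ⟨mem_univ z, ?_⟩
    simp only [mem_insert, mem_singleton]
    push_neg
    exact ⟨h1, h2⟩
  have hSx : (S \ {x}).card = n - 3 := by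
    rw [card_sdiff_of_subset hxS, hScard, card_singleton]; omega
  set B := insert (E.erase x₁) ((S.powersetCard 2).filter (fun P => (P ∩ {x}).Nonempty)) with hBdef
  have hcount := count_pairs S ({x} : Finset (Fin n))
  have hle : ((G3fam n x E).filter (fun G => x₁ ∈ G ∧ x₂ ∈ G)).card ≤ B.card := by
    apply card_le_pairs x₁ x₂ hne
    · intro G hG
      rw [mem_filter] at hG
      exact hG.2
    · intro G hG
      rw [mem_filter, mem_G3fam] at hG
      obtain ⟨⟨hG4, hGalt⟩, h₁G, h₂G⟩ := hG
      have hsub : ({x₁, x₂} : Finset (Fin n)) ⊆ G := by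
        intro z hz; simp only [mem_insert, mem_singleton] at hz
        rcases hz with rfl | rfl
        · exact h₁G
        · exact h₂G
      have hPS : G \ {x₁, x₂} ⊆ S := by
        intro z hz
        rw [mem_sdiff] at hz
        rw [hSdef, mem_sdiff]
        exact ⟨mem_univ z, hz.2⟩
      have hP2 : (G \ {x₁, x₂}).card = 2 := by
        rw [card_sdiff_of_subset hsub, hG4, card_pair hne]
      rw [hBdef, mem_insert]
      rcases hGalt with hEG | ⟨hxG, -⟩
      · left
        have herase : E.erase x₁ ⊆ G \ {x₁, x₂} := by
          intro e he
          rw [mem_erase] at he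
          rw [mem_sdiff]
          refine ⟨hEG he.2, ?_⟩
          simp only [mem_insert, mem_singleton]
          push_neg
          exact ⟨he.1, fun h => hx₂E (h ▸ he.2)⟩
        have hec : (E.erase x₁).card = 2 := by
          rw [card_erase_of_mem hx₁E, hE]
        exact (eq_of_subset_of_card_le herase (by rw [hec, hP2])).symm
      · right
        rw [mem_filter, mem_powersetCard]
        refine ⟨⟨hPS, hP2⟩, ⟨x, mem_inter.mpr ⟨?_, mem_singleton_self x⟩⟩⟩
        rw [mem_sdiff]
        refine ⟨hxG, ?_⟩
        simp only [mem_insert, mem_singleton]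
        push_neg
        exact ⟨h1, h2⟩
  have hBle : B.card ≤ ((S.powersetCard 2).filter (fun P => (P ∩ ({x} : Finset (Fin n))).Nonempty)).card + 1 := by
    rw [hBdef]
    exact card_insert_le _ _
  obtain ⟨m, rfl⟩ : ∃ m, n = m + 6 := ⟨n - 6, by omega⟩
  rw [hScard, hSx] at hcount
  have e2 : m + 6 - 2 = m + 4 := by omega
  have e3 : m + 6 - 3 = m + 3 := by omega
  rw [e2, e3] at hcount
  have c4 : (m+4).choose 2 = (m+3).choose 2 + (m+3) := choose2_succ (m+3)
  rw [c4] at hcount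
  omega

lemma bound_a_none {n : ℕ} (hn : 6 ≤ n) (x x₁ x₂ : Fin n) (E : Finset (Fin n))
    (hE : E.card = 3) (hxE : x ∉ E) (hne : x₁ ≠ x₂) (h1 : x ≠ x₁) (h2 : x ≠ x₂)
    (hx₁E : x₁ ∉ E) (hx₂E : x₂ ∉ E) :
    ((G3fam n x E).filter (fun G => x₁ ∈ G ∧ x₂ ∈ G)).card < 3 * n - 12 := by
  set B := E.image (fun e => insert x ({e} : Finset (Fin n))) with hBdef
  have hle : ((G3fam n x E).filter (fun G => x₁ ∈ G ∧ x₂ ∈ G)).card ≤ B.card := by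
    apply card_le_pairs x₁ x₂ hne
    · intro G hG
      rw [mem_filter] at hG
      exact hG.2
    · intro G hG
      rw [mem_filter, mem_G3fam] at hG
      obtain ⟨⟨hG4, hGalt⟩, h₁G, h₂G⟩ := hG
      have hsub : ({x₁, x₂} : Finset (Fin n)) ⊆ G := by
        intro z hz; simp only [mem_insert, mem_singleton] at hz
        rcases hz with rfl | rfl
        · exact h₁G
        · exact h₂G
      have hP2 : (G \ {x₁, x₂}).card = 2 := by
        rw [card_sdiff_of_subset hsub, hG4, card_pair hne]
      rcases hGalt with hEG | ⟨hxG, e, he⟩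
      · exfalso
        have hx1 : x₁ ∉ insert x₂ E := by
          simp only [mem_insert]
          push_neg
          exact ⟨hne, hx₁E⟩
        have h5 : insert x₁ (insert x₂ E) ⊆ G := by
          intro z hz
          simp only [mem_insert] at hz
          rcases hz with rfl | rfl | hz
          · exact h₁G
          · exact h₂G
          · exact hEG hz
        have hc5 : (insert x₁ (insert x₂ E)).card = 5 := by
          rw [card_insert_of_notMem hx1, card_insert_of_notMem hx₂E, hE]
        have := card_le_card h5
        omega
      · rw [mem_inter] at he
        have hxP : x ∈ G \ {x₁, x₂} := by
          rw [mem_sdiff]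
          refine ⟨hxG, ?_⟩
          simp only [mem_insert, mem_singleton]
          push_neg
          exact ⟨h1, h2⟩
        have heP : e ∈ G \ {x₁, x₂} := by
          rw [mem_sdiff]
          refine ⟨he.1, ?_⟩
          simp only [mem_insert, mem_singleton]
          push_neg
          exact ⟨fun h => hx₁E (h ▸ he.2), fun h => hx₂E (h ▸ he.2)⟩
        have hxe : x ∉ ({e} : Finset (Fin n)) := by
          rw [mem_singleton]
          exact fun h => hxE (h ▸ he.2)
        have hsub2 : insert x ({e} : Finset (Fin n)) ⊆ G \ {x₁, x₂} := by
          intro z hz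
          simp only [mem_insert, mem_singleton] at hz
          rcases hz with rfl | rfl
          · exact hxP
          · exact heP
        have hc2 : (insert x ({e} : Finset (Fin n))).card = 2 := by
          rw [card_insert_of_notMem hxe, card_singleton]
        have hPeq : G \ {x₁, x₂} = insert x ({e} : Finset (Fin n)) :=
          (eq_of_subset_of_card_le hsub2 (by rw [hc2, hP2])).symm
        rw [hBdef, mem_image]
        exact ⟨e, he.2, hPeq.symm⟩
  have hB3 : B.card ≤ 3 := by
    rw [hBdef]
    calc (E.image _).card ≤ E.card := card_image_le
      _ = 3 := hE
  omega

lemma bound_a {n : ℕ} (hn : 6 ≤ n) (x x₁ x₂ : Fin n) (E : Finset (Fin n))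
    (hE : E.card = 3) (hxE : x ∉ E) (hne : x₁ ≠ x₂) (h1 : x ≠ x₁) (h2 : x ≠ x₂) :
    ((G3fam n x E).filter (fun G => x₁ ∈ G ∧ x₂ ∈ G)).card < 3 * n - 12 := by
  have hswap : (G3fam n x E).filter (fun G => x₁ ∈ G ∧ x₂ ∈ G)
      = (G3fam n x E).filter (fun G => x₂ ∈ G ∧ x₁ ∈ G) :=
    filter_congr (fun G _ => and_comm)
  by_cases hx₁E : x₁ ∈ E <;> by_cases hx₂E : x₂ ∈ E
  · exact bound_a_both hn x x₁ x₂ E hE hxE hne h1 h2 hx₁E hx₂E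
  · exact bound_a_one hn x x₁ x₂ E hE hxE hne h1 h2 hx₁E hx₂E
  · rw [hswap]
    exact bound_a_one hn x x₂ x₁ E hE hxE hne.symm h2 h1 hx₂E hx₁E
  · exact bound_a_none hn x x₁ x₂ E hE hxE hne h1 h2 hx₁E hx₂E

/-- Let `F ⊆ G₃` with center `x` and core `E`. (i) If at least `3n - 12` members of `F`
contain both `x₁, x₂`, then `x ∈ {x₁, x₂}`. (ii) If more than `3n - 12` do, then
moreover `{x₁, x₂} ⊆ {x} ∪ E`. -/
theorem stmt_10 (n : ℕ) (hn : 6 ≤ n)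
    (x : Fin n) (E : Finset (Fin n)) (hE : E.card = 3) (hxE : x ∉ E)
    (F : Finset (Finset (Fin n))) (hF : F ⊆ G3fam n x E)
    (x₁ x₂ : Fin n) (hne : x₁ ≠ x₂) :
    (3 * n - 12 ≤ (F.filter (fun G => x₁ ∈ G ∧ x₂ ∈ G)).card →
        (x = x₁ ∨ x = x₂)) ∧
    (3 * n - 12 < (F.filter (fun G => x₁ ∈ G ∧ x₂ ∈ G)).card →
        (x = x₁ ∨ x = x₂) ∧ x₁ ∈ insert x E ∧ x₂ ∈ insert x E) := by
  have hd : (F.filter (fun G => x₁ ∈ G ∧ x₂ ∈ G)).card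
      ≤ ((G3fam n x E).filter (fun G => x₁ ∈ G ∧ x₂ ∈ G)).card :=
    card_le_card (filter_subset_filter _ hF)
  have hx_of : 3 * n - 12 ≤ (F.filter (fun G => x₁ ∈ G ∧ x₂ ∈ G)).card →
      x = x₁ ∨ x = x₂ := by
    intro h
    by_contra hc
    push_neg at hc
    have := bound_a hn x x₁ x₂ E hE hxE hne hc.1 hc.2
    omega
  refine ⟨hx_of, fun h => ?_⟩
  have hx := hx_of (le_of_lt h)
  refine ⟨hx, ?_, ?_⟩
  · rcases hx with h' | h'
    · rw [h']
      exact mem_insert_self _ _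
    · by_contra hc
      simp only [mem_insert] at hc
      push_neg at hc
      have hb := bound_b hn x E hE hxE x₁ hc.1 hc.2
      rw [← h'] at hd h
      have hsw2 : (G3fam n x E).filter (fun G => x₁ ∈ G ∧ x ∈ G)
          = (G3fam n x E).filter (fun G => x ∈ G ∧ x₁ ∈ G) :=
        filter_congr (fun G _ => and_comm)
      rw [hsw2] at hd
      omega
  · rcases hx with h' | h'
    · by_contra hc
      simp only [mem_insert] at hc
      push_neg at hc
      have hb := bound_b hn x E hE hxE x₂ hc.1 hc.2
      rw [← h'] at hd h
      omega
    · rw [h']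
      exact mem_insert_self _ _
end

section
/- Fix n > 6. Let F ⊆ G₃ be a 4-uniform family on [n] with center x and core E (|E| = 3), and set B = {x} ∪ E. If at least n - 3 sets of F contain a fixed 3-set {x₁, x₂, x₃}, then either {x₁, x₂, x₃} ⊆ B, or |{x₁, x₂, x₃} ∩ B| = 2 with x ∈ {x₁, x₂, x₃}. -/
/-- Fix `n > 6`. If `F ⊆ G₃` with center `x`, core `E`, `B = {x} ∪ E`, and at least
`n - 3` members of `F` contain a fixed 3-set `T`, then either `T ⊆ B` or
`|T ∩ B| = 2` with `x ∈ T`. -/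
theorem stmt_11 (n : ℕ) (hn : 6 < n)
    (x : Fin n) (E : Finset (Fin n)) (hE : E.card = 3) (hxE : x ∉ E)
    (F : Finset (Finset (Fin n))) (hF : F ⊆ G3fam n x E)
    (T : Finset (Fin n)) (hT : T.card = 3)
    (hd : n - 3 ≤ (F.filter (fun G => T ⊆ G)).card) :
    T ⊆ insert x E ∨ ((T ∩ insert x E).card = 2 ∧ x ∈ T) := by
  by_contra hcon
  push_neg at hcon
  obtain ⟨hTB, h2⟩ := hcon
  have shape : ∀ G ∈ F.filter (fun G => T ⊆ G), ∃ y, y ∉ T ∧ G = insert y T ∧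
      (E ⊆ G ∨ (x ∈ G ∧ (G ∩ E).Nonempty)) := by
    intro G hG
    simp only [Finset.mem_filter] at hG
    obtain ⟨hGF, hTG⟩ := hG
    have hG3 := hF hGF
    simp only [G3fam, Finset.mem_filter, Finset.mem_powersetCard] at hG3
    obtain ⟨⟨_, hc4⟩, hprop⟩ := hG3
    have hsd : (G \ T).card = 1 := by rw [Finset.card_sdiff_of_subset hTG, hc4, hT]
    obtain ⟨y, hy⟩ := Finset.card_eq_one.mp hsd
    have hyG : y ∈ G \ T := hy ▸ Finset.mem_singleton_self y
    refine ⟨y, (Finset.mem_sdiff.mp hyG).2, ?_, hprop⟩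
    have h1 := Finset.union_sdiff_of_subset hTG
    rw [hy] at h1
    rw [Finset.insert_eq, Finset.union_comm, h1]
  have key : ∃ S : Finset (Fin n), S.card ≤ 3 ∧
      F.filter (fun G => T ⊆ G) ⊆ S.image (fun y => insert y T) := by
    by_cases hxT : x ∈ T
    · -- case A : x ∈ T, must have T ∩ E = ∅
      have hxTE : x ∉ T ∩ E := fun h => hxE (Finset.mem_inter.mp h).2
      have hcard : (T ∩ insert x E).card = (T ∩ E).card + 1 := by
        rw [Finset.inter_insert_of_mem hxT, Finset.card_insert_of_notMem hxTE]
      have hne2 : (T ∩ insert x E).card ≠ 2 := fun h => h2 h hxT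
      have hle : (T ∩ insert x E).card ≤ 3 := by
        calc (T ∩ insert x E).card ≤ T.card := Finset.card_le_card (Finset.inter_subset_left)
        _ = 3 := hT
      have hne3 : (T ∩ insert x E).card ≠ 3 := by
        intro h
        apply hTB
        have : T ∩ insert x E = T :=
          Finset.eq_of_subset_of_card_le Finset.inter_subset_left (by omega)
        rw [← this]; exact Finset.inter_subset_right
      have hTE : T ∩ E = ∅ := Finset.card_eq_zero.mp (by omega)
      refine ⟨E, le_of_eq hE, ?_⟩
      intro G hG
      obtain ⟨y, hyT, hGy, hprop⟩ := shape G hG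
      rcases hprop with hEG | ⟨-, e, he⟩
      · exfalso
        have : E ⊆ {y} := by
          intro e heE
          have := hEG heE
          rw [hGy, Finset.mem_insert] at this
          rcases this with h | h
          · simp [h]
          · exact absurd (Finset.mem_inter.mpr ⟨h, heE⟩) (by simp [hTE])
        have := Finset.card_le_card this
        simp [hE] at this
      · rw [Finset.mem_inter] at he
        have heG := he.1
        rw [hGy, Finset.mem_insert] at heG
        rcases heG with h | h
        · exact Finset.mem_image.mpr ⟨y, h ▸ he.2, hGy.symm⟩
        · exact absurd (Finset.mem_inter.mpr ⟨h, he.2⟩) (by simp [hTE])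
    · -- case B : x ∉ T
      by_cases hE1 : (E \ T).card ≤ 1
      · refine ⟨insert x (E \ T), ?_, ?_⟩
        · calc (insert x (E \ T)).card ≤ (E \ T).card + 1 := Finset.card_insert_le _ _
          _ ≤ 3 := by omega
        · intro G hG
          obtain ⟨y, hyT, hGy, hprop⟩ := shape G hG
          rcases hprop with hEG | ⟨hxG, -⟩
          · have hET : (E \ T).Nonempty := by
              rw [Finset.sdiff_nonempty]
              intro hETsub
              have : E = T := Finset.eq_of_subset_of_card_le hETsub (by omega)
              exact hTB (this ▸ (Finset.subset_insert x E))
            obtain ⟨e, he⟩ := hET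
            have heT := (Finset.mem_sdiff.mp he).2
            have heG := hEG (Finset.mem_sdiff.mp he).1
            rw [hGy, Finset.mem_insert] at heG
            rcases heG with h | h
            · exact Finset.mem_image.mpr ⟨y, Finset.mem_insert_of_mem (h ▸ he), hGy.symm⟩
            · exact absurd h heT
          · rw [hGy, Finset.mem_insert] at hxG
            rcases hxG with h | h
            · exact Finset.mem_image.mpr ⟨x, Finset.mem_insert_self _ _, by rw [hGy, h]⟩
            · exact absurd h hxT
      · refine ⟨{x}, by simp, ?_⟩
        intro G hG
        obtain ⟨y, hyT, hGy, hprop⟩ := shape G hG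
        rcases hprop with hEG | ⟨hxG, -⟩
        · exfalso
          have : E \ T ⊆ {y} := by
            intro e he
            rw [Finset.mem_sdiff] at he
            have := hEG he.1
            rw [hGy, Finset.mem_insert] at this
            rcases this with h | h
            · simp [h]
            · exact absurd h he.2
          have := Finset.card_le_card this
          simp at this
          omega
        · rw [hGy, Finset.mem_insert] at hxG
          rcases hxG with h | h
          · exact Finset.mem_image.mpr ⟨x, Finset.mem_singleton_self _, by rw [hGy, h]⟩
          · exact absurd h hxT
  obtain ⟨S, hS3, hsub⟩ := key
  have h1 := Finset.card_le_card hsub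
  have h3 := (Finset.card_image_le (s := S) (f := fun y => insert y T))
  omega
end

section
/- Let r ≥ 2, let Z be a set of size m ≥ 2r+1 and A ⊆ Z with |A| ∈ {r-1, r}. Then the r-uniform family B = {B ⊆ Z : |B| = r, 0 < |B ∩ A| < |A|} is non-separable: it cannot be partitioned into two nonempty cross-intersecting subfamilies. -/
/-- Non-separability of the family of `r`-subsets of `Z` meeting `A` partially:
it admits no partition into two nonempty cross-intersecting subfamilies. -/
theorem stmt_12 {α : Type*} [DecidableEq α] (r m : ℕ) (hr : 2 ≤ r)
    (Z : Finset α) (hZ : Z.card = m) (hm : 2 * r + 1 ≤ m)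
    (A : Finset α) (hA : A ⊆ Z) (hAcard : A.card = r - 1 ∨ A.card = r) :
    ¬ ∃ B₁ B₂ : Finset (Finset α),
        B₁ ∪ B₂ =
          (Z.powersetCard r).filter (fun B => 0 < (B ∩ A).card ∧ (B ∩ A).card < A.card) ∧
        Disjoint B₁ B₂ ∧ B₁.Nonempty ∧ B₂.Nonempty ∧
        (∀ C ∈ B₁, ∀ D ∈ B₂, (C ∩ D).Nonempty) := by
  rintro ⟨B₁, B₂, hU, hdisj, ⟨C0, hC0⟩, ⟨D0, hD0⟩, hcross⟩
  have hsr : A.card ≤ r := by rcases hAcard with h | h <;> omega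
  -- membership characterization of the family
  have memF : ∀ X : Finset α, X ∈ B₁ ∪ B₂ ↔
      X ⊆ Z ∧ X.card = r ∧ 0 < (X ∩ A).card ∧ (X ∩ A).card < A.card := by
    intro X
    rw [hU, Finset.mem_filter, Finset.mem_powersetCard]
    tauto
  have hC0F := (memF C0).mp (Finset.mem_union_left _ hC0)
  have hs2 : 2 ≤ A.card := by have := hC0F.2.2; omega
  -- disjoint members are in the same class
  have adj : ∀ X Y : Finset α, X ∈ B₁ ∪ B₂ → Y ∈ B₁ ∪ B₂ → X ∩ Y = ∅ →
      (X ∈ B₁ ↔ Y ∈ B₁) := by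
    intro X Y hX hY hXY
    constructor
    · intro h1
      rcases Finset.mem_union.mp hY with h | h
      · exact h
      · have := hcross X h1 Y h
        rw [hXY] at this
        exact absurd this (by simp)
    · intro h1
      rcases Finset.mem_union.mp hX with h | h
      · exact h
      · have := hcross Y h1 X h
        rw [Finset.inter_comm, hXY] at this
        exact absurd this (by simp)
  -- existence of a member with prescribed trace on A, avoiding a given set V
  have ex : ∀ U V : Finset α, U ⊆ A → 1 ≤ U.card → U.card < A.card →
      (∀ u ∈ U, u ∉ V) → V ⊆ Z → (A ∪ V).card + r ≤ U.card + m →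
      ∃ C, C ∈ B₁ ∪ B₂ ∧ C ∩ V = ∅ ∧ C ∩ A = U := by
    intro U V hUA hU1 hUs hUV hVZ hcard
    have hAVZ : A ∪ V ⊆ Z := Finset.union_subset hA hVZ
    have hW : (Z \ (A ∪ V)).card = m - (A ∪ V).card := by
      rw [Finset.card_sdiff_of_subset hAVZ, hZ]
    have hle : r - U.card ≤ (Z \ (A ∪ V)).card := by
      have := Finset.card_le_card hAVZ
      rw [hZ] at this
      omega
    obtain ⟨S, hSsub, hScard⟩ := Finset.exists_subset_card_eq hle
    have hSprop : ∀ x ∈ S, x ∈ Z ∧ x ∉ A ∪ V := by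
      intro x hx
      exact Finset.mem_sdiff.mp (hSsub hx)
    have hCA : (U ∪ S) ∩ A = U := by
      ext x
      simp only [Finset.mem_inter, Finset.mem_union]
      constructor
      · rintro ⟨hx | hx, hxA⟩
        · exact hx
        · exact absurd (Finset.mem_union_left V hxA) (hSprop x hx).2
      · intro hx
        exact ⟨Or.inl hx, hUA hx⟩
    have hCV : (U ∪ S) ∩ V = ∅ := by
      apply Finset.eq_empty_iff_forall_notMem.mpr
      intro x hx
      obtain ⟨hx1, hx2⟩ := Finset.mem_inter.mp hx
      rcases Finset.mem_union.mp hx1 with h | h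
      · exact hUV x h hx2
      · exact (hSprop x h).2 (Finset.mem_union_right A hx2)
    have hdisjUS : Disjoint U S := by
      rw [Finset.disjoint_left]
      intro x hxU hxS
      exact (hSprop x hxS).2 (Finset.mem_union_left V (hUA hxU))
    have hCcard : (U ∪ S).card = r := by
      rw [Finset.card_union_of_disjoint hdisjUS, hScard]
      omega
    refine ⟨U ∪ S, (memF _).mpr ⟨?_, hCcard, ?_, ?_⟩, hCV, hCA⟩
    · exact Finset.union_subset (hUA.trans hA) (fun x hx => (hSprop x hx).1)
    · rw [hCA]; omega
    · rw [hCA]; omega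
  -- one middle step: members with a common disjoint partner are in the same class
  have conn2 : ∀ X X' U : Finset α, X ∈ B₁ ∪ B₂ → X' ∈ B₁ ∪ B₂ → U ⊆ A →
      1 ≤ U.card → U.card < A.card → (∀ u ∈ U, u ∉ X ∪ X') →
      (A ∪ (X ∪ X')).card + r ≤ U.card + m →
      (X ∈ B₁ ↔ X' ∈ B₁) := by
    intro X X' U hX hX' hUA h1 h2 hUV hcard
    obtain ⟨C, hCF, hCV, _⟩ := ex U (X ∪ X') hUA h1 h2 hUV
      (Finset.union_subset ((memF X).mp hX).1 ((memF X').mp hX').1) hcard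
    have hCX : X ∩ C = ∅ := by
      rw [Finset.inter_comm, ← Finset.subset_empty, ← hCV]
      exact Finset.inter_subset_inter (Finset.Subset.refl C) Finset.subset_union_left
    have hCX' : C ∩ X' = ∅ := by
      rw [← Finset.subset_empty, ← hCV]
      exact Finset.inter_subset_inter (Finset.Subset.refl C) Finset.subset_union_right
    exact (adj X C hX hCF hCX).trans (adj C X' hCF hX' hCX')
  -- a single swap keeping the trace on A
  have swap : ∀ X X' : Finset α, X ∈ B₁ ∪ B₂ → X' ∈ B₁ ∪ B₂ → X ∩ A = X' ∩ A →
      (X' \ X).card ≤ 1 → (X ∈ B₁ ↔ X' ∈ B₁) := by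
    intro X X' hX hX' htr hsw
    obtain ⟨hXZ, hXr, hXt1, hXt2⟩ := (memF X).mp hX
    have hAX : (A ∩ X).card + (A \ X).card = A.card := Finset.card_inter_add_card_sdiff A X
    have hAXi : (A ∩ X).card = (X ∩ A).card := by rw [Finset.inter_comm]
    apply conn2 X X' (A \ X) hX hX' Finset.sdiff_subset (by omega) (by omega)
    · intro u hu
      obtain ⟨huA, huX⟩ := Finset.mem_sdiff.mp hu
      intro hmem
      rcases Finset.mem_union.mp hmem with h | h
      · exact huX h
      · have : u ∈ X' ∩ A := Finset.mem_inter.mpr ⟨h, huA⟩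
        rw [← htr] at this
        exact huX (Finset.mem_inter.mp this).1
    · have e1 : (X' \ X).card + X.card = (X' ∪ X).card := Finset.card_sdiff_add_card X' X
      have e2 : A ∪ (X ∪ X') ⊆ (A \ X) ∪ (X ∪ X') := by
        intro x hx
        rcases Finset.mem_union.mp hx with h | h
        · by_cases hxX : x ∈ X
          · exact Finset.mem_union_right _ (Finset.mem_union_left _ hxX)
          · exact Finset.mem_union_left _ (Finset.mem_sdiff.mpr ⟨h, hxX⟩)
        · exact Finset.mem_union_right _ h
      have e3 := Finset.card_le_card e2
      have e4 := Finset.card_union_le (A \ X) (X ∪ X')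
      have e5 : (X ∪ X').card = (X' ∪ X).card := by rw [Finset.union_comm]
      omega
  -- chains of swaps: same trace on A means same class
  have chainS : ∀ n : ℕ, ∀ X X' : Finset α, X ∈ B₁ ∪ B₂ → X' ∈ B₁ ∪ B₂ →
      X ∩ A = X' ∩ A → (X' \ X).card ≤ n → (X ∈ B₁ ↔ X' ∈ B₁) := by
    intro n
    induction n with
    | zero =>
      intro X X' hX hX' htr h0
      exact swap X X' hX hX' htr (by omega)
    | succ n ih =>
      intro X X' hX hX' htr hn
      by_cases hle : (X' \ X).card ≤ 1
      · exact swap X X' hX hX' htr hle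
      · obtain ⟨hXZ, hXr, hXt1, hXt2⟩ := (memF X).mp hX
        obtain ⟨hX'Z, hX'r, _, _⟩ := (memF X').mp hX'
        have hcards : (X \ X').card = (X' \ X).card := by
          have h1 : (X ∩ X').card + (X \ X').card = X.card :=
            Finset.card_inter_add_card_sdiff X X'
          have h2 : (X' ∩ X).card + (X' \ X).card = X'.card :=
            Finset.card_inter_add_card_sdiff X' X
          have h3 : (X' ∩ X).card = (X ∩ X').card := by rw [Finset.inter_comm]
          omega
        obtain ⟨x, hx⟩ : (X \ X').Nonempty := by rw [← Finset.card_pos]; omega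
        obtain ⟨y, hy⟩ : (X' \ X).Nonempty := by rw [← Finset.card_pos]; omega
        obtain ⟨hxX, hxX'⟩ := Finset.mem_sdiff.mp hx
        obtain ⟨hyX', hyX⟩ := Finset.mem_sdiff.mp hy
        have hxA : x ∉ A := by
          intro hxA
          have : x ∈ X ∩ A := Finset.mem_inter.mpr ⟨hxX, hxA⟩
          rw [htr] at this
          exact hxX' (Finset.mem_inter.mp this).1
        have hyA : y ∉ A := by
          intro hyA
          have : y ∈ X' ∩ A := Finset.mem_inter.mpr ⟨hyX', hyA⟩
          rw [← htr] at this
          exact hyX (Finset.mem_inter.mp this).1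
        have hyNe : y ∉ X.erase x := fun h => hyX (Finset.mem_of_mem_erase h)
        have hX₂card : (insert y (X.erase x)).card = r := by
          rw [Finset.card_insert_of_notMem hyNe, Finset.card_erase_of_mem hxX, hXr]
          omega
        have hX₂Z : insert y (X.erase x) ⊆ Z := by
          intro z hz
          rcases Finset.mem_insert.mp hz with h | h
          · exact hX'Z (h ▸ hyX')
          · exact hXZ (Finset.mem_of_mem_erase h)
        have hX₂A : insert y (X.erase x) ∩ A = X ∩ A := by
          ext z
          simp only [Finset.mem_inter, Finset.mem_insert, Finset.mem_erase]
          constructor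
          · rintro ⟨h | ⟨_, hzX⟩, hzA⟩
            · exact absurd (h ▸ hzA) hyA
            · exact ⟨hzX, hzA⟩
          · rintro ⟨hzX, hzA⟩
            refine ⟨Or.inr ⟨?_, hzX⟩, hzA⟩
            rintro rfl
            exact hxA hzA
        have hX₂F : insert y (X.erase x) ∈ B₁ ∪ B₂ :=
          (memF _).mpr ⟨hX₂Z, hX₂card, by rw [hX₂A]; exact hXt1, by rw [hX₂A]; exact hXt2⟩
        have hsw : (insert y (X.erase x) \ X).card ≤ 1 := by
          have hsub : insert y (X.erase x) \ X ⊆ {y} := by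
            intro z hz
            obtain ⟨hz1, hz2⟩ := Finset.mem_sdiff.mp hz
            rcases Finset.mem_insert.mp hz1 with h | h
            · simp [h]
            · exact absurd (Finset.mem_of_mem_erase h) hz2
          calc (insert y (X.erase x) \ X).card ≤ ({y} : Finset α).card :=
                Finset.card_le_card hsub
            _ = 1 := Finset.card_singleton y
        have hdec : (X' \ insert y (X.erase x)).card ≤ n := by
          have hsub : X' \ insert y (X.erase x) ⊆ (X' \ X).erase y := by
            intro z hz
            obtain ⟨hz1, hz2⟩ := Finset.mem_sdiff.mp hz
            rw [Finset.mem_insert] at hz2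
            push_neg at hz2
            obtain ⟨hzy, hze⟩ := hz2
            rw [Finset.mem_erase, Finset.mem_sdiff]
            refine ⟨hzy, hz1, ?_⟩
            intro hzX
            apply hze
            rw [Finset.mem_erase]
            refine ⟨?_, hzX⟩
            rintro rfl
            exact hxX' hz1
          have := Finset.card_le_card hsub
          rw [Finset.card_erase_of_mem hy] at this
          omega
        have c1 := swap X (insert y (X.erase x)) hX hX₂F hX₂A.symm hsw
        have c2 := ih (insert y (X.erase x)) X' hX₂F hX' (hX₂A.trans htr) hdec
        exact c1.trans c2
  -- one edge to a member with prescribed trace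
  have move : ∀ X U : Finset α, X ∈ B₁ ∪ B₂ → U ⊆ A → 1 ≤ U.card → U.card < A.card →
      (∀ u ∈ U, u ∉ X) → A.card ≤ U.card + (X ∩ A).card + 1 →
      ∃ X₂, X₂ ∈ B₁ ∪ B₂ ∧ X₂ ∩ A = U ∧ (X ∈ B₁ ↔ X₂ ∈ B₁) := by
    intro X U hX hUA h1 h2 hUX hcond
    obtain ⟨hXZ, hXr, hXt1, hXt2⟩ := (memF X).mp hX
    have hAX : (A ∩ X).card + (A \ X).card = A.card := Finset.card_inter_add_card_sdiff A X
    have hAXi : (A ∩ X).card = (X ∩ A).card := by rw [Finset.inter_comm]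
    have hsub : A ∪ X ⊆ (A \ X) ∪ X := by
      intro x hx
      rcases Finset.mem_union.mp hx with h | h
      · by_cases hxX : x ∈ X
        · exact Finset.mem_union_right _ hxX
        · exact Finset.mem_union_left _ (Finset.mem_sdiff.mpr ⟨h, hxX⟩)
      · exact Finset.mem_union_right _ h
    have hcard : (A ∪ X).card + r ≤ U.card + m := by
      have e3 := Finset.card_le_card hsub
      have e4 := Finset.card_union_le (A \ X) X
      omega
    obtain ⟨C, hCF, hCV, hCA⟩ := ex U X hUA h1 h2 hUX hXZ hcard
    have hXC : X ∩ C = ∅ := by rw [Finset.inter_comm]; exact hCV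
    exact ⟨C, hCF, hCA, adj X C hX hCF hXC⟩
  -- every member is connected to one whose trace is a singleton
  have toSing : ∀ t : ℕ, ∀ X, X ∈ B₁ ∪ B₂ → (X ∩ A).card ≤ t →
      ∃ X₂, X₂ ∈ B₁ ∪ B₂ ∧ (X₂ ∩ A).card = 1 ∧ (X ∈ B₁ ↔ X₂ ∈ B₁) := by
    intro t
    induction t with
    | zero =>
      intro X hX h0
      obtain ⟨_, _, h1, _⟩ := (memF X).mp hX
      omega
    | succ t ih =>
      intro X hX hle
      obtain ⟨hXZ, hXr, hXt1, hXt2⟩ := (memF X).mp hX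
      by_cases h1 : (X ∩ A).card = 1
      · exact ⟨X, hX, h1, Iff.rfl⟩
      · have hAX : (A ∩ X).card + (A \ X).card = A.card := Finset.card_inter_add_card_sdiff A X
        have hAXi : (A ∩ X).card = (X ∩ A).card := by rw [Finset.inter_comm]
        obtain ⟨X₂, hX₂F, hX₂A, c1⟩ := move X (A \ X) hX Finset.sdiff_subset (by omega)
          (by omega) (fun u hu => (Finset.mem_sdiff.mp hu).2) (by omega)
        obtain ⟨U', hU'sub, hU'card⟩ := Finset.exists_subset_card_eq
          (show (X ∩ A).card - 1 ≤ (X ∩ A).card by omega)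
        have hU'A : U' ⊆ A := hU'sub.trans Finset.inter_subset_right
        have hU'X₂ : ∀ u ∈ U', u ∉ X₂ := by
          intro u hu huX₂
          have huA : u ∈ A := hU'A hu
          have : u ∈ X₂ ∩ A := Finset.mem_inter.mpr ⟨huX₂, huA⟩
          rw [hX₂A] at this
          exact (Finset.mem_sdiff.mp this).2 (Finset.mem_inter.mp (hU'sub hu)).1
        obtain ⟨X₃, hX₃F, hX₃A, c2⟩ := move X₂ U' hX₂F hU'A (by omega) (by omega) hU'X₂
          (by rw [hX₂A]; omega)
        obtain ⟨X₄, hX₄F, h41, c3⟩ := ih X₃ hX₃F (by rw [hX₃A]; omega)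
        exact ⟨X₄, hX₄F, h41, c1.trans (c2.trans c3)⟩
  -- members with singleton traces are all connected
  have sing : ∀ X X', X ∈ B₁ ∪ B₂ → X' ∈ B₁ ∪ B₂ → (X ∩ A).card = 1 →
      (X' ∩ A).card = 1 → (X ∈ B₁ ↔ X' ∈ B₁) := by
    intro X X' hX hX' h1 h1'
    obtain ⟨a, ha⟩ := Finset.card_eq_one.mp h1
    obtain ⟨a', ha'⟩ := Finset.card_eq_one.mp h1'
    have haA : a ∈ A := by
      have : a ∈ X ∩ A := by rw [ha]; exact Finset.mem_singleton_self a
      exact (Finset.mem_inter.mp this).2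
    have ha'A : a' ∈ A := by
      have : a' ∈ X' ∩ A := by rw [ha']; exact Finset.mem_singleton_self a'
      exact (Finset.mem_inter.mp this).2
    have ha'X : ∀ X₀ : Finset α, X₀ ∩ A = {a} → a ≠ a' → ∀ u ∈ ({a'} : Finset α), u ∉ X₀ := by
      intro X₀ hX₀ hne u hu huX₀
      rw [Finset.mem_singleton] at hu
      subst hu
      have : u ∈ X₀ ∩ A := Finset.mem_inter.mpr ⟨huX₀, ha'A⟩
      rw [hX₀, Finset.mem_singleton] at this
      exact hne this.symm
    by_cases haa : a = a'
    · exact chainS (X' \ X).card X X' hX hX' (by rw [ha, ha', haa]) le_rfl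
    · by_cases hsA : A.card ≤ 2
      · obtain ⟨X₂, hX₂F, hX₂A, c1⟩ := move X {a'} hX (Finset.singleton_subset_iff.mpr ha'A)
          (by simp) (by rw [Finset.card_singleton]; omega) (ha'X X ha haa) (by
            rw [Finset.card_singleton, h1]; omega)
        have c2 := chainS (X' \ X₂).card X₂ X' hX₂F hX' (by rw [hX₂A, ha']) le_rfl
        exact c1.trans c2
      · -- A.card ≥ 3 : go through the trace A \ {a, a'}
        have hsub2 : ({a, a'} : Finset α) ⊆ A := by
          intro z hz
          rcases Finset.mem_insert.mp hz with h | h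
          · exact h ▸ haA
          · exact (Finset.mem_singleton.mp h) ▸ ha'A
        have hc2 : ({a, a'} : Finset α).card = 2 := by
          rw [Finset.card_insert_of_notMem (by simpa using haa), Finset.card_singleton]
        have hcd : (A \ {a, a'}).card = A.card - 2 := by
          rw [Finset.card_sdiff_of_subset hsub2, hc2]
        have hnotin : ∀ u ∈ A \ ({a, a'} : Finset α), u ∉ X := by
          intro u hu huX
          obtain ⟨huA, hu2⟩ := Finset.mem_sdiff.mp hu
          have : u ∈ X ∩ A := Finset.mem_inter.mpr ⟨huX, huA⟩
          rw [ha, Finset.mem_singleton] at this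
          exact hu2 (by rw [this]; exact Finset.mem_insert_self a {a'})
        obtain ⟨X₂, hX₂F, hX₂A, c1⟩ := move X (A \ {a, a'}) hX Finset.sdiff_subset
          (by omega) (by omega) hnotin (by rw [hcd, h1]; omega)
        have hnotin2 : ∀ u ∈ ({a'} : Finset α), u ∉ X₂ := by
          intro u hu huX₂
          rw [Finset.mem_singleton] at hu
          subst hu
          have : u ∈ X₂ ∩ A := Finset.mem_inter.mpr ⟨huX₂, ha'A⟩
          rw [hX₂A] at this
          exact (Finset.mem_sdiff.mp this).2 (by
            exact Finset.mem_insert_of_mem (Finset.mem_singleton_self u))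
        obtain ⟨X₃, hX₃F, hX₃A, c2⟩ := move X₂ {a'} hX₂F (Finset.singleton_subset_iff.mpr ha'A)
          (by simp) (by rw [Finset.card_singleton]; omega) hnotin2 (by
            rw [Finset.card_singleton, hX₂A, hcd]; omega)
        have c3 := chainS (X' \ X₃).card X₃ X' hX₃F hX' (by rw [hX₃A, ha']) le_rfl
        exact c1.trans (c2.trans c3)
  -- all members are in the same class
  have main : ∀ X X', X ∈ B₁ ∪ B₂ → X' ∈ B₁ ∪ B₂ → (X ∈ B₁ ↔ X' ∈ B₁) := by
    intro X X' hX hX'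
    obtain ⟨X₂, h2F, h21, c1⟩ := toSing (X ∩ A).card X hX le_rfl
    obtain ⟨X₃, h3F, h31, c2⟩ := toSing (X' ∩ A).card X' hX' le_rfl
    exact c1.trans ((sing X₂ X₃ h2F h3F h21 h31).trans c2.symm)
  have hD0B₁ : D0 ∈ B₁ :=
    (main C0 D0 (Finset.mem_union_left _ hC0) (Finset.mem_union_right _ hD0)).mp hC0
  exact Finset.disjoint_left.mp hdisj hD0B₁ hD0
end
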